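/- arXiv:2508.03833 — 6 statements merged into one kernel-verified Lean document; each statement's English description precedes it below -/
import Mathlib

section
/- Let X be a real random variable with finite support, with cumulative distribution function F(x) = P(X ≤ x), left limit F(x⁻) = P(X < x), and probability mass function p(x) = P(X = x). Let U ~ Uniform[0,1] be independent of X and define F̃^U(x) := F(x⁻) + U · p(x). Then F̃^U(X) is distributed Uniform[0,1]; consequently, for every σ > 0, σ · Φ^{−1}( F̃^U(X) ) ~ N(0, σ²), where Φ is the standard normal cumulative distribution function. -/
open MeasureTheory ProbabilityTheory
open scoped ENNReal

/-- The standard normal cumulative distribution function. -/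
noncomputable def stdNormalCDF (x : ℝ) : ℝ := ((gaussianReal 0 1) (Set.Iic x)).toReal

/-- The (generalized) inverse of the standard normal CDF. -/
noncomputable def stdNormalCDFInv (u : ℝ) : ℝ := sInf {x : ℝ | u ≤ stdNormalCDF x}

section AuxLemmas
open Set Finset
open scoped NNReal

lemma gaussian_pos {s : Set ℝ} (hs : MeasurableSet s) (hvol : 0 < volume s) :
    0 < gaussianReal 0 1 s := by
  rw [gaussianReal_apply 0 one_ne_zero s]
  rw [lintegral_pos_iff_support (measurable_gaussianPDF 0 1)]
  have hsupp : Function.support (gaussianPDF 0 1) = univ := by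
    ext x
    simp [Function.mem_support, (gaussianPDF_pos 0 one_ne_zero x).ne']
  rw [Measure.restrict_apply (by rw [hsupp]; exact MeasurableSet.univ)]
  rwa [hsupp, univ_inter]

lemma gaussian_Iic_ne_top (x : ℝ) : gaussianReal 0 1 (Iic x) ≠ ⊤ := measure_ne_top _ _

lemma stdNormalCDF_mono : Monotone stdNormalCDF := fun x y hxy => by
  unfold stdNormalCDF
  exact ENNReal.toReal_mono (measure_ne_top _ _) (measure_mono (Iic_subset_Iic.2 hxy))

lemma stdNormalCDF_strictMono : StrictMono stdNormalCDF := fun x y hxy => by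
  unfold stdNormalCDF
  rw [ENNReal.toReal_lt_toReal (measure_ne_top _ _) (measure_ne_top _ _)]
  have h : Iic x ∪ Ioc x y = Iic y := Iic_union_Ioc_eq_Iic hxy.le
  calc gaussianReal 0 1 (Iic x)
      < gaussianReal 0 1 (Iic x) + gaussianReal 0 1 (Ioc x y) := by
        refine ENNReal.lt_add_right (measure_ne_top _ _) ?_
        exact (gaussian_pos measurableSet_Ioc (by simp [hxy])).ne'
    _ = gaussianReal 0 1 (Iic y) := by
        rw [← measure_union (by rw [Set.disjoint_left]; intro a ha hb; exact absurd hb.1 (not_lt.2 ha)) measurableSet_Ioc, h]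

lemma stdNormalCDF_nonneg (x : ℝ) : 0 ≤ stdNormalCDF x := ENNReal.toReal_nonneg

lemma stdNormalCDF_pos (x : ℝ) : 0 < stdNormalCDF x := by
  unfold stdNormalCDF
  have := gaussian_pos (s := Ioc (x-1) x) measurableSet_Ioc (by simp)
  have hmono : gaussianReal 0 1 (Ioc (x-1) x) ≤ gaussianReal 0 1 (Iic x) :=
    measure_mono Ioc_subset_Iic_self
  exact ENNReal.toReal_pos (lt_of_lt_of_le this hmono).ne' (measure_ne_top _ _)

lemma stdNormalCDF_lt_one (x : ℝ) : stdNormalCDF x < 1 := by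
  unfold stdNormalCDF
  have h1 : (gaussianReal 0 1 (univ : Set ℝ)) = 1 := measure_univ
  have hlt : gaussianReal 0 1 (Iic x) < gaussianReal 0 1 univ := by
    calc gaussianReal 0 1 (Iic x)
        < gaussianReal 0 1 (Iic x) + gaussianReal 0 1 (Ioi x) := by
          refine ENNReal.lt_add_right (measure_ne_top _ _) ?_
          exact (gaussian_pos measurableSet_Ioi (by simp)).ne'
      _ = gaussianReal 0 1 univ := by
          rw [← measure_union (by rw [Set.disjoint_left]; intro a ha hb; exact absurd (Set.mem_Ioi.mp hb) (not_lt.2 ha)) measurableSet_Ioi, Iic_union_Ioi]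
  have := ENNReal.toReal_lt_toReal (measure_ne_top _ _) (measure_ne_top _ _) |>.2 hlt
  simpa [h1] using this

lemma gaussianPDF_le_one (t : ℝ) : gaussianPDF 0 1 t ≤ 1 := by
  rw [gaussianPDF]
  refine ENNReal.ofReal_le_one.2 ?_
  rw [gaussianPDFReal]
  have hπ := Real.pi_gt_three
  have hc : ((1:ℝ≥0):ℝ) = 1 := by norm_num
  have h1 : Real.exp (-(t - 0) ^ 2 / (2 * ((1:ℝ≥0):ℝ))) ≤ 1 := by
    rw [Real.exp_le_one_iff, hc]
    have h := sq_nonneg (t - 0)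
    have h2 : (0:ℝ) ≤ (t - 0)^2 / (2*1) := div_nonneg h (by norm_num)
    rw [neg_div]
    linarith
  have hsq : (1:ℝ) ≤ Real.sqrt (2 * Real.pi * ((1:ℝ≥0):ℝ)) := by
    rw [show (1:ℝ) = Real.sqrt 1 by simp, hc]
    exact Real.sqrt_le_sqrt (by nlinarith)
  have h2 : (Real.sqrt (2 * Real.pi * ((1:ℝ≥0):ℝ)))⁻¹ ≤ 1 := by
    rw [inv_le_one_iff₀]
    right; exact hsq
  calc (Real.sqrt (2 * Real.pi * ((1:ℝ≥0):ℝ)))⁻¹ * Real.exp (-(t - 0) ^ 2 / (2 * ((1:ℝ≥0):ℝ)))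
      ≤ 1 * 1 := mul_le_mul h2 h1 (Real.exp_nonneg _) (by norm_num)
    _ = 1 := by norm_num

lemma stdNormalCDF_lipschitz : ∀ x y : ℝ, x ≤ y → stdNormalCDF y - stdNormalCDF x ≤ y - x := by
  intro x y hxy
  unfold stdNormalCDF
  have hsplit : gaussianReal 0 1 (Iic y) = gaussianReal 0 1 (Iic x) + gaussianReal 0 1 (Ioc x y) := by
    rw [← measure_union (by rw [Set.disjoint_left]; intro a ha hb; exact absurd hb.1 (not_lt.2 ha)) measurableSet_Ioc, Iic_union_Ioc_eq_Iic hxy]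
  have hbound : gaussianReal 0 1 (Ioc x y) ≤ ENNReal.ofReal (y - x) := by
    rw [gaussianReal_apply 0 one_ne_zero]
    calc ∫⁻ t in Ioc x y, gaussianPDF 0 1 t
        ≤ ∫⁻ _ in Ioc x y, 1 := lintegral_mono fun t => gaussianPDF_le_one t
      _ = volume (Ioc x y) := by simp
      _ = ENNReal.ofReal (y - x) := by rw [Real.volume_Ioc]
  have := ENNReal.toReal_mono (by simp) hbound
  rw [ENNReal.toReal_ofReal (by linarith)] at this
  rw [hsplit, ENNReal.toReal_add (measure_ne_top _ _) (measure_ne_top _ _)]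
  linarith

lemma stdNormalCDF_continuous : Continuous stdNormalCDF := by
  have hl : LipschitzWith 1 stdNormalCDF := by
    refine LipschitzWith.of_dist_le_mul fun x y => ?_
    rw [Real.dist_eq, Real.dist_eq]
    simp only [NNReal.coe_one, one_mul]
    rcases le_total x y with h | h
    · have h1 := stdNormalCDF_lipschitz x y h
      have h2 := stdNormalCDF_mono h
      rw [abs_of_nonpos (by linarith), abs_of_nonpos (by linarith)]
      linarith
    · have h1 := stdNormalCDF_lipschitz y x h
      have h2 := stdNormalCDF_mono h
      rw [abs_of_nonneg (by linarith), abs_of_nonneg (by linarith)]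
      linarith
  exact hl.continuous

lemma exists_stdNormalCDF_ge {u : ℝ} (hu : u < 1) : ∃ b, u ≤ stdNormalCDF b := by
  have h : Filter.Tendsto stdNormalCDF Filter.atTop (nhds 1) := by
    have h1 := tendsto_measure_Iic_atTop (gaussianReal 0 1)
    have h2 := (ENNReal.tendsto_toReal
      (show (gaussianReal 0 1 (univ : Set ℝ)) ≠ ⊤ from measure_ne_top _ _)).comp h1
    change Filter.Tendsto (fun x => stdNormalCDF x) _ _
    simpa [stdNormalCDF, Function.comp_def] using h2
  exact (h.eventually (eventually_ge_nhds hu)).exists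

lemma exists_stdNormalCDF_lt {u : ℝ} (hu : 0 < u) : ∃ a, stdNormalCDF a < u := by
  have h1 := tendsto_measure_Ici_atBot (gaussianReal 0 1)
  have h2 := (ENNReal.tendsto_toReal
    (show (gaussianReal 0 1 (univ : Set ℝ)) ≠ ⊤ from measure_ne_top _ _)).comp h1
  have h3 : Filter.Tendsto (fun x => (gaussianReal 0 1 (Ici x)).toReal)
      Filter.atBot (nhds 1) := by
    simpa [Function.comp_def] using h2
  obtain ⟨x, hx⟩ := (h3.eventually (eventually_gt_nhds (by linarith : 1 - u < 1))).exists
  refine ⟨x - 1, ?_⟩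
  have hdisj : Disjoint (Iic (x-1)) (Ioi (x-1)) := by
    rw [Set.disjoint_left]
    intro a ha hb
    exact absurd (Set.mem_Ioi.mp hb) (not_lt.2 ha)
  have hsplit : gaussianReal 0 1 (Iic (x-1)) + gaussianReal 0 1 (Ioi (x-1)) = 1 := by
    rw [← measure_union hdisj measurableSet_Ioi, Iic_union_Ioi, measure_univ]
  have hmono : gaussianReal 0 1 (Ici x) ≤ gaussianReal 0 1 (Ioi (x-1)) :=
    measure_mono (fun y hy => by simp only [Set.mem_Ioi]; have : x ≤ y := hy; linarith)
  have hfin1 : gaussianReal 0 1 (Iic (x-1)) ≠ ⊤ := measure_ne_top _ _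
  have hfin2 : gaussianReal 0 1 (Ioi (x-1)) ≠ ⊤ := measure_ne_top _ _
  have htr : stdNormalCDF (x-1) + (gaussianReal 0 1 (Ioi (x-1))).toReal = 1 := by
    rw [stdNormalCDF, ← ENNReal.toReal_add hfin1 hfin2, hsplit, ENNReal.toReal_one]
  have hmr : (gaussianReal 0 1 (Ici x)).toReal ≤ (gaussianReal 0 1 (Ioi (x-1))).toReal :=
    ENNReal.toReal_mono hfin2 hmono
  linarith

lemma bddBelow_stdNormal_set {u : ℝ} (h0 : 0 < u) : BddBelow {x : ℝ | u ≤ stdNormalCDF x} := by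
  obtain ⟨a, ha⟩ := exists_stdNormalCDF_lt h0
  refine ⟨a, fun y hy => ?_⟩
  by_contra hlt
  push_neg at hlt
  exact absurd hy (not_le.2 (lt_of_le_of_lt (stdNormalCDF_mono hlt.le) ha))

lemma le_stdNormalCDF_stdNormalCDFInv {u : ℝ} (h0 : 0 < u) (h1 : u < 1) :
    u ≤ stdNormalCDF (stdNormalCDFInv u) := by
  have hne : {x : ℝ | u ≤ stdNormalCDF x}.Nonempty := exists_stdNormalCDF_ge h1
  have hclosed : IsClosed {x : ℝ | u ≤ stdNormalCDF x} :=
    isClosed_le continuous_const stdNormalCDF_continuous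
  exact hclosed.csInf_mem hne (bddBelow_stdNormal_set h0)

lemma stdNormalCDFInv_le_iff {u : ℝ} (h0 : 0 < u) (h1 : u < 1) (s : ℝ) :
    stdNormalCDFInv u ≤ s ↔ u ≤ stdNormalCDF s := by
  constructor
  · intro h
    exact le_trans (le_stdNormalCDF_stdNormalCDFInv h0 h1) (stdNormalCDF_mono h)
  · intro h
    exact csInf_le (bddBelow_stdNormal_set h0) h

lemma stdNormalCDFInv_monotoneOn : MonotoneOn stdNormalCDFInv (Ioo (0:ℝ) 1) := by
  intro u hu v hv huv
  rw [stdNormalCDFInv_le_iff hu.1 hu.2]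
  exact le_trans huv (le_stdNormalCDF_stdNormalCDFInv hv.1 hv.2)

lemma min_max_add_aux {M q t : ℝ} (hM : 0 ≤ M) (hq : 0 ≤ q) :
    min (max t 0) M + min (max (t - M) 0) q = min (max t 0) (M + q) := by
  rcases le_total t 0 with h | h
  · rcases le_total t M with h1 | h1 <;> rcases le_total t (M+q) with h2 | h2 <;>
      simp [min_def, max_def] <;> split_ifs <;> linarith
  · rcases le_total t M with h1 | h1 <;> rcases le_total t (M+q) with h2 | h2 <;>
      simp [min_def, max_def] <;> split_ifs <;> linarith

lemma key_sum (p : ℝ → ℝ) (t : ℝ) (S : Finset ℝ) (hp : ∀ x ∈ S, 0 ≤ p x) :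
    ∑ x ∈ S, min (max (t - ∑ y ∈ S.filter (· < x), p y) 0) (p x)
      = min (max t 0) (∑ x ∈ S, p x) := by
  classical
  induction S using Finset.induction_on_max with
  | empty => simp
  | insert a s has ih =>
    have ha : a ∉ s := fun h => lt_irrefl a (has a h)
    have hps : ∀ x ∈ s, 0 ≤ p x := fun x hx => hp x (mem_insert_of_mem hx)
    have hpa : 0 ≤ p a := hp a (mem_insert_self a s)
    have hfa : (insert a s).filter (· < a) = s := by
      rw [filter_insert]
      simp only [lt_irrefl, if_false]
      exact filter_true_of_mem fun x hx => has x hx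
    have hfx : ∀ x ∈ s, (insert a s).filter (· < x) = s.filter (· < x) := by
      intro x hx
      rw [filter_insert, if_neg (not_lt.2 (has x hx).le)]
    rw [sum_insert ha, sum_insert ha, hfa]
    have hterm : ∀ x ∈ s, min (max (t - ∑ y ∈ (insert a s).filter (· < x), p y) 0) (p x)
        = min (max (t - ∑ y ∈ s.filter (· < x), p y) 0) (p x) := by
      intro x hx; rw [hfx x hx]
    rw [sum_congr rfl hterm, ih hps]
    have hM : 0 ≤ ∑ x ∈ s, p x := sum_nonneg hps
    rw [add_comm (min (max (t - ∑ y ∈ s, p y) 0) (p a)), min_max_add_aux hM hpa]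
    rw [add_comm (p a)]

end AuxLemmas

open Set in
open scoped NNReal in
/-- **randomized probability integral transform.** For a random variable `X`
with finite support, independent `U ~ Uniform[0,1]`, and
`F̃^U(x) := F(x⁻) + U · P(X = x)`, the random variable `F̃^U(X)` is `Uniform[0,1]`;
consequently `σ · Φ⁻¹(F̃^U(X)) ~ N(0,σ²)` for every `σ > 0`. -/
theorem randomized_PIT_finite_support {Ω : Type*} [MeasurableSpace Ω]
    (P : Measure Ω) [IsProbabilityMeasure P]
    (X U : Ω → ℝ) (hX : Measurable X) (hU : Measurable U)
    (hfin : (Set.range X).Finite)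
    (hUlaw : P.map U = (volume : Measure ℝ).restrict (Set.Icc 0 1))
    (hindep : IndepFun X U P) :
    P.map (fun ω => (P {ω' | X ω' < X ω}).toReal + U ω * (P {ω' | X ω' = X ω}).toReal)
        = (volume : Measure ℝ).restrict (Set.Icc 0 1) ∧
      ∀ σ : ℝ, 0 < σ →
        P.map (fun ω => σ * stdNormalCDFInv
              ((P {ω' | X ω' < X ω}).toReal + U ω * (P {ω' | X ω' = X ω}).toReal))
          = gaussianReal 0 (Real.toNNReal (σ ^ 2)) := by
  classical
  set S : Finset ℝ := hfin.toFinset with hS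
  set p : ℝ → ℝ := fun x => (P (X ⁻¹' {x})).toReal with hp
  set c : ℝ → ℝ := fun x => (P (X ⁻¹' (Iio x))).toReal with hc
  set f : Ω → ℝ :=
    fun ω => (P {ω' | X ω' < X ω}).toReal + U ω * (P {ω' | X ω' = X ω}).toReal with hfdef
  have hf_eq : ∀ ω, f ω = c (X ω) + U ω * p (X ω) := fun ω => rfl
  -- measurability of compositions with X
  have hcomp : ∀ g : ℝ → ℝ, Measurable (fun ω => g (X ω)) := by
    intro g s _
    have hpre : (fun ω => g (X ω)) ⁻¹' s
        = ⋃ x ∈ {x ∈ Set.range X | g x ∈ s}, X ⁻¹' {x} := by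
      ext ω
      simp only [mem_preimage, mem_iUnion, mem_setOf_eq, mem_singleton_iff, exists_prop]
      constructor
      · intro h
        exact ⟨X ω, ⟨⟨ω, rfl⟩, h⟩, rfl⟩
      · rintro ⟨x, ⟨_, hgx⟩, hx⟩
        rw [hx]; exact hgx
    rw [hpre]
    exact Set.Finite.measurableSet_biUnion (hfin.subset (sep_subset _ _))
      fun x _ => hX (measurableSet_singleton x)
  have hfmeas : Measurable f := by
    have : Measurable (fun ω => c (X ω) + U ω * p (X ω)) :=
      (hcomp c).add (hU.mul (hcomp p))
    exact this
  have hp_nonneg : ∀ x, 0 ≤ p x := fun x => ENNReal.toReal_nonneg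
  -- membership of values
  have hXS : ∀ ω, X ω ∈ S := fun ω => hfin.mem_toFinset.2 ⟨ω, rfl⟩
  -- uniform measure evaluation
  have huniform : ∀ s : ℝ, (volume : Measure ℝ).restrict (Icc 0 1) (Iic s)
      = ENNReal.ofReal (min s 1) := by
    intro s
    rw [Measure.restrict_apply measurableSet_Iic]
    have : Iic s ∩ Icc 0 1 = Icc 0 (min s 1) := by
      ext z
      simp only [mem_inter_iff, mem_Iic, mem_Icc, le_min_iff]
      constructor
      · rintro ⟨h1, h2, h3⟩; exact ⟨h2, h1, h3⟩
      · rintro ⟨h1, h2, h3⟩; exact ⟨h2, h1, h3⟩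
    rw [this, Real.volume_Icc, sub_zero]
  have hUpre : ∀ s : Set ℝ, MeasurableSet s →
      P (U ⁻¹' s) = (volume : Measure ℝ).restrict (Icc 0 1) s := by
    intro s hs
    rw [← Measure.map_apply hU hs, hUlaw]
  -- c x as a finite sum
  have hdisj_sing : ∀ T : Finset ℝ, (↑T : Set ℝ).PairwiseDisjoint (fun x => X ⁻¹' {x}) := by
    intro T x _ y _ hxy
    rw [Function.onFun, Set.disjoint_left]
    intro ω h1 h2
    rw [mem_preimage, mem_singleton_iff] at h1 h2
    exact hxy (h1 ▸ h2 ▸ rfl)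
  have hcx : ∀ x : ℝ, c x = ∑ y ∈ S.filter (· < x), p y := by
    intro x
    have hup : X ⁻¹' (Iio x) = ⋃ y ∈ S.filter (· < x), X ⁻¹' {y} := by
      ext ω
      simp only [mem_preimage, mem_Iio, mem_iUnion, Finset.mem_filter, mem_singleton_iff,
        exists_prop]
      constructor
      · intro h
        exact ⟨X ω, ⟨hXS ω, h⟩, rfl⟩
      · rintro ⟨y, ⟨_, hy⟩, hXy⟩
        rw [hXy]; exact hy
    rw [hc]
    simp only
    rw [hup, measure_biUnion_finset (hdisj_sing _) fun y _ => hX (measurableSet_singleton y),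
      ENNReal.toReal_sum fun y _ => measure_ne_top _ _]
  have htotal : ∑ x ∈ S, p x = 1 := by
    have hup : (univ : Set Ω) = ⋃ y ∈ S, X ⁻¹' {y} := by
      ext ω
      simp only [mem_univ, true_iff, mem_iUnion, mem_preimage, mem_singleton_iff, exists_prop]
      exact ⟨X ω, hXS ω, rfl⟩
    have := measure_univ (μ := P)
    rw [hup, measure_biUnion_finset (hdisj_sing _)
      fun y _ => hX (measurableSet_singleton y)] at this
    calc ∑ x ∈ S, p x = (∑ x ∈ S, P (X ⁻¹' {x})).toReal :=
          (ENNReal.toReal_sum fun y _ => measure_ne_top _ _).symm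
      _ = 1 := by rw [this, ENNReal.toReal_one]
  -- PART A
  have hAmain : P.map f = (volume : Measure ℝ).restrict (Icc 0 1) := by
    haveI : IsProbabilityMeasure (P.map f) := Measure.isProbabilityMeasure_map hfmeas.aemeasurable
    refine Measure.ext_of_Iic _ _ fun t => ?_
    rw [Measure.map_apply hfmeas measurableSet_Iic]
    have hcover : f ⁻¹' Iic t = ⋃ x ∈ S, (X ⁻¹' {x} ∩ f ⁻¹' Iic t) := by
      ext ω
      simp only [mem_preimage, mem_Iic, mem_iUnion, mem_inter_iff, mem_singleton_iff,
        exists_prop]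
      constructor
      · intro h
        exact ⟨X ω, hXS ω, rfl, h⟩
      · rintro ⟨x, _, _, h⟩
        exact h
    have hmeas' : ∀ x ∈ S, MeasurableSet (X ⁻¹' {x} ∩ f ⁻¹' Iic t) :=
      fun x _ => (hX (measurableSet_singleton x)).inter (hfmeas measurableSet_Iic)
    have hdisj : (↑S : Set ℝ).PairwiseDisjoint (fun x => X ⁻¹' {x} ∩ f ⁻¹' Iic t) := by
      intro x hx y hy hxy
      exact (hdisj_sing S hx hy hxy).mono inter_subset_left inter_subset_left
    rw [hcover, measure_biUnion_finset hdisj hmeas']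
    have hterm : ∀ x ∈ S, P (X ⁻¹' {x} ∩ f ⁻¹' Iic t)
        = ENNReal.ofReal (min (max (t - c x) 0) (p x)) := by
      intro x _
      have hxeq : X ⁻¹' {x} ∩ f ⁻¹' Iic t
          = X ⁻¹' {x} ∩ U ⁻¹' {u | c x + u * p x ≤ t} := by
        ext ω
        simp only [mem_inter_iff, mem_preimage, mem_singleton_iff, mem_Iic, mem_setOf_eq]
        constructor
        · rintro ⟨hXx, hft⟩
          refine ⟨hXx, ?_⟩
          rw [hf_eq ω, hXx] at hft
          exact hft
        · rintro ⟨hXx, hft⟩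
          refine ⟨hXx, ?_⟩
          rw [hf_eq ω, hXx]
          exact hft
      by_cases hpx : P (X ⁻¹' {x}) = 0
      · have hp0 : p x = 0 := by rw [hp]; simp [hpx]
        have hL : P (X ⁻¹' {x} ∩ f ⁻¹' Iic t) = 0 :=
          measure_mono_null inter_subset_left hpx
        rw [hL, hp0]
        rw [min_eq_right (le_max_right _ _)]
        simp
      · have hppos : 0 < p x := ENNReal.toReal_pos hpx (measure_ne_top _ _)
        have hsetB : {u : ℝ | c x + u * p x ≤ t} = Iic ((t - c x) / p x) := by
          ext u
          simp only [mem_setOf_eq, mem_Iic]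
          rw [le_div_iff₀ hppos]
          constructor <;> intro h <;> linarith
        rw [hxeq, hsetB]
        rw [hindep.measure_inter_preimage_eq_mul {x} (Iic ((t - c x) / p x))
          (measurableSet_singleton x) measurableSet_Iic]
        rw [hUpre _ measurableSet_Iic, huniform]
        have hPx : P (X ⁻¹' {x}) = ENNReal.ofReal (p x) := by
          rw [hp]; simp only
          rw [ENNReal.ofReal_toReal (measure_ne_top _ _)]
        rw [hPx, ← ENNReal.ofReal_mul (hp_nonneg x)]
        rcases le_total (t - c x) 0 with h | h
        · have h1 : p x * min ((t - c x) / p x) 1 ≤ 0 := by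
            have hd : (t - c x) / p x ≤ 0 := div_nonpos_iff.2 (Or.inr ⟨h, (hp_nonneg x)⟩)
            have : min ((t - c x) / p x) 1 ≤ 0 := le_trans (min_le_left _ _) hd
            exact mul_nonpos_of_nonneg_of_nonpos (hp_nonneg x) this
          rw [ENNReal.ofReal_eq_zero.2 h1]
          rw [max_eq_right h, min_comm, min_eq_right (hp_nonneg x)]
          simp
        · rw [max_eq_left h]
          congr 1
          rw [mul_min_of_nonneg _ _ (hp_nonneg x), mul_one,
            mul_div_cancel₀ _ hppos.ne']
    rw [Finset.sum_congr rfl hterm, ← ENNReal.ofReal_sum_of_nonneg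
      fun x _ => le_min (le_max_right _ _) (hp_nonneg x)]
    have hrw : ∀ x ∈ S, min (max (t - c x) 0) (p x)
        = min (max (t - ∑ y ∈ S.filter (· < x), p y) 0) (p x) := by
      intro x _; rw [hcx x]
    rw [Finset.sum_congr rfl hrw, key_sum p t S fun x _ => hp_nonneg x, htotal, huniform]
    rcases le_total t 0 with h | h
    · rw [max_eq_right h]
      rw [ENNReal.ofReal_eq_zero.2 (le_trans (min_le_left _ _) h)]
      simp
    · rw [max_eq_left h]
  refine ⟨hAmain, ?_⟩
  -- PART B
  intro σ hσ
  have hInvAE : AEMeasurable stdNormalCDFInv ((volume : Measure ℝ).restrict (Icc 0 1)) := by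
    have h1 : AEMeasurable stdNormalCDFInv ((volume : Measure ℝ).restrict (Ioo 0 1)) :=
      aemeasurable_restrict_of_monotoneOn measurableSet_Ioo stdNormalCDFInv_monotoneOn
    have h2 : (volume : Measure ℝ).restrict (Icc (0:ℝ) 1)
        = (volume : Measure ℝ).restrict (Ioo 0 1) :=
      (Measure.restrict_congr_set Ioo_ae_eq_Icc).symm
    rw [h2]
    exact h1
  have hg : AEMeasurable (fun u => σ * stdNormalCDFInv u)
      ((volume : Measure ℝ).restrict (Icc 0 1)) := hInvAE.const_mul σ
  have hgf : AEMeasurable (fun ω => σ * stdNormalCDFInv (f ω)) P := by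
    refine AEMeasurable.comp_aemeasurable (f := f) (g := fun u => σ * stdNormalCDFInv u)
      ?_ hfmeas.aemeasurable
    rw [hAmain]
    exact hg
  haveI : IsProbabilityMeasure (P.map (fun ω => σ * stdNormalCDFInv (f ω))) :=
    Measure.isProbabilityMeasure_map hgf
  have hgoal : P.map (fun ω => σ * stdNormalCDFInv (f ω))
      = gaussianReal 0 (Real.toNNReal (σ ^ 2)) := by
    refine Measure.ext_of_Iic _ _ fun t => ?_
    rw [Measure.map_apply_of_aemeasurable hgf measurableSet_Iic]
    set c0 := stdNormalCDF (t / σ) with hc0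
    have hc0pos : 0 < c0 := stdNormalCDF_pos _
    have hc0lt : c0 < 1 := stdNormalCDF_lt_one _
    set B : Set ℝ := {u | σ * stdNormalCDFInv u ≤ t} with hB
    have hpreB : (fun ω => σ * stdNormalCDFInv (f ω)) ⁻¹' Iic t = f ⁻¹' B := rfl
    have hnull : P ((f ⁻¹' (Ioo (0:ℝ) 1))ᶜ) = 0 := by
      rw [← preimage_compl, ← Measure.map_apply hfmeas measurableSet_Ioo.compl, hAmain,
        Measure.restrict_apply measurableSet_Ioo.compl]
      refine measure_mono_null (fun z hz => ?_)
        (Set.Finite.measure_zero ((Set.finite_singleton (1:ℝ)).insert 0) volume)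
      obtain ⟨hz1, hz2⟩ := hz
      simp only [mem_compl_iff, mem_Ioo, not_and, not_lt] at hz1
      rw [mem_Icc] at hz2
      rcases eq_or_lt_of_le hz2.1 with h0 | h0
      · exact Or.inl h0.symm
      · exact Or.inr (le_antisymm hz2.2 (hz1 h0))
    have hBset : B ∩ Ioo (0:ℝ) 1 = Ioc 0 c0 := by
      ext u
      simp only [hB, mem_inter_iff, mem_setOf_eq, mem_Ioo, mem_Ioc]
      constructor
      · rintro ⟨hσu, hu0, hu1⟩
        have hdiv : stdNormalCDFInv u ≤ t / σ :=
          (le_div_iff₀ hσ).2 (by rw [mul_comm]; exact hσu)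
        exact ⟨hu0, (stdNormalCDFInv_le_iff hu0 hu1 _).1 hdiv⟩
      · rintro ⟨hu0, huc⟩
        have hu1 : u < 1 := lt_of_le_of_lt huc hc0lt
        have hdiv : stdNormalCDFInv u ≤ t / σ := (stdNormalCDFInv_le_iff hu0 hu1 _).2 huc
        have hm := (le_div_iff₀ hσ).1 hdiv
        exact ⟨by rw [mul_comm] at hm; exact hm, hu0, hu1⟩
    have hIcap : f ⁻¹' B ∩ f ⁻¹' (Ioo (0:ℝ) 1) = f ⁻¹' (Ioc 0 c0) := by
      rw [← preimage_inter, hBset]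
    have hLHS : P (f ⁻¹' B) = ENNReal.ofReal c0 := by
      rw [← measure_inter_conull hnull, hIcap,
        ← Measure.map_apply hfmeas measurableSet_Ioc, hAmain,
        Measure.restrict_apply measurableSet_Ioc]
      have hsub : Ioc (0:ℝ) c0 ∩ Icc 0 1 = Ioc 0 c0 := by
        refine inter_eq_left.2 fun z hz => ?_
        rw [mem_Ioc] at hz
        exact ⟨hz.1.le, le_trans hz.2 hc0lt.le⟩
      rw [hsub, Real.volume_Ioc, sub_zero]
    rw [hpreB, hLHS]
    -- gaussian side
    have hmap := gaussianReal_map_const_mul (μ := 0) (v := 1) σ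
    rw [mul_zero, mul_one, ← Real.toNNReal_of_nonneg (sq_nonneg σ)] at hmap
    rw [← hmap, Measure.map_apply (measurable_const_mul σ) measurableSet_Iic]
    have hpre : (fun x => σ * x) ⁻¹' Iic t = Iic (t / σ) := by
      ext z
      simp only [mem_preimage, mem_Iic]
      rw [le_div_iff₀ hσ]
      rw [mul_comm]
    rw [hpre, hc0, stdNormalCDF, ENNReal.ofReal_toReal (measure_ne_top _ _)]
  exact hgoal
end

section
/- Let R > 0 and let Y be a random variable with Y ∈ [0,R] almost surely and Var(Y) = σ². Then 4σ² ≤ R², and |Y − E[Y]| ≤ (R + √(R² − 4σ²))/2 almost surely. -/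
open MeasureTheory ProbabilityTheory

/-- If `Y ∈ [0,R]` almost surely and `Var(Y) = σ²`, then `4σ² ≤ R²` and
`|Y − E[Y]| ≤ (R + √(R² − 4σ²))/2` almost surely. -/
theorem range_variance_bound {Ω : Type*} [MeasurableSpace Ω]
    (P : Measure Ω) [IsProbabilityMeasure P]
    (R σ : ℝ) (hR : 0 < R) (Y : Ω → ℝ) (hYmeas : Measurable Y)
    (hbound : ∀ᵐ ω ∂P, Y ω ∈ Set.Icc 0 R)
    (hvar : variance Y P = σ ^ 2) :
    4 * σ ^ 2 ≤ R ^ 2 ∧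
      ∀ᵐ ω ∂P, |Y ω - ∫ x, Y x ∂P| ≤ (R + Real.sqrt (R ^ 2 - 4 * σ ^ 2)) / 2 := by
  have hmem2 : MemLp Y 2 P := by
    refine MemLp.of_bound hYmeas.aestronglyMeasurable R ?_
    filter_upwards [hbound] with ω hω
    rw [Real.norm_eq_abs, abs_le]
    exact ⟨by linarith [hω.1], hω.2⟩
  have hint : Integrable Y P := hmem2.integrable (by norm_num)
  set μ := ∫ x, Y x ∂P with hμdef
  have hμ0 : 0 ≤ μ := integral_nonneg_of_ae (hbound.mono fun ω h => h.1)
  have hμR : μ ≤ R := by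
    have := integral_mono_ae hint (integrable_const R) (hbound.mono fun ω h => h.2)
    simpa using this
  have hintsq : Integrable (fun ω => Y ω ^ 2) P := hmem2.integrable_sq
  have hsq : ∫ ω, Y ω ^ 2 ∂P ≤ R * μ := by
    have h1 : ∫ ω, Y ω ^ 2 ∂P ≤ ∫ ω, R * Y ω ∂P := by
      refine integral_mono_ae hintsq (hint.const_mul R) ?_
      filter_upwards [hbound] with ω hω
      nlinarith [hω.1, hω.2]
    rwa [integral_const_mul] at h1
  have hvd : variance Y P = (∫ ω, Y ω ^ 2 ∂P) - μ ^ 2 := by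
    have := variance_eq_sub hmem2
    simpa using this
  have key : σ ^ 2 ≤ μ * (R - μ) := by
    have := hvd.symm.trans hvar
    nlinarith [hsq]
  have hD : 0 ≤ R ^ 2 - 4 * σ ^ 2 := by nlinarith [sq_nonneg (R - 2 * μ)]
  refine ⟨by linarith, ?_⟩
  have habs : |R - 2 * μ| ≤ Real.sqrt (R ^ 2 - 4 * σ ^ 2) := by
    rw [← Real.sqrt_sq_eq_abs]
    exact Real.sqrt_le_sqrt (by nlinarith)
  obtain ⟨ha, hb⟩ := abs_le.mp habs
  filter_upwards [hbound] with ω hω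
  rw [abs_le]
  constructor <;> [linarith [hω.1]; linarith [hω.2]]
end

section
/- Suppose Assumption (R,σ) holds and fix integers 1 ≤ k < n. With the exchangeable pair W'_k := W_k + X_J − X_I (I ~ Uniform{1,…,k}, J ~ Uniform{k+1,…,n}, independent of each other and of (X_i)), one has almost surely E[ W'_k − W_k | X_1, …, X_n ] = −( n/(k(n−k)) ) · W_k. -/
open MeasureTheory ProbabilityTheory
open scoped ENNReal

section AuxUniform

variable {α : Type*} [MeasurableSpace α] [MeasurableSingletonClass α]

lemma aux_integrableOn_count (t : Finset α) (f : α → ℝ) :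
    IntegrableOn f (t : Set α) Measure.count := by
  rw [← Set.biUnion_of_singleton (t : Set α)]
  rw [show (⋃ x ∈ (t : Set α), {x}) = ⋃ x ∈ t, ({x} : Set α) by simp]
  refine integrableOn_finset_iUnion.2 fun i _ => ?_
  rw [integrableOn_singleton_iff]
  right
  simp [Measure.count_singleton]

lemma aux_integral_uniformOn (t : Finset α) (f : α → ℝ) :
    ∫ x, f x ∂(uniformOn (t : Set α)) = (t.card : ℝ)⁻¹ * ∑ x ∈ t, f x := by
  have h : uniformOn (t : Set α)
      = (Measure.count (t : Set α))⁻¹ • Measure.count.restrict (t : Set α) := rfl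
  rw [h, integral_smul_measure, Measure.count_apply_finset,
    integral_finset t (aux_integrableOn_count t f)]
  simp [Measure.count_singleton, ENNReal.toReal_inv]

lemma aux_integrable_uniformOn (t : Finset α) (ht : t.Nonempty) (f : α → ℝ) :
    Integrable f (uniformOn (t : Set α)) := by
  have h : uniformOn (t : Set α)
      = (Measure.count (t : Set α))⁻¹ • Measure.count.restrict (t : Set α) := rfl
  rw [h]
  refine (aux_integrableOn_count t f).smul_measure ?_
  rw [Measure.count_apply_finset]
  simp [ENNReal.inv_ne_top, ht.card_pos.ne']

end AuxUniform

/-- **linearity of the exchangeable pair.** Under Assumption (R,σ), on the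
extension `Ω × ℕ × ℕ` carrying `I ~ Uniform{1,…,k}` and `J ~ Uniform{k+1,…,n}`
(independent of each other and of the `X_i`), with `W'_k − W_k = X_J − X_I` one has
`E[W'_k − W_k | X_1,…,X_n] = −(n/(k(n−k))) W_k` almost surely. -/
theorem exchangeable_pair_conditional_linearity {Ω : Type*} [MeasurableSpace Ω]
    (P : Measure Ω) [IsProbabilityMeasure P]
    (R σ : ℝ) (hR : 0 < R) (hσ : 0 < σ) (Y : ℕ → Ω → ℝ)
    (hmeas : ∀ i, Measurable (Y i))
    (hindep : iIndepFun Y P)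
    (hident : ∀ i, P.map (Y i) = P.map (Y 0))
    (hbound : ∀ᵐ ω ∂P, Y 0 ω ∈ Set.Icc 0 R)
    (hvar : variance (Y 0) P = σ ^ 2)
    (n k : ℕ) (hk : 1 ≤ k) (hkn : k < n) :
    (P.prod ((uniformOn (Set.Iio k)).prod (uniformOn (Set.Ico k n))))[
        (fun ω' : Ω × ℕ × ℕ =>
          (Y ω'.2.2 ω'.1 - ∫ x, Y 0 x ∂P) - (Y ω'.2.1 ω'.1 - ∫ x, Y 0 x ∂P))
        | MeasurableSpace.comap
            (fun ω' : Ω × ℕ × ℕ => fun i : Fin n => Y (i : ℕ) ω'.1 - ∫ x, Y 0 x ∂P)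
            inferInstance]
      =ᵐ[P.prod ((uniformOn (Set.Iio k)).prod (uniformOn (Set.Ico k n)))]
        fun ω' : Ω × ℕ × ℕ =>
          -((n : ℝ) / ((k : ℝ) * ((n : ℝ) - k)))
            * ((∑ i ∈ Finset.range k, (Y i ω'.1 - ∫ x, Y 0 x ∂P))
                - (k : ℝ) / (n : ℝ) * ∑ i ∈ Finset.range n, (Y i ω'.1 - ∫ x, Y 0 x ∂P)) := by
  classical
  set c : ℝ := ∫ x, Y 0 x ∂P with hc
  have hset1 : (Set.Iio k : Set ℕ) = ((Finset.range k : Finset ℕ) : Set ℕ) := by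
    rw [Finset.coe_range]
  have hset2 : (Set.Ico k n : Set ℕ) = ((Finset.Ico k n : Finset ℕ) : Set ℕ) := by
    rw [Finset.coe_Ico]
  haveI hν₁ : IsProbabilityMeasure (uniformOn (Set.Iio k : Set ℕ)) :=
    uniformOn_isProbabilityMeasure (Set.finite_Iio k) ⟨0, hk⟩
  haveI hν₂ : IsProbabilityMeasure (uniformOn (Set.Ico k n : Set ℕ)) :=
    uniformOn_isProbabilityMeasure (Set.finite_Ico k n) ⟨k, le_rfl, hkn⟩
  set ν₁ : Measure ℕ := uniformOn (Set.Iio k : Set ℕ) with hν₁def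
  set ν₂ : Measure ℕ := uniformOn (Set.Ico k n : Set ℕ) with hν₂def
  set ν : Measure (ℕ × ℕ) := ν₁.prod ν₂ with hνdef
  set μ : Measure (Ω × ℕ × ℕ) := P.prod ν with hμdef
  -- the conditioning map
  set ψ : Ω → (Fin n → ℝ) := fun ω => fun i : Fin n => Y (i : ℕ) ω - c with hψdef
  set φ : Ω × ℕ × ℕ → (Fin n → ℝ) := fun ω' => ψ ω'.1 with hφdef
  have hψm : Measurable ψ := measurable_pi_lambda _ fun i => (hmeas i).sub measurable_const
  have hφm : Measurable φ := hψm.comp measurable_fst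
  have hm : MeasurableSpace.comap φ inferInstance ≤ (inferInstance : MeasurableSpace (Ω × ℕ × ℕ)) :=
    hφm.comap_le
  -- the function and the candidate
  set f : Ω × ℕ × ℕ → ℝ := fun ω' => (Y ω'.2.2 ω'.1 - c) - (Y ω'.2.1 ω'.1 - c) with hfdef
  set g₀ : Ω → ℝ := fun ω =>
    -((n : ℝ) / ((k : ℝ) * ((n : ℝ) - k)))
      * ((∑ i ∈ Finset.range k, (Y i ω - c))
          - (k : ℝ) / (n : ℝ) * ∑ i ∈ Finset.range n, (Y i ω - c)) with hg₀def
  -- boundedness facts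
  have hYi : ∀ i, ∀ᵐ ω ∂P, Y i ω ∈ Set.Icc 0 R := by
    intro i
    have h0 : ∀ᵐ x ∂(P.map (Y 0)), x ∈ Set.Icc (0:ℝ) R :=
      (ae_map_iff (hmeas 0).aemeasurable measurableSet_Icc).2 hbound
    rw [← hident i] at h0
    exact (ae_map_iff (hmeas i).aemeasurable measurableSet_Icc).1 h0
  have hYint : ∀ i, Integrable (Y i) P := by
    intro i
    refine Integrable.mono' (integrable_const R) (hmeas i).aestronglyMeasurable ?_
    filter_upwards [hYi i] with ω hω
    rw [Real.norm_eq_abs, abs_le]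
    exact ⟨by linarith [hω.1], hω.2⟩
  -- measurability of f
  have hfm : Measurable f := by
    apply measurable_from_prod_countable_left (f := f)
    intro p
    exact ((hmeas p.2).sub measurable_const).sub ((hmeas p.1).sub measurable_const)
  -- a.e. bound on f over the product measure
  have hall : ∀ᵐ ω ∂P, ∀ i, Y i ω ∈ Set.Icc 0 R := ae_all_iff.2 hYi
  have hallμ : ∀ᵐ ω' ∂μ, ∀ i, Y i ω'.1 ∈ Set.Icc 0 R := by
    exact (Measure.quasiMeasurePreserving_fst (μ := P) (ν := ν)).ae hall
  have hf_int : Integrable f μ := by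
    refine Integrable.mono' (integrable_const R) hfm.aestronglyMeasurable ?_
    filter_upwards [hallμ] with ω' hω'
    have h1 := hω' ω'.2.1
    have h2 := hω' ω'.2.2
    rw [Real.norm_eq_abs, abs_le]
    constructor <;> simp only [hfdef] <;> [skip; skip] <;>
      · obtain ⟨a1, b1⟩ := h1; obtain ⟨a2, b2⟩ := h2; linarith
  -- integrability of the candidate
  have hg₀int : Integrable g₀ P := by
    refine Integrable.const_mul ?_ _
    exact (integrable_finset_sum _ fun i _ => (hYint i).sub (integrable_const c)).sub
      ((integrable_finset_sum _ fun i _ => (hYint i).sub (integrable_const c)).const_mul _)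
  have hg₀meas : Measurable g₀ := by
    refine Measurable.const_mul ?_ _
    refine Measurable.sub ?_ ?_
    · exact Finset.measurable_sum _ fun i _ => (hmeas i).sub measurable_const
    · exact (Finset.measurable_sum _ fun i _ => (hmeas i).sub measurable_const).const_mul _
  have hg_int : Integrable (fun ω' : Ω × ℕ × ℕ => g₀ ω'.1) μ := by
    have hmp : MeasurePreserving (Prod.fst : Ω × ℕ × ℕ → Ω) μ P :=
      ⟨measurable_fst, by rw [hμdef, Measure.map_fst_prod, measure_univ, one_smul]⟩
    have := (hmp.integrable_comp
      hg₀meas.aestronglyMeasurable).2 hg₀int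
    exact this
  -- measurability of the candidate w.r.t. the comap σ-algebra
  set h : (Fin n → ℝ) → ℝ := fun v =>
    -((n : ℝ) / ((k : ℝ) * ((n : ℝ) - k)))
      * ((∑ i : Fin n, (if (i : ℕ) < k then v i else 0))
          - (k : ℝ) / (n : ℝ) * ∑ i : Fin n, v i) with hhdef
  have hhm : Measurable h := by
    apply Measurable.const_mul
    apply Measurable.sub
    · refine Finset.measurable_sum _ fun i _ => ?_
      by_cases hik : (i : ℕ) < k
      · simpa [hik] using measurable_pi_apply i
      · simpa [hik] using measurable_const
    · exact (Finset.measurable_sum _ fun i _ => measurable_pi_apply i).const_mul _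
  have hfilter : Finset.filter (fun i => i < k) (Finset.range n) = Finset.range k := by
    ext i; simp only [Finset.mem_filter, Finset.mem_range]; omega
  have hsumk : ∀ ω : Ω, (∑ i : Fin n, (if (i : ℕ) < k then (Y (i : ℕ) ω - c) else 0))
      = ∑ i ∈ Finset.range k, (Y i ω - c) := by
    intro ω
    rw [Fin.sum_univ_eq_sum_range (fun m => if m < k then Y m ω - c else 0) n,
      ← Finset.sum_filter, hfilter]
  have hsumn : ∀ ω : Ω, (∑ i : Fin n, (Y (i : ℕ) ω - c)) = ∑ i ∈ Finset.range n, (Y i ω - c) :=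
    fun ω => Fin.sum_univ_eq_sum_range (fun m => Y m ω - c) n
  have hcomp : ∀ ω : Ω, g₀ ω = h (ψ ω) := by
    intro ω
    simp only [hg₀def, hhdef, hψdef, hsumk ω, hsumn ω]
  have hgmeas : AEStronglyMeasurable[MeasurableSpace.comap φ inferInstance]
      (fun ω' : Ω × ℕ × ℕ => g₀ ω'.1) μ := by
    have hcm : Measurable[MeasurableSpace.comap φ inferInstance] φ :=
      measurable_iff_comap_le.2 le_rfl
    have heq : (fun ω' : Ω × ℕ × ℕ => g₀ ω'.1) = h ∘ φ := funext fun ω' => hcomp ω'.1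
    have : Measurable[MeasurableSpace.comap φ inferInstance]
        (fun ω' : Ω × ℕ × ℕ => g₀ ω'.1) := by
      rw [heq]; exact hhm.comp hcm
    exact StronglyMeasurable.aestronglyMeasurable this.stronglyMeasurable
  -- the inner integral computation
  have hcard : ((Finset.Ico k n).card : ℝ) = (n : ℝ) - k := by
    rw [Nat.card_Ico, Nat.cast_sub hkn.le]
  have hk0 : (k : ℝ) ≠ 0 := Nat.cast_ne_zero.2 (by omega)
  have hn0 : (n : ℝ) ≠ 0 := Nat.cast_ne_zero.2 (by omega)
  have hnk0 : (n : ℝ) - k ≠ 0 := by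
    have : (k : ℝ) < n := by exact_mod_cast hkn
    linarith
  have halg : ∀ S T : ℝ, ((n : ℝ) - k)⁻¹ * (T - S) - ((k : ℝ))⁻¹ * S
      = -((n : ℝ) / ((k : ℝ) * ((n : ℝ) - k))) * (S - (k : ℝ) / (n : ℝ) * T) := by
    intro S T
    field_simp
    ring
  have key : ∀ ω : Ω, (∫ p : ℕ × ℕ, ((Y p.2 ω - c) - (Y p.1 ω - c)) ∂ν) = g₀ ω := by
    intro ω
    set F : ℕ × ℕ → ℝ := fun p => (Y p.2 ω - c) - (Y p.1 ω - c) with hFdef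
    have hsupp : ∀ᵐ p ∂ν, p ∈ (Set.Iio k ×ˢ Set.Ico k n : Set (ℕ × ℕ)) := by
      have hz1 : ν₁ (Set.Iio k)ᶜ = 0 := by
        rw [hν₁def]
        rw [uniformOn_eq_zero_iff (Set.finite_Iio k)]
        exact Set.inter_compl_self _
      have hz2 : ν₂ (Set.Ico k n)ᶜ = 0 := by
        rw [hν₂def]
        rw [uniformOn_eq_zero_iff (Set.finite_Ico k n)]
        exact Set.inter_compl_self _
      have hsub : ((Set.Iio k ×ˢ Set.Ico k n : Set (ℕ × ℕ)))ᶜ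
          ⊆ ((Set.Iio k)ᶜ ×ˢ (Set.univ : Set ℕ)) ∪ ((Set.univ : Set ℕ) ×ˢ (Set.Ico k n)ᶜ) := by
        intro p hp
        simp only [Set.mem_compl_iff, Set.mem_prod, not_and_or] at hp
        rcases hp with hp | hp
        · exact Or.inl ⟨hp, trivial⟩
        · exact Or.inr ⟨trivial, hp⟩
      refine measure_mono_null hsub ?_
      refine measure_union_null ?_ ?_
      · rw [hνdef, Measure.prod_prod, hz1, zero_mul]
      · rw [hνdef, Measure.prod_prod, hz2, mul_zero]
    set C : ℝ := (∑ j ∈ Finset.Ico k n, |Y j ω - c|) + ∑ i ∈ Finset.range k, |Y i ω - c| with hCdef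
    have hFint : Integrable F ν := by
      refine Integrable.mono' (integrable_const C) (measurable_of_countable F).aestronglyMeasurable ?_
      filter_upwards [hsupp] with p hp
      rw [Real.norm_eq_abs]
      calc |F p| ≤ |Y p.2 ω - c| + |Y p.1 ω - c| := abs_sub _ _
        _ ≤ C := by
            refine add_le_add ?_ ?_
            · exact Finset.single_le_sum (f := fun j => |Y j ω - c|)
                (fun j _ => abs_nonneg _) (Finset.mem_Ico.2 hp.2)
            · exact Finset.single_le_sum (f := fun i => |Y i ω - c|)
                (fun i _ => abs_nonneg _) (Finset.mem_range.2 hp.1)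
    have hν₂int : Integrable (fun j => Y j ω - c) ν₂ := by
      rw [hν₂def, hset2]
      exact aux_integrable_uniformOn _ ⟨k, Finset.mem_Ico.2 ⟨le_rfl, hkn⟩⟩ _
    have hν₁int : Integrable (fun i => Y i ω - c) ν₁ := by
      rw [hν₁def, hset1]
      exact aux_integrable_uniformOn _ ⟨0, Finset.mem_range.2 (by omega)⟩ _
    have hint2 : ∫ j, (Y j ω - c) ∂ν₂
        = ((n : ℝ) - k)⁻¹ * ∑ j ∈ Finset.Ico k n, (Y j ω - c) := by
      rw [hν₂def, hset2, aux_integral_uniformOn, hcard]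
    have hint1 : ∫ i, (Y i ω - c) ∂ν₁
        = ((k : ℝ))⁻¹ * ∑ i ∈ Finset.range k, (Y i ω - c) := by
      rw [hν₁def, hset1, aux_integral_uniformOn, Finset.card_range]
    have hswap : (∫ p : ℕ × ℕ, F p ∂ν)
        = (∫ j, (Y j ω - c) ∂ν₂) - ∫ i, (Y i ω - c) ∂ν₁ := by
      rw [hνdef, integral_prod F (by rwa [← hνdef])]
      have : ∀ i : ℕ, (∫ j, F (i, j) ∂ν₂) = (∫ j, (Y j ω - c) ∂ν₂) - (Y i ω - c) := by
        intro i
        simp only [hFdef]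
        rw [integral_sub hν₂int (integrable_const _), integral_const, probReal_univ,
          one_smul]
      simp only [this]
      rw [integral_sub (integrable_const _) hν₁int, integral_const, probReal_univ,
        one_smul]
    rw [hswap, hint1, hint2, hg₀def]
    have hIco : ∑ j ∈ Finset.Ico k n, (Y j ω - c)
        = (∑ i ∈ Finset.range n, (Y i ω - c)) - ∑ i ∈ Finset.range k, (Y i ω - c) :=
      Finset.sum_Ico_eq_sub _ hkn.le
    rw [hIco]
    exact halg _ _
  -- now apply uniqueness of conditional expectation
  refine (ae_eq_condExp_of_forall_setIntegral_eq hm hf_int ?_ ?_ hgmeas).symm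
  · intro s _ _
    exact hg_int.integrableOn
  · intro s hs _
    obtain ⟨A, hA, rfl⟩ := hs
    have hpre : φ ⁻¹' A = (ψ ⁻¹' A) ×ˢ (Set.univ : Set (ℕ × ℕ)) := by
      ext ω'
      simp [hφdef, Set.mem_prod]
    have hres : μ.restrict ((ψ ⁻¹' A) ×ˢ (Set.univ : Set (ℕ × ℕ)))
        = (P.restrict (ψ ⁻¹' A)).prod ν := by
      rw [hμdef, ← Measure.prod_restrict, Measure.restrict_univ]
    rw [hpre]
    have hfint' : Integrable f ((P.restrict (ψ ⁻¹' A)).prod ν) := by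
      have := hf_int.integrableOn (s := (ψ ⁻¹' A) ×ˢ (Set.univ : Set (ℕ × ℕ)))
      rwa [IntegrableOn, hres] at this
    have hgint' : Integrable (fun ω' : Ω × ℕ × ℕ => g₀ ω'.1) ((P.restrict (ψ ⁻¹' A)).prod ν) := by
      have := hg_int.integrableOn (s := (ψ ⁻¹' A) ×ˢ (Set.univ : Set (ℕ × ℕ)))
      rwa [IntegrableOn, hres] at this
    calc ∫ x in (ψ ⁻¹' A) ×ˢ (Set.univ : Set (ℕ × ℕ)), g₀ x.1 ∂μ
        = ∫ x, g₀ x.1 ∂((P.restrict (ψ ⁻¹' A)).prod ν) := by rw [hres]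
      _ = ∫ ω, (∫ p : ℕ × ℕ, g₀ ω ∂ν) ∂(P.restrict (ψ ⁻¹' A)) := integral_prod _ hgint'
      _ = ∫ ω, g₀ ω ∂(P.restrict (ψ ⁻¹' A)) := by
          congr 1
          funext ω
          rw [integral_const, probReal_univ, one_smul]
      _ = ∫ ω, (∫ p : ℕ × ℕ, ((Y p.2 ω - c) - (Y p.1 ω - c)) ∂ν) ∂(P.restrict (ψ ⁻¹' A)) := by
          congr 1
          funext ω
          rw [key ω]
      _ = ∫ x, f x ∂((P.restrict (ψ ⁻¹' A)).prod ν) := (integral_prod _ hfint').symm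
      _ = ∫ x in (ψ ⁻¹' A) ×ˢ (Set.univ : Set (ℕ × ℕ)), f x ∂μ := by rw [hres]
end

section
/- Let p ≥ 2 be a real number, let V be a real random variable with E|V|^p < ∞, and let Z ~ N(0,1) be independent of V. Then for every T > 0: ∫_0^T ‖ e^{−t} V − ( e^{−2t}/√(1 − e^{−2t}) ) Z ‖_{L^p} dt ≤ (1 − e^{−T}) · W_p(V, N(0,1)) + ‖Z‖_{L^p} · ( π/2 − arcsin(e^{−T}) ). -/
open MeasureTheory ProbabilityTheory
open scoped ENNReal
open Real
open scoped NNReal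

lemma gaussianPDFReal_factor {v₁ v₂ : ℝ≥0} (h₁ : v₁ ≠ 0) (h₂ : v₂ ≠ 0) (x y : ℝ) :
    gaussianPDFReal 0 v₁ y * gaussianPDFReal 0 v₂ (x - y)
      = gaussianPDFReal 0 (v₁ + v₂) x
        * gaussianPDFReal ((v₁ : ℝ) * x / ((v₁ : ℝ) + v₂)) (v₁ * v₂ / (v₁ + v₂)) y := by
  have ha : (0:ℝ) < v₁ := by positivity
  have hb : (0:ℝ) < v₂ := by positivity
  have hs : (0:ℝ) < (v₁:ℝ) + v₂ := by positivity
  have hw : ((v₁ * v₂ / (v₁ + v₂) : ℝ≥0) : ℝ) = (v₁:ℝ) * v₂ / ((v₁:ℝ) + v₂) := by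
    push_cast; ring
  simp only [gaussianPDFReal, sub_zero, hw, NNReal.coe_add]
  rw [mul_mul_mul_comm, mul_mul_mul_comm ((√(2 * π * ((v₁:ℝ) + v₂)))⁻¹)]
  congr 1
  · rw [← mul_inv, ← mul_inv, ← Real.sqrt_mul (by positivity), ← Real.sqrt_mul (by positivity)]
    congr 1
    field_simp
  · rw [← Real.exp_add, ← Real.exp_add]
    congr 1
    field_simp
    ring

lemma gaussianPDF_conv {v₁ v₂ : ℝ≥0} (h₁ : v₁ ≠ 0) (h₂ : v₂ ≠ 0) (x : ℝ) :
    ∫⁻ y, gaussianPDF 0 v₁ y * gaussianPDF 0 v₂ (x - y) = gaussianPDF 0 (v₁ + v₂) x := by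
  have hw : (v₁ * v₂ / (v₁ + v₂) : ℝ≥0) ≠ 0 := by
    simp only [ne_eq, div_eq_zero_iff, mul_eq_zero, add_eq_zero]
    push_neg
    exact ⟨⟨h₁, h₂⟩, fun h => h₂⟩
  calc ∫⁻ y, gaussianPDF 0 v₁ y * gaussianPDF 0 v₂ (x - y)
      = ∫⁻ y, gaussianPDF 0 (v₁ + v₂) x
          * gaussianPDF ((v₁ : ℝ) * x / ((v₁ : ℝ) + v₂)) (v₁ * v₂ / (v₁ + v₂)) y := by
        congr 1 with y
        rw [gaussianPDF, gaussianPDF, gaussianPDF, gaussianPDF,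
          ← ENNReal.ofReal_mul (gaussianPDFReal_nonneg _ _ _),
          ← ENNReal.ofReal_mul (gaussianPDFReal_nonneg _ _ _),
          gaussianPDFReal_factor h₁ h₂]
    _ = gaussianPDF 0 (v₁ + v₂) x := by
        rw [lintegral_const_mul _ (measurable_gaussianPDF _ _),
          lintegral_gaussianPDF_eq_one _ hw, mul_one]

lemma gaussianReal_map_add {v₁ v₂ : ℝ≥0} (h₁ : v₁ ≠ 0) (h₂ : v₂ ≠ 0) :
    ((gaussianReal 0 v₁).prod (gaussianReal 0 v₂)).map (fun q : ℝ × ℝ => q.1 + q.2)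
      = gaussianReal 0 (v₁ + v₂) := by
  have hadd : Measurable (fun q : ℝ × ℝ => q.1 + q.2) := measurable_fst.add measurable_snd
  ext s hs
  rw [Measure.map_apply hadd hs, gaussianReal_of_var_ne_zero 0 h₁,
    gaussianReal_of_var_ne_zero 0 h₂, gaussianReal_apply 0 (by simp [h₁]) s]
  set ind : ℝ → ℝ≥0∞ := s.indicator (fun _ => (1:ℝ≥0∞)) with hind_def
  have hind : Measurable ind := measurable_one.indicator hs
  have hindmul : ∀ (f : ℝ → ℝ≥0∞) (x : ℝ), ind x * f x = s.indicator f x := by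
    intro f x
    by_cases hx : x ∈ s <;> simp [hind_def, hx]
  have hA : MeasurableSet ((fun q : ℝ × ℝ => q.1 + q.2) ⁻¹' s) := hadd hs
  have h2 : Measurable fun q : ℝ × ℝ => ind (q.1 + q.2) := hind.comp hadd
  have hpdf2sub : ∀ y : ℝ, Measurable fun x : ℝ => gaussianPDF 0 v₂ (x - y) := fun y =>
    (measurable_gaussianPDF 0 v₂).comp (measurable_id.sub measurable_const)
  calc ((volume.withDensity (gaussianPDF 0 v₁)).prod
        (volume.withDensity (gaussianPDF 0 v₂))) ((fun q : ℝ × ℝ => q.1 + q.2) ⁻¹' s)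
      = ∫⁻ q : ℝ × ℝ, ind (q.1 + q.2)
          ∂((volume.withDensity (gaussianPDF 0 v₁)).prod
            (volume.withDensity (gaussianPDF 0 v₂))) := by
        rw [← lintegral_indicator_one hA]
        congr 1 with q
    _ = ∫⁻ y, ∫⁻ w, ind (y + w)
          ∂(volume.withDensity (gaussianPDF 0 v₂)) ∂(volume.withDensity (gaussianPDF 0 v₁)) :=
        lintegral_prod _ h2.aemeasurable
    _ = ∫⁻ y, gaussianPDF 0 v₁ y *
          ∫⁻ x, gaussianPDF 0 v₂ (x - y) * ind x ∂volume ∂volume := by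
        have hout : Measurable fun y : ℝ =>
            ∫⁻ w, ind (y + w) ∂(volume.withDensity (gaussianPDF 0 v₂)) :=
          Measurable.lintegral_prod_right' h2
        rw [lintegral_withDensity_eq_lintegral_mul _ (measurable_gaussianPDF _ _) hout]
        congr 1 with y
        simp only [Pi.mul_apply]
        congr 1
        have hg : Measurable fun w : ℝ => ind (y + w) :=
          hind.comp (measurable_const.add measurable_id)
        rw [lintegral_withDensity_eq_lintegral_mul _ (measurable_gaussianPDF _ _) hg]
        calc ∫⁻ w, ((gaussianPDF 0 v₂) * fun w => ind (y + w)) w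
            = ∫⁻ w, (fun x => gaussianPDF 0 v₂ (x - y) * ind x) (y + w) := by
              congr 1 with w
              simp [add_sub_cancel_left]
          _ = _ := by
              exact lintegral_add_left_eq_self (fun x => gaussianPDF 0 v₂ (x - y) * ind x) y
    _ = ∫⁻ y, ∫⁻ x, gaussianPDF 0 v₁ y *
          (gaussianPDF 0 v₂ (x - y) * ind x) ∂volume ∂volume := by
        congr 1 with y
        exact (lintegral_const_mul _ ((hpdf2sub y).mul hind)).symm
    _ = ∫⁻ x, ∫⁻ y, gaussianPDF 0 v₁ y *
          (gaussianPDF 0 v₂ (x - y) * ind x) ∂volume ∂volume := by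
        apply lintegral_lintegral_swap
        exact (((measurable_gaussianPDF 0 v₁).comp measurable_fst).mul
          (((measurable_gaussianPDF 0 v₂).comp (measurable_snd.sub measurable_fst)).mul
            (hind.comp measurable_snd))).aemeasurable
    _ = ∫⁻ x, ind x * gaussianPDF 0 (v₁ + v₂) x ∂volume := by
        congr 1 with x
        have hm : Measurable fun y : ℝ => gaussianPDF 0 v₁ y * gaussianPDF 0 v₂ (x - y) :=
          (measurable_gaussianPDF 0 v₁).mul
            ((measurable_gaussianPDF 0 v₂).comp (measurable_const.sub measurable_id))
        calc ∫⁻ y, gaussianPDF 0 v₁ y * (gaussianPDF 0 v₂ (x - y) * ind x) ∂volume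
            = ∫⁻ y, (fun y => gaussianPDF 0 v₁ y * gaussianPDF 0 v₂ (x - y)) y * ind x
                ∂volume := by
              congr 1 with y
              ring
          _ = (∫⁻ y, gaussianPDF 0 v₁ y * gaussianPDF 0 v₂ (x - y) ∂volume) * ind x :=
              lintegral_mul_const _ hm
          _ = _ := by rw [gaussianPDF_conv h₁ h₂ x, mul_comm]
    _ = ∫⁻ x in s, gaussianPDF 0 (v₁ + v₂) x ∂volume := by
        rw [← lintegral_indicator hs]
        congr 1 with x
        exact hindmul _ x

lemma gaussianReal_map_linear {a b : ℝ} (ha : a ≠ 0) (hb : b ≠ 0) :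
    ((gaussianReal 0 1).prod (gaussianReal 0 1)).map (fun q : ℝ × ℝ => a * q.1 + b * q.2)
      = gaussianReal 0 (⟨a ^ 2, sq_nonneg a⟩ + ⟨b ^ 2, sq_nonneg b⟩) := by
  have h1 : (fun q : ℝ × ℝ => a * q.1 + b * q.2)
      = (fun q : ℝ × ℝ => q.1 + q.2) ∘ (Prod.map (a * ·) (b * ·)) := rfl
  rw [h1, ← Measure.map_map (g := fun q : ℝ × ℝ => q.1 + q.2) (measurable_fst.add measurable_snd)
    ((measurable_const_mul a).prodMap (measurable_const_mul b)),
    ← Measure.map_prod_map _ _ (measurable_const_mul a) (measurable_const_mul b),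
    gaussianReal_map_const_mul a, gaussianReal_map_const_mul b]
  simp only [mul_zero, mul_one]
  exact gaussianReal_map_add (by simp [← NNReal.coe_eq_zero, ha]) (by simp [← NNReal.coe_eq_zero, hb])

lemma eLpNorm_gaussian_scaled (σ : ℝ) (hσ : 0 ≤ σ) (q : ℝ≥0∞) :
    eLpNorm (fun x : ℝ => x) q (gaussianReal 0 (⟨σ ^ 2, sq_nonneg σ⟩ : ℝ≥0))
      = ENNReal.ofReal σ * eLpNorm (fun x : ℝ => x) q (gaussianReal 0 1) := by
  have h1 : gaussianReal 0 (⟨σ ^ 2, sq_nonneg σ⟩ : ℝ≥0) = (gaussianReal 0 1).map (σ * ·) := by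
    rw [gaussianReal_map_const_mul σ]
    norm_num
    rfl
  rw [h1, eLpNorm_map_measure (g := fun x : ℝ => x)
    (by exact measurable_id.aestronglyMeasurable) (measurable_const_mul σ).aemeasurable,
    show ((fun x : ℝ => x) ∘ (σ * ·)) = σ • (fun x : ℝ => x) from rfl,
    eLpNorm_const_smul, Real.enorm_eq_ofReal hσ]

lemma eLpNorm_sub_eq_wcost (p : ℝ) (hp : 2 ≤ p) (γ : Measure (ℝ × ℝ)) :
    eLpNorm (fun z : ℝ × ℝ => z.1 - z.2) (ENNReal.ofReal p) γ
      = (∫⁻ z, ENNReal.ofReal (|z.1 - z.2| ^ p) ∂γ) ^ (1 / p) := by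
  have hp0 : (0:ℝ) < p := by linarith
  rw [eLpNorm_eq_lintegral_rpow_enorm_toReal ((ENNReal.ofReal_pos.mpr hp0).ne')
    ENNReal.ofReal_ne_top, ENNReal.toReal_ofReal hp0.le]
  congr 1
  apply lintegral_congr
  intro z
  rw [← Real.norm_eq_abs, ← ofReal_norm,
    ← ENNReal.ofReal_rpow_of_nonneg (norm_nonneg _) hp0.le]

lemma pointwise_bound {Ω : Type*} [MeasurableSpace Ω]
    (P : Measure Ω) [IsProbabilityMeasure P]
    (p : ℝ) (hp : 2 ≤ p) (V Z : Ω → ℝ)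
    (hV : Measurable V) (hZ : Measurable Z)
    (hZlaw : P.map Z = gaussianReal 0 1)
    (hindep : IndepFun V Z P)
    (γ : Measure (ℝ × ℝ))
    (hγ1 : γ.map Prod.fst = P.map V) (hγ2 : γ.map Prod.snd = gaussianReal 0 1)
    (t : ℝ) (ht : 0 < t) :
    eLpNorm (fun ω => Real.exp (-t) * V ω
        - Real.exp (-2 * t) / Real.sqrt (1 - Real.exp (-2 * t)) * Z ω) (ENNReal.ofReal p) P
      ≤ ENNReal.ofReal (Real.exp (-t)) * (∫⁻ z, ENNReal.ofReal (|z.1 - z.2| ^ p) ∂γ) ^ (1 / p)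
        + ENNReal.ofReal (Real.exp (-t) / Real.sqrt (1 - Real.exp (-2 * t)))
            * eLpNorm Z (ENNReal.ofReal p) P := by
  have hγprob : IsProbabilityMeasure γ := by
    have hPV : IsProbabilityMeasure (P.map V) := Measure.isProbabilityMeasure_map hV.aemeasurable
    constructor
    have := congrArg (fun m : Measure ℝ => m Set.univ) hγ1
    simp only [Measure.map_apply measurable_fst MeasurableSet.univ, Set.preimage_univ] at this
    rw [this, measure_univ]
  set q : ℝ≥0∞ := ENNReal.ofReal p with hq
  have hq1 : 1 ≤ q := ENNReal.one_le_ofReal.mpr (by linarith)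
  set a : ℝ := Real.exp (-t) with ha_def
  set s : ℝ := Real.sqrt (1 - Real.exp (-2 * t)) with hs_def
  have ha : 0 < a := Real.exp_pos _
  have he2t : Real.exp (-2 * t) = a ^ 2 := by
    rw [ha_def, sq, ← Real.exp_add]; congr 1; ring
  have he2t_lt : Real.exp (-2 * t) < 1 := by
    rw [Real.exp_lt_one_iff]; linarith
  have hs : 0 < s := Real.sqrt_pos.mpr (by linarith)
  have hs2 : s ^ 2 = 1 - a ^ 2 := by
    rw [hs_def, Real.sq_sqrt (by linarith), he2t]
  set c : ℝ := Real.exp (-2 * t) / s with hc_def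
  have hc : 0 < c := div_pos (Real.exp_pos _) hs
  set σ : ℝ := a / s with hσ_def
  have hσ : 0 < σ := div_pos ha hs
  have hσ2 : a ^ 2 + (-c) ^ 2 = σ ^ 2 := by
    have hc' : c = a ^ 2 / s := by rw [hc_def, he2t]
    rw [hσ_def, hc']
    field_simp
    nlinarith [hs2, ha, hs]
  -- Step 1: transfer to μ' := γ.prod (gaussianReal 0 1)
  have hφ : Measurable (fun z : ℝ × ℝ => a * z.1 - c * z.2) :=
    (measurable_fst.const_mul a).sub (measurable_snd.const_mul c)
  have hlaw1 : P.map (fun ω => (V ω, Z ω)) = (P.map V).prod (gaussianReal 0 1) := by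
    rw [← hZlaw]
    exact (indepFun_iff_map_prod_eq_prod_map_map hV.aemeasurable hZ.aemeasurable).1 hindep
  have hlaw2 : (γ.prod (gaussianReal 0 1)).map (fun ω' : (ℝ × ℝ) × ℝ => (ω'.1.1, ω'.2))
      = (P.map V).prod (gaussianReal 0 1) := by
    rw [show (fun ω' : (ℝ × ℝ) × ℝ => (ω'.1.1, ω'.2)) = Prod.map Prod.fst id from rfl,
      ← Measure.map_prod_map _ _ measurable_fst measurable_id, hγ1, Measure.map_id]
  have e1 : eLpNorm (fun ω => a * V ω - c * Z ω) q P
      = eLpNorm (fun ω' : (ℝ × ℝ) × ℝ => a * ω'.1.1 - c * ω'.2) q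
          (γ.prod (gaussianReal 0 1)) := by
    have t1 : eLpNorm (fun ω => a * V ω - c * Z ω) q P
        = eLpNorm (fun z : ℝ × ℝ => a * z.1 - c * z.2) q (P.map (fun ω => (V ω, Z ω))) :=
      (eLpNorm_map_measure hφ.aestronglyMeasurable (hV.prodMk hZ).aemeasurable).symm
    have t2 : eLpNorm (fun ω' : (ℝ × ℝ) × ℝ => a * ω'.1.1 - c * ω'.2) q
          (γ.prod (gaussianReal 0 1))
        = eLpNorm (fun z : ℝ × ℝ => a * z.1 - c * z.2) q
            ((γ.prod (gaussianReal 0 1)).map (fun ω' : (ℝ × ℝ) × ℝ => (ω'.1.1, ω'.2))) :=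
      (eLpNorm_map_measure hφ.aestronglyMeasurable
        ((measurable_fst.fst.prodMk measurable_snd).aemeasurable)).symm
    rw [t1, t2, hlaw1, hlaw2]
  -- Step 2: triangle inequality
  have htri : eLpNorm (fun ω' : (ℝ × ℝ) × ℝ => a * ω'.1.1 - c * ω'.2) q
        (γ.prod (gaussianReal 0 1))
      ≤ eLpNorm (fun ω' : (ℝ × ℝ) × ℝ => a * (ω'.1.1 - ω'.1.2)) q (γ.prod (gaussianReal 0 1))
        + eLpNorm (fun ω' : (ℝ × ℝ) × ℝ => a * ω'.1.2 - c * ω'.2) q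
            (γ.prod (gaussianReal 0 1)) := by
    have hsplit : (fun ω' : (ℝ × ℝ) × ℝ => a * ω'.1.1 - c * ω'.2)
        = (fun ω' : (ℝ × ℝ) × ℝ => a * (ω'.1.1 - ω'.1.2))
          + (fun ω' : (ℝ × ℝ) × ℝ => a * ω'.1.2 - c * ω'.2) := by
      funext ω'; simp only [Pi.add_apply]; ring
    rw [hsplit]
    exact eLpNorm_add_le
      ((measurable_fst.fst.sub measurable_fst.snd).const_mul a).aestronglyMeasurable
      ((measurable_fst.snd.const_mul a).sub (measurable_snd.const_mul c)).aestronglyMeasurable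
      hq1
  -- Step 3: first term
  have hterm1 : eLpNorm (fun ω' : (ℝ × ℝ) × ℝ => a * (ω'.1.1 - ω'.1.2)) q
        (γ.prod (gaussianReal 0 1))
      = ENNReal.ofReal a * (∫⁻ z, ENNReal.ofReal (|z.1 - z.2| ^ p) ∂γ) ^ (1 / p) := by
    have h1 : (fun ω' : (ℝ × ℝ) × ℝ => a * (ω'.1.1 - ω'.1.2))
        = a • (fun ω' : (ℝ × ℝ) × ℝ => ω'.1.1 - ω'.1.2) := rfl
    rw [h1, eLpNorm_const_smul, Real.enorm_eq_ofReal ha.le]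
    have h2 : eLpNorm (fun ω' : (ℝ × ℝ) × ℝ => ω'.1.1 - ω'.1.2) q (γ.prod (gaussianReal 0 1))
        = eLpNorm (fun z : ℝ × ℝ => z.1 - z.2) q γ := by
      have h3 := eLpNorm_map_measure (μ := γ.prod (gaussianReal 0 1)) (f := Prod.fst)
        (g := fun z : ℝ × ℝ => z.1 - z.2) (p := q)
        (measurable_fst.sub measurable_snd).aestronglyMeasurable
        measurable_fst.aemeasurable
      rw [Measure.map_fst_prod] at h3
      simp only [measure_univ, one_smul] at h3
      exact h3.symm.trans rfl
    rw [h2, hq, eLpNorm_sub_eq_wcost p hp γ]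
  -- Step 4: second term
  have hlaw3 : (γ.prod (gaussianReal 0 1)).map (fun ω' : (ℝ × ℝ) × ℝ => (ω'.1.2, ω'.2))
      = (gaussianReal 0 1).prod (gaussianReal 0 1) := by
    rw [show (fun ω' : (ℝ × ℝ) × ℝ => (ω'.1.2, ω'.2)) = Prod.map Prod.snd id from rfl,
      ← Measure.map_prod_map _ _ measurable_snd measurable_id, hγ2, Measure.map_id]
  have hterm2 : eLpNorm (fun ω' : (ℝ × ℝ) × ℝ => a * ω'.1.2 - c * ω'.2) q
        (γ.prod (gaussianReal 0 1))
      = ENNReal.ofReal σ * eLpNorm Z q P := by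
    have hψ : Measurable (fun z : ℝ × ℝ => a * z.1 + (-c) * z.2) :=
      (measurable_fst.const_mul a).add (measurable_snd.const_mul (-c))
    have t1 : eLpNorm (fun ω' : (ℝ × ℝ) × ℝ => a * ω'.1.2 - c * ω'.2) q
          (γ.prod (gaussianReal 0 1))
        = eLpNorm (fun z : ℝ × ℝ => a * z.1 + (-c) * z.2) q
            ((γ.prod (gaussianReal 0 1)).map (fun ω' : (ℝ × ℝ) × ℝ => (ω'.1.2, ω'.2))) := by
      rw [eLpNorm_map_measure hψ.aestronglyMeasurable
        ((measurable_fst.snd.prodMk measurable_snd).aemeasurable)]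
      congr 1
      funext ω'
      show a * ω'.1.2 - c * ω'.2 = a * ω'.1.2 + -c * ω'.2
      ring
    have t2 : ((gaussianReal 0 1).prod (gaussianReal 0 1)).map
          (fun z : ℝ × ℝ => a * z.1 + (-c) * z.2)
        = gaussianReal 0 (⟨σ ^ 2, sq_nonneg σ⟩ : ℝ≥0) := by
      rw [gaussianReal_map_linear ha.ne' (neg_ne_zero.mpr hc.ne')]
      congr 1
      ext
      push_cast
      exact hσ2
    have t3 : eLpNorm (fun x : ℝ => x) q (gaussianReal 0 1) = eLpNorm Z q P := by
      rw [← hZlaw, eLpNorm_map_measure (g := fun x : ℝ => x)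
        (by exact measurable_id.aestronglyMeasurable) hZ.aemeasurable]
      rfl
    have t4 : eLpNorm (fun z : ℝ × ℝ => a * z.1 + (-c) * z.2) q
          ((gaussianReal 0 1).prod (gaussianReal 0 1))
        = eLpNorm (fun x : ℝ => x) q
            (((gaussianReal 0 1).prod (gaussianReal 0 1)).map
              (fun z : ℝ × ℝ => a * z.1 + (-c) * z.2)) :=
      (eLpNorm_map_measure (g := fun x : ℝ => x)
        (by exact measurable_id.aestronglyMeasurable) hψ.aemeasurable).symm
    rw [t1, hlaw3, t4, t2, eLpNorm_gaussian_scaled σ hσ.le, t3]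
  calc eLpNorm (fun ω => a * V ω - c * Z ω) q P
      ≤ eLpNorm (fun ω' : (ℝ × ℝ) × ℝ => a * (ω'.1.1 - ω'.1.2)) q (γ.prod (gaussianReal 0 1))
        + eLpNorm (fun ω' : (ℝ × ℝ) × ℝ => a * ω'.1.2 - c * ω'.2) q
            (γ.prod (gaussianReal 0 1)) := e1 ▸ htri
    _ = ENNReal.ofReal a * (∫⁻ z, ENNReal.ofReal (|z.1 - z.2| ^ p) ∂γ) ^ (1 / p)
        + ENNReal.ofReal σ * eLpNorm Z q P := by rw [hterm1, hterm2]

lemma lintegral_exp_neg_Ioc (T : ℝ) (hT : 0 < T) :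
    ∫⁻ t in Set.Ioc 0 T, ENNReal.ofReal (Real.exp (-t))
      = ENNReal.ofReal (1 - Real.exp (-T)) := by
  have hInt : IntegrableOn (fun t => Real.exp (-t)) (Set.Ioc 0 T) volume :=
    (Real.continuous_exp.comp continuous_neg).integrableOn_Ioc
  rw [← ofReal_integral_eq_lintegral_ofReal hInt
    (ae_of_all _ fun t => (Real.exp_pos _).le)]
  congr 1
  rw [← intervalIntegral.integral_of_le hT.le, intervalIntegral.integral_comp_neg
    (fun x => Real.exp x), integral_exp]
  simp

lemma arcsin_integral_segment {a T : ℝ} (ha : 0 < a) (haT : a ≤ T) :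
    ∫ t in a..T, Real.exp (-t) / Real.sqrt (1 - Real.exp (-2 * t))
      = Real.arcsin (Real.exp (-a)) - Real.arcsin (Real.exp (-T)) := by
  set f : ℝ → ℝ := fun t => Real.exp (-t) / Real.sqrt (1 - Real.exp (-2 * t)) with hf_def
  have hpos : ∀ t : ℝ, 0 < t → 0 < 1 - Real.exp (-2 * t) := by
    intro t ht
    have : Real.exp (-2 * t) < 1 := by
      rw [Real.exp_lt_one_iff]; linarith
    linarith
  have hcont : ContinuousOn f (Set.uIcc a T) := by
    rw [Set.uIcc_of_le haT]
    apply ContinuousOn.div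
    · exact (Real.continuous_exp.comp continuous_neg).continuousOn
    · exact (continuous_const.sub (Real.continuous_exp.comp
        (continuous_const.mul continuous_id))).sqrt.continuousOn
    · intro t ht
      exact (Real.sqrt_pos.mpr (hpos t (lt_of_lt_of_le ha ht.1))).ne'
  have hderiv : ∀ t ∈ Set.uIcc a T,
      HasDerivAt (fun u => -Real.arcsin (Real.exp (-u))) (f t) t := by
    intro t ht
    rw [Set.uIcc_of_le haT] at ht
    have ht0 : 0 < t := lt_of_lt_of_le ha ht.1
    have hx1 : Real.exp (-t) < 1 := by rw [Real.exp_lt_one_iff]; linarith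
    have hx0 : 0 < Real.exp (-t) := Real.exp_pos _
    have h1 : HasDerivAt (fun u : ℝ => Real.exp (-u)) (-Real.exp (-t)) t := by
      have := (Real.hasDerivAt_exp (-t)).comp t (hasDerivAt_neg t)
      simpa [Function.comp_def] using this
    have h2 : HasDerivAt Real.arcsin (1 / Real.sqrt (1 - Real.exp (-t) ^ 2)) (Real.exp (-t)) :=
      Real.hasDerivAt_arcsin (by linarith) hx1.ne
    have h3 := (h2.comp t h1).neg
    have hsq : Real.exp (-t) ^ 2 = Real.exp (-2 * t) := by
      rw [sq, ← Real.exp_add]; congr 1; ring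
    refine h3.congr_deriv ?_
    rw [hf_def]
    simp only
    rw [hsq]
    field_simp
  rw [intervalIntegral.integral_eq_sub_of_hasDerivAt hderiv (hcont.intervalIntegrable)]
  ring

lemma lintegral_arcsin_bound (T : ℝ) (hT : 0 < T) :
    ∫⁻ t in Set.Ioc 0 T,
        ENNReal.ofReal (Real.exp (-t) / Real.sqrt (1 - Real.exp (-2 * t)))
      ≤ ENNReal.ofReal (Real.pi / 2 - Real.arcsin (Real.exp (-T))) := by
  set f : ℝ → ℝ := fun t => Real.exp (-t) / Real.sqrt (1 - Real.exp (-2 * t)) with hf_def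
  have hfnonneg : ∀ t, 0 ≤ f t := fun t => div_nonneg (Real.exp_pos _).le (Real.sqrt_nonneg _)
  have hfmeas : Measurable fun t => ENNReal.ofReal (f t) := by
    apply Measurable.ennreal_ofReal
    exact (Real.measurable_exp.comp measurable_neg).div
      ((measurable_const.sub (Real.measurable_exp.comp
        (measurable_const.mul measurable_id))).sqrt)
  -- segment bound
  have hseg : ∀ a : ℝ, 0 < a → a ≤ T →
      ∫⁻ t in Set.Ioc a T, ENNReal.ofReal (f t)
        ≤ ENNReal.ofReal (Real.pi / 2 - Real.arcsin (Real.exp (-T))) := by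
    intro a ha haT
    have hcont : ContinuousOn f (Set.uIcc a T) := by
      rw [Set.uIcc_of_le haT]
      apply ContinuousOn.div
      · exact (Real.continuous_exp.comp continuous_neg).continuousOn
      · exact (continuous_const.sub (Real.continuous_exp.comp
          (continuous_const.mul continuous_id))).sqrt.continuousOn
      · intro t ht
        have : (0:ℝ) < 1 - Real.exp (-2 * t) := by
          have : Real.exp (-2 * t) < 1 := by
            rw [Real.exp_lt_one_iff]
            have := lt_of_lt_of_le ha ht.1
            linarith
          linarith
        exact (Real.sqrt_pos.mpr this).ne'
    have hInt : IntegrableOn f (Set.Ioc a T) volume := by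
      have := (hcont.mono (by rw [Set.uIcc_of_le haT])).integrableOn_Icc (μ := volume)
      exact this.mono_set Set.Ioc_subset_Icc_self
    rw [← ofReal_integral_eq_lintegral_ofReal hInt (ae_of_all _ hfnonneg)]
    apply ENNReal.ofReal_le_ofReal
    rw [← intervalIntegral.integral_of_le haT, arcsin_integral_segment ha haT]
    have := Real.arcsin_le_pi_div_two (Real.exp (-a))
    linarith
  -- monotone limit
  set F : ℕ → ℝ → ℝ≥0∞ := fun n => (Set.Ioc (T / (n + 2)) T).indicator
    (fun t => ENNReal.ofReal (f t)) with hF_def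
  have hFmeas : ∀ n, Measurable (F n) := fun n => hfmeas.indicator measurableSet_Ioc
  have hFmono : Monotone F := by
    intro n m hnm
    apply Set.indicator_le_indicator_of_subset
    · apply Set.Ioc_subset_Ioc_left
      apply div_le_div_of_nonneg_left hT.le (by positivity)
      have : (n:ℝ) ≤ (m:ℝ) := Nat.cast_le.mpr hnm
      linarith
    · intro t; exact zero_le
  have hFsup : ∀ t, (⨆ n, F n t) = (Set.Ioc 0 T).indicator (fun t => ENNReal.ofReal (f t)) t := by
    intro t
    by_cases ht : t ∈ Set.Ioc 0 T
    · rw [Set.indicator_of_mem ht]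
      apply le_antisymm
      · apply iSup_le
        intro n
        simp only [hF_def]
        by_cases htn : t ∈ Set.Ioc (T / (n + 2)) T
        · rw [Set.indicator_of_mem htn]
        · rw [Set.indicator_of_notMem htn]; exact zero_le
      · obtain ⟨n, hn⟩ : ∃ n : ℕ, T / (n + 2) < t := by
          obtain ⟨n, hn⟩ := exists_nat_gt (T / t)
          refine ⟨n, ?_⟩
          rw [div_lt_iff₀ (by positivity)]
          have h1 : T / t < n := hn
          rw [div_lt_iff₀ ht.1] at h1
          nlinarith [ht.1]
        have htn : t ∈ Set.Ioc (T / (n + 2)) T := ⟨hn, ht.2⟩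
        refine le_trans ?_ (le_iSup _ n)
        simp only [hF_def]
        rw [Set.indicator_of_mem htn]
    · rw [Set.indicator_of_notMem ht]
      apply le_antisymm _ zero_le
      apply iSup_le
      intro n
      have htn : t ∉ Set.Ioc (T / (n + 2)) T := by
        intro hc
        apply ht
        exact ⟨lt_trans (by positivity) hc.1, hc.2⟩
      simp only [hF_def]
      rw [Set.indicator_of_notMem htn]
  calc ∫⁻ t in Set.Ioc 0 T, ENNReal.ofReal (f t)
      = ∫⁻ t, (Set.Ioc 0 T).indicator (fun t => ENNReal.ofReal (f t)) t :=
        (lintegral_indicator measurableSet_Ioc _).symm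
    _ = ∫⁻ t, ⨆ n, F n t := by simp_rw [hFsup]
    _ = ⨆ n, ∫⁻ t, F n t := lintegral_iSup hFmeas hFmono
    _ ≤ ENNReal.ofReal (Real.pi / 2 - Real.arcsin (Real.exp (-T))) := by
        apply iSup_le
        intro n
        simp only [hF_def]
        rw [lintegral_indicator measurableSet_Ioc]
        apply hseg
        · positivity
        · rw [div_le_iff₀ (by positivity)]
          nlinarith [hT]

/-- The Wasserstein-`p` distance between two Borel probability measures on `ℝ`,
defined as an infimum over couplings (valued in `ℝ≥0∞`). -/
noncomputable def Wp (p : ℝ) (μ ν : Measure ℝ) : ℝ≥0∞ :=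
  ⨅ γ ∈ {γ : Measure (ℝ × ℝ) | γ.map Prod.fst = μ ∧ γ.map Prod.snd = ν},
    (∫⁻ z, ENNReal.ofReal (|z.1 - z.2| ^ p) ∂γ) ^ (1 / p)

/-- For `V ∈ L^p` and `Z ~ N(0,1)` independent of `V`, and any `T > 0`,
`∫₀^T ‖e^{−t} V − (e^{−2t}/√(1−e^{−2t})) Z‖_p dt
  ≤ (1 − e^{−T}) W_p(V, N(0,1)) + ‖Z‖_p (π/2 − arcsin(e^{−T}))`. -/
theorem ou_interpolation_initial_segment_bound {Ω : Type*} [MeasurableSpace Ω]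
    (P : Measure Ω) [IsProbabilityMeasure P]
    (p : ℝ) (hp : 2 ≤ p) (V Z : Ω → ℝ)
    (hV : Measurable V) (hZ : Measurable Z)
    (hVp : MemLp V (ENNReal.ofReal p) P)
    (hZlaw : P.map Z = gaussianReal 0 1)
    (hindep : IndepFun V Z P)
    (T : ℝ) (hT : 0 < T) :
    (∫⁻ t in Set.Ioc 0 T,
        eLpNorm (fun ω => Real.exp (-t) * V ω
            - Real.exp (-2 * t) / Real.sqrt (1 - Real.exp (-2 * t)) * Z ω)
          (ENNReal.ofReal p) P)
      ≤ ENNReal.ofReal (1 - Real.exp (-T)) * Wp p (P.map V) (gaussianReal 0 1)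
        + eLpNorm Z (ENNReal.ofReal p) P
            * ENNReal.ofReal (Real.pi / 2 - Real.arcsin (Real.exp (-T))) := by
  have hT1 : Real.exp (-T) < 1 := by rw [Real.exp_lt_one_iff]; linarith
  have hk0 : ENNReal.ofReal (1 - Real.exp (-T)) ≠ 0 :=
    (ENNReal.ofReal_pos.mpr (by linarith)).ne'
  have hk_top : ENNReal.ofReal (1 - Real.exp (-T)) ≠ ⊤ := ENNReal.ofReal_ne_top
  set D : ℝ≥0∞ := eLpNorm Z (ENNReal.ofReal p) P with hD
  set d : ℝ≥0∞ := D * ENNReal.ofReal (Real.pi / 2 - Real.arcsin (Real.exp (-T))) with hd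
  have hkey : ∀ γ : Measure (ℝ × ℝ), γ.map Prod.fst = P.map V →
      γ.map Prod.snd = gaussianReal 0 1 →
      (∫⁻ t in Set.Ioc 0 T,
          eLpNorm (fun ω => Real.exp (-t) * V ω
              - Real.exp (-2 * t) / Real.sqrt (1 - Real.exp (-2 * t)) * Z ω)
            (ENNReal.ofReal p) P)
        ≤ ENNReal.ofReal (1 - Real.exp (-T))
            * (∫⁻ z, ENNReal.ofReal (|z.1 - z.2| ^ p) ∂γ) ^ (1 / p) + d := by
    intro γ hγ1 hγ2
    have hmeas1 : Measurable fun t : ℝ => ENNReal.ofReal (Real.exp (-t)) :=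
      (Real.measurable_exp.comp measurable_neg).ennreal_ofReal
    have hmeas2 : Measurable fun t : ℝ =>
        ENNReal.ofReal (Real.exp (-t) / Real.sqrt (1 - Real.exp (-2 * t))) :=
      ((Real.measurable_exp.comp measurable_neg).div
        ((measurable_const.sub (Real.measurable_exp.comp
          (measurable_const.mul measurable_id))).sqrt)).ennreal_ofReal
    calc (∫⁻ t in Set.Ioc 0 T,
          eLpNorm (fun ω => Real.exp (-t) * V ω
              - Real.exp (-2 * t) / Real.sqrt (1 - Real.exp (-2 * t)) * Z ω)
            (ENNReal.ofReal p) P)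
        ≤ ∫⁻ t in Set.Ioc 0 T,
            (ENNReal.ofReal (Real.exp (-t))
                * (∫⁻ z, ENNReal.ofReal (|z.1 - z.2| ^ p) ∂γ) ^ (1 / p)
              + ENNReal.ofReal (Real.exp (-t) / Real.sqrt (1 - Real.exp (-2 * t))) * D) := by
          apply lintegral_mono_ae
          rw [ae_restrict_iff' measurableSet_Ioc]
          apply ae_of_all
          intro t ht
          exact pointwise_bound P p hp V Z hV hZ hZlaw hindep γ hγ1 hγ2 t ht.1
      _ = (∫⁻ t in Set.Ioc 0 T, ENNReal.ofReal (Real.exp (-t)))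
              * (∫⁻ z, ENNReal.ofReal (|z.1 - z.2| ^ p) ∂γ) ^ (1 / p)
            + (∫⁻ t in Set.Ioc 0 T,
                ENNReal.ofReal (Real.exp (-t) / Real.sqrt (1 - Real.exp (-2 * t)))) * D := by
          rw [lintegral_add_left (hmeas1.mul_const _), lintegral_mul_const _ hmeas1,
            lintegral_mul_const _ hmeas2]
      _ ≤ ENNReal.ofReal (1 - Real.exp (-T))
              * (∫⁻ z, ENNReal.ofReal (|z.1 - z.2| ^ p) ∂γ) ^ (1 / p) + d := by
          rw [lintegral_exp_neg_Ioc T hT]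
          apply add_le_add_right
          rw [hd, mul_comm D]
          exact mul_le_mul_left (lintegral_arcsin_bound T hT) D
  have h1 : (∫⁻ t in Set.Ioc 0 T,
        eLpNorm (fun ω => Real.exp (-t) * V ω
            - Real.exp (-2 * t) / Real.sqrt (1 - Real.exp (-2 * t)) * Z ω)
          (ENNReal.ofReal p) P)
      ≤ ⨅ γ ∈ {γ : Measure (ℝ × ℝ) | γ.map Prod.fst = P.map V
          ∧ γ.map Prod.snd = gaussianReal 0 1},
          (ENNReal.ofReal (1 - Real.exp (-T))
            * (∫⁻ z, ENNReal.ofReal (|z.1 - z.2| ^ p) ∂γ) ^ (1 / p) + d) :=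
    le_iInf₂ fun γ hγ => hkey γ hγ.1 hγ.2
  have heq : ENNReal.ofReal (1 - Real.exp (-T)) * Wp p (P.map V) (gaussianReal 0 1) + d
      = ⨅ γ ∈ {γ : Measure (ℝ × ℝ) | γ.map Prod.fst = P.map V
          ∧ γ.map Prod.snd = gaussianReal 0 1},
          (ENNReal.ofReal (1 - Real.exp (-T))
            * (∫⁻ z, ENNReal.ofReal (|z.1 - z.2| ^ p) ∂γ) ^ (1 / p) + d) := by
    rw [Wp, ENNReal.mul_iInf_of_ne hk0 hk_top, ENNReal.iInf_add]
    congr 1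
    funext γ
    rw [ENNReal.mul_iInf_of_ne hk0 hk_top, ENNReal.iInf_add]
  rw [heq]
  exact h1
end

section
/- Suppose Assumption (R,σ) holds. Then for all integers 1 ≤ k < n and all reals p ≥ 2, with σ_{n,k}² := σ² k(n−k)/n: ( E[ W_p( ν_{(X_1,…,X_n),k}, N(0, σ_{n,k}²) )^p ] )^{1/p} ≤ √(p−1) · σ_{n,k} · (1 + √2 · R/σ). In particular, W_p( W_k, N(0, σ_{n,k}²) ) ≤ √(p−1) · σ_{n,k} · (1 + √2 · R/σ). -/
open MeasureTheory ProbabilityTheory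
open scoped ENNReal

noncomputable instance {n : ℕ} : MeasurableSpace (Equiv.Perm (Fin n)) := ⊤

/-- `Σ_{i=1}^k x_{π(i)} − (k/n) Σ_{i=1}^n x_i` as a function of the permutation `π`. -/
noncomputable def permStat (n k : ℕ) (x : Fin n → ℝ) (π : Equiv.Perm (Fin n)) : ℝ :=
  (∑ i : Fin n, if (i : ℕ) < k then x (π i) else 0) - ((k : ℝ) / n) * ∑ i, x i

/-- `ν_{x,k}`: the law of `Σ_{i=1}^k x_{π(i)} − (k/n) Σ_{i=1}^n x_i` for a uniformly
random permutation `π` of `{1,…,n}`. -/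
noncomputable def permLaw (n k : ℕ) (x : Fin n → ℝ) : Measure ℝ :=
  (uniformOn (Set.univ : Set (Equiv.Perm (Fin n)))).map (permStat n k x)

section AuxLemmas

open scoped NNReal

private lemma rpow_le_exp_aux {p y : ℝ} (hp : 0 < p) (hy : 0 ≤ y) :
    y ^ p ≤ (p / Real.exp 1) ^ p * Real.exp y := by
  rcases eq_or_lt_of_le hy with h0 | h0
  · rw [← h0, Real.zero_rpow hp.ne']
    positivity
  · have h1 : Real.log (y / p) ≤ y / p - 1 := Real.log_le_sub_one_of_pos (by positivity)
    have h2 : Real.log y - Real.log p ≤ y / p - 1 := by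
      rwa [Real.log_div h0.ne' hp.ne'] at h1
    have h3 : p * (Real.log y - Real.log p) ≤ p * (y / p - 1) :=
      mul_le_mul_of_nonneg_left h2 hp.le
    have h4 : p * (y / p - 1) = y - p := by field_simp
    rw [Real.rpow_def_of_pos h0, Real.rpow_def_of_pos (by positivity : (0:ℝ) < p / Real.exp 1),
      ← Real.exp_add]
    apply Real.exp_le_exp.2
    rw [Real.log_div hp.ne' (Real.exp_ne_zero 1), Real.log_exp]
    nlinarith [h3]

private lemma exp_abs_le {t z : ℝ} (ht : 0 ≤ t) :
    Real.exp (t * |z|) ≤ Real.exp (t * z) + Real.exp (-t * z) := by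
  rcases abs_cases z with ⟨h, _⟩ | ⟨h, _⟩
  · rw [h]; nlinarith [Real.exp_pos (-t * z)]
  · rw [h]
    have : t * -z = -t * z := by ring
    rw [this]
    nlinarith [Real.exp_pos (t * z)]

private lemma key_const_eq {p v : ℝ} (hp : 0 < p) (hv : 0 < v) :
    (p / (Real.exp 1 * Real.sqrt (p / v))) ^ p * (2 * Real.exp (p / 2))
      = (2 ^ (1/p) * Real.sqrt (p * v / Real.exp 1)) ^ p := by
  have ht : 0 < Real.sqrt (p / v) := Real.sqrt_pos.2 (by positivity)
  have hpv : Real.sqrt (p / v) * Real.sqrt (p * v) = p := by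
    rw [← Real.sqrt_mul (by positivity)]
    rw [show p / v * (p * v) = p ^ 2 by field_simp, Real.sqrt_sq hp.le]
  have h1 : p / (Real.exp 1 * Real.sqrt (p / v)) = Real.sqrt (p * v) / Real.exp 1 := by
    rw [div_eq_div_iff (by positivity) (Real.exp_pos 1).ne']
    linear_combination (-Real.exp 1) * hpv
  rw [h1]
  have h2 : ((2:ℝ) ^ (1/p) * Real.sqrt (p * v / Real.exp 1)) ^ p
      = 2 * (Real.sqrt (p * v / Real.exp 1)) ^ p := by
    rw [Real.mul_rpow (by positivity) (Real.sqrt_nonneg _), one_div,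
      Real.rpow_inv_rpow (by norm_num) hp.ne']
  rw [h2]
  have h3 : ∀ x : ℝ, 0 ≤ x → Real.sqrt x ^ p = x ^ (p / 2) := by
    intro x hx
    rw [Real.sqrt_eq_rpow, ← Real.rpow_mul hx, one_div, inv_mul_eq_div]
  have h4 : (Real.sqrt (p * v) / Real.exp 1) ^ p
      = (p * v) ^ (p/2) / Real.exp p := by
    rw [Real.div_rpow (Real.sqrt_nonneg _) (Real.exp_pos 1).le, h3 _ (by positivity),
      Real.exp_one_rpow]
  rw [h4]
  have h5 : (p * v / Real.exp 1) ^ (p/2) = (p*v) ^ (p/2) / Real.exp (p/2) := by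
    rw [Real.div_rpow (by positivity) (Real.exp_pos 1).le, Real.exp_one_rpow]
  rw [h3 _ (by positivity : (0:ℝ) ≤ p * v / Real.exp 1), h5]
  have h6 : Real.exp p = Real.exp (p/2) * Real.exp (p/2) := by
    rw [← Real.exp_add]; ring_nf
  rw [h6]
  have := Real.exp_pos (p/2)
  field_simp

private lemma lintegral_rpow_abs_le {α : Type*} [MeasurableSpace α] (μ : Measure α)
    {Z : α → ℝ} (hZ : Measurable Z) {p v : ℝ}
    (hp : 0 < p) (hv : 0 < v)
    (h₁ : ∫⁻ ω, ENNReal.ofReal (Real.exp (Real.sqrt (p / v) * Z ω)) ∂μ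
        ≤ ENNReal.ofReal (Real.exp (p / 2)))
    (h₂ : ∫⁻ ω, ENNReal.ofReal (Real.exp (-Real.sqrt (p / v) * Z ω)) ∂μ
        ≤ ENNReal.ofReal (Real.exp (p / 2))) :
    ∫⁻ ω, ENNReal.ofReal (|Z ω| ^ p) ∂μ
      ≤ ENNReal.ofReal ((2 ^ (1/p) * Real.sqrt (p * v / Real.exp 1)) ^ p) := by
  set t := Real.sqrt (p / v) with htdef
  have ht : 0 < t := Real.sqrt_pos.2 (by positivity)
  set C := (p / (Real.exp 1 * t)) ^ p with hCdef
  have hC : 0 ≤ C := by positivity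
  have hpt : ∀ ω, |Z ω| ^ p ≤ C * (Real.exp (t * Z ω) + Real.exp (-t * Z ω)) := by
    intro ω
    have h5 : (t * |Z ω|) ^ p ≤ (p / Real.exp 1) ^ p * Real.exp (t * |Z ω|) :=
      rpow_le_exp_aux hp (by positivity)
    have h6 : (t * |Z ω|) ^ p = t ^ p * |Z ω| ^ p :=
      Real.mul_rpow ht.le (abs_nonneg _)
    have h7 : Real.exp (t * |Z ω|) ≤ Real.exp (t * Z ω) + Real.exp (-t * Z ω) :=
      exp_abs_le ht.le
    have h8 : t ^ p * |Z ω| ^ p ≤ (p / Real.exp 1) ^ p * (Real.exp (t * Z ω) + Real.exp (-t * Z ω)) := by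
      calc t ^ p * |Z ω| ^ p ≤ (p / Real.exp 1) ^ p * Real.exp (t * |Z ω|) := by
            rw [← h6]; exact h5
        _ ≤ _ := by
            apply mul_le_mul_of_nonneg_left h7 (by positivity)
    have htp : 0 < t ^ p := Real.rpow_pos_of_pos ht p
    have h9 : C = (p / Real.exp 1) ^ p / t ^ p := by
      rw [hCdef, ← div_div, Real.div_rpow (by positivity) ht.le]
    rw [h9, div_mul_eq_mul_div, le_div_iff₀ htp]
    nlinarith [h8]
  calc ∫⁻ ω, ENNReal.ofReal (|Z ω| ^ p) ∂μ
      ≤ ∫⁻ ω, ENNReal.ofReal C * (ENNReal.ofReal (Real.exp (t * Z ω))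
          + ENNReal.ofReal (Real.exp (-t * Z ω))) ∂μ := by
        apply lintegral_mono
        intro ω
        dsimp only
        rw [← ENNReal.ofReal_add (Real.exp_pos _).le (Real.exp_pos _).le,
          ← ENNReal.ofReal_mul hC]
        exact ENNReal.ofReal_le_ofReal (hpt ω)
    _ = ENNReal.ofReal C * ((∫⁻ ω, ENNReal.ofReal (Real.exp (t * Z ω)) ∂μ)
          + ∫⁻ ω, ENNReal.ofReal (Real.exp (-t * Z ω)) ∂μ) := by
        rw [lintegral_const_mul _ (by
          exact ((hZ.const_mul t).exp.ennreal_ofReal.add (hZ.const_mul (-t)).exp.ennreal_ofReal)),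
          lintegral_add_left ((hZ.const_mul t).exp.ennreal_ofReal)]
    _ ≤ ENNReal.ofReal C * (ENNReal.ofReal (Real.exp (p/2)) + ENNReal.ofReal (Real.exp (p/2))) := by
        exact mul_le_mul_right (add_le_add h₁ h₂) _
    _ = ENNReal.ofReal (C * (2 * Real.exp (p/2))) := by
        rw [← ENNReal.ofReal_add (Real.exp_pos _).le (Real.exp_pos _).le, ← ENNReal.ofReal_mul hC]
        ring_nf
    _ = ENNReal.ofReal ((2 ^ (1/p) * Real.sqrt (p * v / Real.exp 1)) ^ p) := by
        rw [key_const_eq hp hv]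

private lemma lintegral_exp_gaussian (V : ℝ≥0) (hV : V ≠ 0) (t : ℝ) :
    ∫⁻ x, ENNReal.ofReal (Real.exp (t * x)) ∂(gaussianReal 0 V)
      = ENNReal.ofReal (Real.exp (t ^ 2 * V / 2)) := by
  have hVpos : (0:ℝ) < (V:ℝ) := by
    rw [NNReal.coe_pos, pos_iff_ne_zero]; exact hV
  rw [gaussianReal_of_var_ne_zero 0 hV,
    lintegral_withDensity_eq_lintegral_mul _ (measurable_gaussianPDF 0 V)
      (by exact (measurable_id.const_mul t).exp.ennreal_ofReal)]
  have hpt : ∀ x : ℝ, (gaussianPDF 0 V * fun x => ENNReal.ofReal (Real.exp (t * x))) x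
      = ENNReal.ofReal (Real.exp (t^2 * V / 2)) * gaussianPDF (t*V) V x := by
    intro x
    simp only [Pi.mul_apply, gaussianPDF]
    rw [← ENNReal.ofReal_mul (gaussianPDFReal_nonneg _ _ _),
      ← ENNReal.ofReal_mul (Real.exp_pos _).le]
    congr 1
    simp only [gaussianPDFReal]
    have hexp : Real.exp (-(x - 0) ^ 2 / (2 * (V:ℝ))) * Real.exp (t * x)
        = Real.exp (t ^ 2 * (V:ℝ) / 2) * Real.exp (-(x - t * (V:ℝ)) ^ 2 / (2 * (V:ℝ))) := by
      rw [← Real.exp_add, ← Real.exp_add]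
      congr 1
      field_simp
      ring
    calc (√(2 * Real.pi * (V:ℝ)))⁻¹ * Real.exp (-(x - 0) ^ 2 / (2 * (V:ℝ))) * Real.exp (t * x)
        = (√(2 * Real.pi * (V:ℝ)))⁻¹ * (Real.exp (-(x - 0) ^ 2 / (2 * (V:ℝ))) * Real.exp (t * x)) := by ring
      _ = (√(2 * Real.pi * (V:ℝ)))⁻¹ * (Real.exp (t ^ 2 * (V:ℝ) / 2) * Real.exp (-(x - t * (V:ℝ)) ^ 2 / (2 * (V:ℝ)))) := by rw [hexp]
      _ = Real.exp (t ^ 2 * (V:ℝ) / 2) * ((√(2 * Real.pi * (V:ℝ)))⁻¹ * Real.exp (-(x - t * (V:ℝ)) ^ 2 / (2 * (V:ℝ)))) := by ring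
  simp_rw [hpt]
  rw [lintegral_const_mul _ (measurable_gaussianPDF _ _), lintegral_gaussianPDF_eq_one _ hV,
    mul_one]

variable {Ω : Type*} [MeasurableSpace Ω] {P : Measure Ω} [IsProbabilityMeasure P]

private lemma integrable_of_abs_le {X : Ω → ℝ} (hX : Measurable X) {b : ℝ}
    (hXb : ∀ᵐ ω ∂P, |X ω| ≤ b) : Integrable X P :=
  ⟨hX.aestronglyMeasurable, HasFiniteIntegral.of_bounded (C := b)
    (hXb.mono fun ω h => by rwa [Real.norm_eq_abs])⟩

private lemma mgf_le_of_abs_le {X : Ω → ℝ} (hX : Measurable X) {b : ℝ} (hb : 0 ≤ b)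
    (hXb : ∀ᵐ ω ∂P, |X ω| ≤ b) (hX0 : ∫ ω, X ω ∂P = 0) (t : ℝ) :
    mgf X P t ≤ Real.exp (t ^ 2 * b ^ 2 / 2) := by
  rcases eq_or_lt_of_le hb with hb0 | hb0
  · -- b = 0, so X = 0 a.e.
    have hX0' : ∀ᵐ ω ∂P, X ω = 0 := hXb.mono fun ω h => by
      rw [← hb0] at h; exact abs_eq_zero.1 (le_antisymm h (abs_nonneg _))
    have : mgf X P t = 1 := by
      rw [mgf]
      rw [integral_congr_ae (hX0'.mono fun ω h => by rw [h, mul_zero, Real.exp_zero])]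
      simp
    rw [this]
    exact Real.one_le_exp (by positivity)
  · have hb' : (0:ℝ) < 2 * b := by linarith
    -- pointwise convexity bound
    have hpt : ∀ᵐ ω ∂P, Real.exp (t * X ω)
        ≤ (Real.exp (-(t*b)) / (2*b)) * (b - X ω) + (Real.exp (t*b) / (2*b)) * (b + X ω) := by
      refine hXb.mono fun ω h => ?_
      rcases abs_le.1 h with ⟨h1, h2⟩
      have hθ1 : (0:ℝ) ≤ (b - X ω) / (2*b) := by
        apply div_nonneg _ hb'.le; linarith
      have hθ2 : (0:ℝ) ≤ (b + X ω) / (2*b) := by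
        apply div_nonneg _ hb'.le; linarith
      have hθs : (b - X ω) / (2*b) + (b + X ω) / (2*b) = 1 := by field_simp; ring
      have hcvx := convexOn_exp.2 (Set.mem_univ (-(t*b))) (Set.mem_univ (t*b)) hθ1 hθ2 hθs
      simp only [smul_eq_mul] at hcvx
      have harg : (b - X ω) / (2*b) * (-(t*b)) + (b + X ω) / (2*b) * (t*b) = t * X ω := by
        field_simp
        ring
      rw [harg] at hcvx
      calc Real.exp (t * X ω) ≤ (b - X ω) / (2*b) * Real.exp (-(t*b))
            + (b + X ω) / (2*b) * Real.exp (t*b) := hcvx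
        _ = (Real.exp (-(t*b)) / (2*b)) * (b - X ω) + (Real.exp (t*b) / (2*b)) * (b + X ω) := by
            ring
    have hXint : Integrable X P := integrable_of_abs_le hX hXb
    have hint1 : Integrable (fun ω => Real.exp (t * X ω)) P := by
      refine ⟨((hX.const_mul t).exp).aestronglyMeasurable,
        HasFiniteIntegral.of_bounded (C := Real.exp (|t| * b)) (hXb.mono fun ω h => ?_)⟩
      rw [Real.norm_eq_abs, Real.abs_exp]
      apply Real.exp_le_exp.2
      calc t * X ω ≤ |t * X ω| := le_abs_self _
        _ = |t| * |X ω| := abs_mul _ _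
        _ ≤ |t| * b := by apply mul_le_mul_of_nonneg_left h (abs_nonneg t)
    have hint2 : Integrable (fun ω => (Real.exp (-(t*b)) / (2*b)) * (b - X ω)
        + (Real.exp (t*b) / (2*b)) * (b + X ω)) P := by
      apply Integrable.add
      · exact ((integrable_const b).sub hXint).const_mul _
      · exact ((integrable_const b).add hXint).const_mul _
    have := integral_mono_ae hint1 hint2 hpt
    rw [mgf]
    refine le_trans this ?_
    have hfun : (fun ω => Real.exp (-(t*b)) / (2*b) * (b - X ω)
        + Real.exp (t*b) / (2*b) * (b + X ω))
        = fun ω => Real.cosh (t*b) + (Real.exp (t*b) / (2*b) - Real.exp (-(t*b)) / (2*b)) * X ω := by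
      funext ω
      rw [Real.cosh_eq]
      field_simp
      ring
    rw [hfun, integral_add (integrable_const _) (hXint.const_mul _), integral_const_mul, hX0,
      mul_zero, add_zero, integral_const]
    simp only [probReal_univ, one_smul]
    calc Real.cosh (t*b) ≤ Real.exp ((t*b)^2 / 2) := Real.cosh_le_exp_half_sq _
      _ = Real.exp (t^2 * b^2 / 2) := by ring_nf

private lemma integrable_exp_mul_of_abs_le {S : Ω → ℝ} (hS : Measurable S) {c : ℝ}
    (hSb : ∀ᵐ ω ∂P, |S ω| ≤ c) (t : ℝ) :
    Integrable (fun ω => Real.exp (t * S ω)) P := by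
  refine ⟨((hS.const_mul t).exp).aestronglyMeasurable,
    HasFiniteIntegral.of_bounded (C := Real.exp (|t| * c)) (hSb.mono fun ω h => ?_)⟩
  rw [Real.norm_eq_abs, Real.abs_exp]
  apply Real.exp_le_exp.2
  calc t * S ω ≤ |t * S ω| := le_abs_self _
    _ = |t| * |S ω| := abs_mul _ _
    _ ≤ |t| * c := mul_le_mul_of_nonneg_left h (abs_nonneg t)

private lemma lintegral_rpow_abs_sum_le (X : ℕ → Ω → ℝ)
    (hindep : iIndepFun X P) (hmeas : ∀ i, Measurable (X i))
    (b : ℕ → ℝ) (hb : ∀ i, 0 ≤ b i) (hXb : ∀ i, ∀ᵐ ω ∂P, |X i ω| ≤ b i)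
    (hX0 : ∀ i, ∫ ω, X i ω ∂P = 0) (T : Finset ℕ) {p v : ℝ} (hp : 0 < p) (hv : 0 < v)
    (hsumsq : ∑ i ∈ T, (b i)^2 ≤ v) :
    ∫⁻ ω, ENNReal.ofReal (|∑ i ∈ T, X i ω| ^ p) ∂P
      ≤ ENNReal.ofReal ((2 ^ (1/p) * Real.sqrt (p * v / Real.exp 1)) ^ p) := by
  have hSmeas : Measurable (fun ω => ∑ i ∈ T, X i ω) :=
    Finset.measurable_sum T (fun i _ => hmeas i)
  have hball : ∀ᵐ ω ∂P, ∀ i ∈ T, |X i ω| ≤ b i :=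
    (ae_ball_iff T.countable_toSet).2 fun i _ => hXb i
  have hSb : ∀ᵐ ω ∂P, |∑ i ∈ T, X i ω| ≤ ∑ i ∈ T, b i :=
    hball.mono fun ω h =>
      (Finset.abs_sum_le_sum_abs _ _).trans (Finset.sum_le_sum h)
  have hmgf : ∀ t : ℝ, mgf (fun ω => ∑ i ∈ T, X i ω) P t ≤ Real.exp (t^2 * v / 2) := by
    intro t
    have heq : (fun ω => ∑ i ∈ T, X i ω) = ∑ i ∈ T, X i := by
      funext ω; simp
    rw [heq, hindep.mgf_sum hmeas T]
    calc ∏ i ∈ T, mgf (X i) P t ≤ ∏ i ∈ T, Real.exp (t^2 * (b i)^2 / 2) :=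
          Finset.prod_le_prod (fun i _ => mgf_nonneg)
            (fun i _ => mgf_le_of_abs_le (hmeas i) (hb i) (hXb i) (hX0 i) t)
      _ = Real.exp (∑ i ∈ T, t^2 * (b i)^2 / 2) := by rw [Real.exp_sum]
      _ ≤ Real.exp (t^2 * v / 2) := by
          apply Real.exp_le_exp.2
          have : ∑ i ∈ T, t^2 * (b i)^2 / 2 = t^2/2 * ∑ i ∈ T, (b i)^2 := by
            rw [Finset.mul_sum]
            exact Finset.sum_congr rfl fun i _ => by ring
          rw [this]
          have h2 : t^2/2 * ∑ i ∈ T, (b i)^2 ≤ t^2/2 * v :=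
            mul_le_mul_of_nonneg_left hsumsq (by positivity)
          linarith
  have hexp : ∀ t : ℝ, ∫⁻ ω, ENNReal.ofReal (Real.exp (t * ∑ i ∈ T, X i ω)) ∂P
      ≤ ENNReal.ofReal (Real.exp (t^2 * v / 2)) := by
    intro t
    rw [← ofReal_integral_eq_lintegral_ofReal
      (integrable_exp_mul_of_abs_le hSmeas hSb t)
      (Filter.Eventually.of_forall fun ω => (Real.exp_pos _).le)]
    exact ENNReal.ofReal_le_ofReal (hmgf t)
  have ht2 : (Real.sqrt (p/v))^2 * v / 2 = p / 2 := by
    rw [Real.sq_sqrt (by positivity : (0:ℝ) ≤ p / v)]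
    field_simp
  have ht2' : (-Real.sqrt (p/v))^2 * v / 2 = p / 2 := by rw [neg_sq]; exact ht2
  exact lintegral_rpow_abs_le P hSmeas hp hv
    (by have := hexp (Real.sqrt (p/v)); rwa [ht2] at this)
    (by have := hexp (-Real.sqrt (p/v)); rwa [ht2'] at this)

private lemma meas_orp {p : ℝ} : Measurable (fun x : ℝ => ENNReal.ofReal (|x| ^ p)) :=
  (measurable_abs.pow_const p |>.ennreal_ofReal)

private lemma Wp_le_moments (μ ν : Measure ℝ) [IsProbabilityMeasure μ] [IsProbabilityMeasure ν]
    {p : ℝ} (hp : 1 ≤ p) :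
    Wp p μ ν ≤ (∫⁻ x, ENNReal.ofReal (|x| ^ p) ∂μ) ^ (1/p)
      + (∫⁻ x, ENNReal.ofReal (|x| ^ p) ∂ν) ^ (1/p) := by
  have hp0 : (0:ℝ) < p := lt_of_lt_of_le one_pos hp
  have hmem : (μ.prod ν) ∈ {γ : Measure (ℝ × ℝ) | γ.map Prod.fst = μ ∧ γ.map Prod.snd = ν} := by
    constructor
    · rw [Measure.map_fst_prod]; simp
    · rw [Measure.map_snd_prod]; simp
  refine le_trans (biInf_le _ hmem) ?_
  have habs : ∀ x : ℝ, ENNReal.ofReal (|x| ^ p) = ENNReal.ofReal |x| ^ p := fun x =>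
    (ENNReal.ofReal_rpow_of_nonneg (abs_nonneg x) hp0.le).symm
  calc (∫⁻ z, ENNReal.ofReal (|z.1 - z.2| ^ p) ∂(μ.prod ν)) ^ (1/p)
      ≤ (∫⁻ z, ((fun z : ℝ × ℝ => ENNReal.ofReal |z.1|) + fun z : ℝ × ℝ => ENNReal.ofReal |z.2|) z
          ^ p ∂(μ.prod ν)) ^ (1/p) := by
        apply ENNReal.rpow_le_rpow _ (by positivity)
        apply lintegral_mono
        intro z
        dsimp only [Pi.add_apply]
        rw [habs, ← ENNReal.ofReal_add (abs_nonneg _) (abs_nonneg _)]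
        exact ENNReal.rpow_le_rpow (ENNReal.ofReal_le_ofReal (abs_sub _ _)) hp0.le
    _ ≤ (∫⁻ z, ENNReal.ofReal |z.1| ^ p ∂(μ.prod ν)) ^ (1/p)
        + (∫⁻ z, ENNReal.ofReal |z.2| ^ p ∂(μ.prod ν)) ^ (1/p) :=
        ENNReal.lintegral_Lp_add_le
          ((measurable_fst.norm.ennreal_ofReal).aemeasurable)
          ((measurable_snd.norm.ennreal_ofReal).aemeasurable) hp
    _ = (∫⁻ x, ENNReal.ofReal (|x| ^ p) ∂μ) ^ (1/p)
        + (∫⁻ x, ENNReal.ofReal (|x| ^ p) ∂ν) ^ (1/p) := by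
        simp_rw [← habs]
        congr 1
        · conv_rhs => rw [← hmem.1]
          rw [lintegral_map meas_orp measurable_fst]
        · conv_rhs => rw [← hmem.2]
          rw [lintegral_map meas_orp measurable_snd]

private lemma coeff_sq {p : ℝ} (hp : 2 ≤ p) :
    (2 ^ (1/p) * Real.sqrt (p / Real.exp 1)) ^ 2 ≤ 2 * p / Real.exp 1 := by
  have hp0 : (0:ℝ) < p := by linarith
  have h3 : Real.sqrt (p / Real.exp 1) ^ 2 = p / Real.exp 1 :=
    Real.sq_sqrt (by positivity)
  have h4 : ((2:ℝ) ^ (1/p)) ^ 2 ≤ 2 := by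
    have e1 : ((2:ℝ) ^ (1/p)) ^ 2 = 2 ^ (2/p) := by
      rw [← Real.rpow_natCast ((2:ℝ)^(1/p)) 2, ← Real.rpow_mul (by norm_num)]
      norm_num
      congr 1
      ring
    rw [e1]
    calc (2:ℝ) ^ (2/p) ≤ 2 ^ (1:ℝ) := by
          apply Real.rpow_le_rpow_of_exponent_le (by norm_num)
          rw [div_le_one hp0]; linarith
      _ = 2 := Real.rpow_one 2
  have h5 : (0:ℝ) ≤ p / Real.exp 1 := by positivity
  calc (2 ^ (1/p) * Real.sqrt (p / Real.exp 1)) ^ 2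
      = ((2:ℝ) ^ (1/p)) ^ 2 * (p / Real.exp 1) := by rw [mul_pow, h3]
    _ ≤ 2 * (p / Real.exp 1) := mul_le_mul_of_nonneg_right h4 h5
    _ = 2 * p / Real.exp 1 := by ring

private lemma arith_main {p σ R : ℝ} (hp : 2 ≤ p) (hσ : 0 < σ) (hR : 2*σ ≤ R) :
    2 ^ (1/p) * Real.sqrt (p / Real.exp 1) * (R + σ)
      ≤ Real.sqrt (p - 1) * (σ + Real.sqrt 2 * R) := by
  have hcsq : (2 ^ (1/p) * Real.sqrt (p / Real.exp 1)) ^ 2 ≤ 2 * p / Real.exp 1 := coeff_sq hp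
  have hc0 : (0:ℝ) ≤ 2 ^ (1/p) * Real.sqrt (p / Real.exp 1) := by positivity
  have hw2 : Real.sqrt (p - 1) ^ 2 = p - 1 := Real.sq_sqrt (by linarith)
  have hw0 : (0:ℝ) ≤ Real.sqrt (p - 1) := Real.sqrt_nonneg _
  have hs2 : Real.sqrt 2 ^ 2 = 2 := Real.sq_sqrt (by norm_num)
  have hs0 : (0:ℝ) ≤ Real.sqrt 2 := Real.sqrt_nonneg _
  have he : 2.718 ≤ Real.exp 1 := by
    have := Real.exp_one_gt_d9
    linarith
  have he0 : 0 < Real.exp 1 := Real.exp_pos 1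
  set c := 2 ^ (1/p) * Real.sqrt (p / Real.exp 1) with hcdef
  set w := Real.sqrt (p - 1) with hwdef
  set s := Real.sqrt 2 with hsdef
  clear_value c w s
  have hs1 : 1.414 ≤ s := by nlinarith
  have hep : 2 * p / Real.exp 1 ≤ 2 * p / 2.718 := by
    apply div_le_div_of_nonneg_left (by linarith) (by norm_num) he
  -- claim A : c ≤ s * w
  have hA : c ≤ s * w := by
    have h6 : c ^ 2 ≤ (s * w) ^ 2 := by
      have : 2 * p / 2.718 ≤ 2 * (p - 1) := by
        rw [div_le_iff₀ (by norm_num : (0:ℝ) < 2.718)]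
        nlinarith
      nlinarith
    nlinarith [mul_nonneg hs0 hw0]
  -- claim B : 3 * c ≤ (1 + 2*s) * w
  have hB : 3 * c ≤ (1 + 2*s) * w := by
    have h7 : (3*c) ^ 2 ≤ ((1 + 2*s) * w) ^ 2 := by
      have h9 : (14.65:ℝ) ≤ (1 + 2*s)^2 := by nlinarith
      have h11 : 9 * (2 * p / 2.718) ≤ 14.65 * (p - 1) := by
        rw [show (9:ℝ) * (2*p/2.718) = 18*p/2.718 by ring,
          div_le_iff₀ (by norm_num : (0:ℝ) < 2.718)]
        nlinarith
      nlinarith [sq_nonneg w, hw2, mul_le_mul_of_nonneg_right h9 (show (0:ℝ) ≤ p - 1 by linarith)]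
    nlinarith [mul_nonneg (by linarith : (0:ℝ) ≤ 1 + 2*s) hw0]
  calc c * (R + σ) = 3*c*σ + c*(R - 2*σ) := by ring
    _ ≤ (1+2*s)*w*σ + s*w*(R-2*σ) := by
        apply add_le_add
        · exact mul_le_mul_of_nonneg_right hB hσ.le
        · exact mul_le_mul_of_nonneg_right hA (by linarith)
    _ = w * (σ + s * R) := by ring

private lemma card_filter_lt {n k : ℕ} (hk : k ≤ n) :
    ((Finset.range n).filter (fun j => j < k)).card = k := by
  have h : (Finset.range n).filter (fun j => j < k) = Finset.range k := by
    ext j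
    simp only [Finset.mem_filter, Finset.mem_range]
    omega
  rw [h, Finset.card_range]

private lemma card_filter_fin_lt {n k : ℕ} (hk : k ≤ n) :
    ((Finset.univ : Finset (Fin n)).filter (fun i : Fin n => (i:ℕ) < k)).card = k := by
  have h : Finset.image (fun i : Fin n => (i:ℕ))
      ((Finset.univ : Finset (Fin n)).filter (fun i : Fin n => (i:ℕ) < k)) = Finset.range k := by
    ext a
    simp only [Finset.mem_image, Finset.mem_filter, Finset.mem_univ, true_and, Finset.mem_range]
    constructor
    · rintro ⟨i, hi, rfl⟩; exact hi
    · intro ha; exact ⟨⟨a, lt_of_lt_of_le ha hk⟩, ha, rfl⟩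
  rw [← Finset.card_image_of_injective _ Fin.val_injective, h, Finset.card_range]

private lemma card_filter_perm {n k : ℕ} (hk : k ≤ n) (π : Equiv.Perm (Fin n))
    [DecidablePred fun j : ℕ => ∃ h : j < n, ((π.symm ⟨j, h⟩ : Fin n) : ℕ) < k] :
    ((Finset.range n).filter
      (fun j : ℕ => ∃ h : j < n, ((π.symm ⟨j, h⟩ : Fin n) : ℕ) < k)).card = k := by
  classical
  have h1 : (Finset.range n).filter
        (fun j : ℕ => ∃ h : j < n, ((π.symm ⟨j, h⟩ : Fin n) : ℕ) < k)
      = Finset.image (fun i : Fin n => (i:ℕ))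
        ((Finset.univ : Finset (Fin n)).filter (fun j : Fin n => ((π.symm j : Fin n) : ℕ) < k)) := by
    ext a
    simp only [Finset.mem_filter, Finset.mem_range, Finset.mem_image, Finset.mem_univ, true_and]
    constructor
    · rintro ⟨ha, h, hlt⟩
      exact ⟨⟨a, h⟩, hlt, rfl⟩
    · rintro ⟨i, hlt, rfl⟩
      exact ⟨i.isLt, i.isLt, by simpa using hlt⟩
  rw [h1, Finset.card_image_of_injective _ Fin.val_injective]
  have h2 : ((Finset.univ : Finset (Fin n)).filter
        (fun j : Fin n => ((π.symm j : Fin n) : ℕ) < k)).card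
      = ((Finset.univ : Finset (Fin n)).filter (fun i : Fin n => (i:ℕ) < k)).card := by
    apply Finset.card_equiv π.symm
    intro i
    simp
  rw [h2, card_filter_fin_lt hk]

private lemma sum_sq_coeff {n k : ℕ} (hk : k ≤ n) (hn : 0 < n) (Q : ℕ → Prop) [DecidablePred Q]
    (hQ : ((Finset.range n).filter Q).card = k) :
    ∑ j ∈ Finset.range n, ((if Q j then (1:ℝ) else 0) - k/n)^2 = k*((n:ℝ)-k)/n := by
  have hsplit : ∀ j, ((if Q j then (1:ℝ) else 0) - (k:ℝ)/n)^2
      = (if Q j then ((1:ℝ)-(k:ℝ)/n)^2 else ((k:ℝ)/n)^2) := by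
    intro j
    split_ifs <;> ring
  rw [Finset.sum_congr rfl fun j _ => hsplit j, Finset.sum_ite, Finset.sum_const,
    Finset.sum_const, hQ]
  have hcard : ((Finset.range n).filter (fun j => ¬ Q j)).card = n - k := by
    have := Finset.card_filter_add_card_filter_not (s := Finset.range n) (p := Q)
    rw [Finset.card_range, hQ] at this
    omega
  rw [hcard, nsmul_eq_mul, nsmul_eq_mul]
  have hn' : (n:ℝ) ≠ 0 := Nat.cast_ne_zero.2 hn.ne'
  have hnk : ((n - k : ℕ) : ℝ) = (n:ℝ) - k := by
    push_cast [hk]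
    ring
  rw [hnk]
  field_simp
  ring

private lemma two_sigma_le_R {Ω : Type*} [MeasurableSpace Ω] (P : Measure Ω)
    [IsProbabilityMeasure P] {Y0 : Ω → ℝ} (hY : Measurable Y0) {R σ : ℝ} (hR : 0 < R)
    (hσ : 0 < σ) (hb : ∀ᵐ ω ∂P, Y0 ω ∈ Set.Icc 0 R) (hvar : variance Y0 P = σ^2) :
    2*σ ≤ R := by
  have habs : ∀ᵐ ω ∂P, ‖Y0 ω‖ ≤ R := hb.mono fun ω h => by
    rw [Real.norm_eq_abs, abs_le]
    exact ⟨by linarith [h.1], h.2⟩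
  have hmem2 : MemLp Y0 2 P := MemLp.of_bound hY.aestronglyMeasurable R habs
  have hint : Integrable Y0 P := ⟨hY.aestronglyMeasurable, HasFiniteIntegral.of_bounded habs⟩
  have hint2 : Integrable (fun ω => Y0 ω ^ 2) P := by
    refine ⟨(hY.pow_const 2).aestronglyMeasurable,
      HasFiniteIntegral.of_bounded (C := R^2) (hb.mono fun ω h => ?_)⟩
    rw [Real.norm_eq_abs, abs_pow]
    apply pow_le_pow_left₀ (abs_nonneg _)
    rw [abs_le]; exact ⟨by linarith [h.1], h.2⟩
  have hmono : ∫ ω, Y0 ω ^ 2 ∂P ≤ ∫ ω, R * Y0 ω ∂P := by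
    apply integral_mono_ae hint2 (hint.const_mul R)
    refine hb.mono fun ω h => ?_
    dsimp only
    nlinarith [h.1, h.2]
  have hm0 : 0 ≤ ∫ ω, Y0 ω ∂P := integral_nonneg_of_ae (hb.mono fun ω h => h.1)
  rw [integral_const_mul] at hmono
  have hvd := variance_eq_sub hmem2
  rw [hvar] at hvd
  have hsq : σ^2 ≤ R * ∫ ω, Y0 ω ∂P - (∫ ω, Y0 ω ∂P)^2 := by
    rw [hvd]
    simp only [Pi.pow_apply]
    linarith [hmono]
  nlinarith [hsq, hm0, sq_nonneg (R - 2 * ∫ ω, Y0 ω ∂P)]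

private lemma final_real_arith {p σ R q : ℝ} (hp : 2 ≤ p) (hσ : 0 < σ) (hR2 : 2*σ ≤ R)
    (hq : 0 ≤ q) :
    2^(1/p) * Real.sqrt (p * (R^2*q) / Real.exp 1)
      + 2^(1/p) * Real.sqrt (p * (σ^2*q) / Real.exp 1)
      ≤ Real.sqrt (p-1) * Real.sqrt (σ^2*q) * (1 + Real.sqrt 2 * R / σ) := by
  have hR : 0 < R := by linarith
  have hsq : ∀ a : ℝ, 0 < a → Real.sqrt (p * (a^2*q) / Real.exp 1)
      = a * Real.sqrt (p / Real.exp 1 * q) := by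
    intro a ha
    rw [show p * (a^2*q) / Real.exp 1 = a^2 * (p / Real.exp 1 * q) by ring,
      Real.sqrt_mul (sq_nonneg a), Real.sqrt_sq ha.le]
  rw [hsq R hR, hsq σ hσ]
  have hsm : Real.sqrt (p / Real.exp 1 * q) = Real.sqrt (p / Real.exp 1) * Real.sqrt q :=
    Real.sqrt_mul (by positivity) q
  have hs2 : Real.sqrt (σ^2*q) = σ * Real.sqrt q := by
    rw [Real.sqrt_mul (sq_nonneg σ), Real.sqrt_sq hσ.le]
  rw [hsm, hs2]
  have harith := arith_main hp hσ hR2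
  have hq0 : 0 ≤ Real.sqrt q := Real.sqrt_nonneg q
  have hmul := mul_le_mul_of_nonneg_right harith hq0
  calc 2^(1/p) * (R * (Real.sqrt (p / Real.exp 1) * Real.sqrt q))
        + 2^(1/p) * (σ * (Real.sqrt (p / Real.exp 1) * Real.sqrt q))
      = (2 ^ (1/p) * Real.sqrt (p / Real.exp 1) * (R + σ)) * Real.sqrt q := by ring
    _ ≤ (Real.sqrt (p-1) * (σ + Real.sqrt 2 * R)) * Real.sqrt q := hmul
    _ = Real.sqrt (p-1) * (σ * Real.sqrt q) * (1 + Real.sqrt 2 * R / σ) := by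
        field_simp

private lemma rpow_inv_le {X : ℝ≥0∞} {A p : ℝ} (hp : 0 < p) (hA : 0 ≤ A)
    (hX : X ≤ ENNReal.ofReal (A ^ p)) : X ^ (1/p) ≤ ENNReal.ofReal A := by
  calc X ^ (1/p) ≤ (ENNReal.ofReal (A ^ p)) ^ (1/p) :=
        ENNReal.rpow_le_rpow hX (by positivity)
    _ = ((ENNReal.ofReal A) ^ p) ^ (1/p) := by
        rw [ENNReal.ofReal_rpow_of_nonneg hA hp.le]
    _ = (ENNReal.ofReal A) ^ (p * (1/p)) := by rw [← ENNReal.rpow_mul]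
    _ = ENNReal.ofReal A := by
        rw [mul_one_div, div_self hp.ne', ENNReal.rpow_one]

private lemma permStat_eq {n k : ℕ} (x : Fin n → ℝ) (π : Equiv.Perm (Fin n)) :
    permStat n k x π
      = ∑ j : Fin n, ((if ((π.symm j : Fin n) : ℕ) < k then (1:ℝ) else 0) - (k:ℝ)/n) * x j := by
  classical
  have h1 : ∑ i : Fin n, (if (i:ℕ) < k then x (π i) else 0)
      = ∑ j : Fin n, (if ((π.symm j : Fin n) : ℕ) < k then x j else 0) := by
    rw [← Equiv.sum_comp π (fun j => if ((π.symm j : Fin n) : ℕ) < k then x j else 0)]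
    apply Finset.sum_congr rfl
    intro i _
    simp [Equiv.symm_apply_apply]
  rw [permStat, h1]
  rw [Finset.mul_sum, ← Finset.sum_sub_distrib]
  apply Finset.sum_congr rfl
  intro j _
  split_ifs <;> ring

private lemma core_bound {Ω : Type*} [MeasurableSpace Ω] (P : Measure Ω)
    [IsProbabilityMeasure P] (Y : ℕ → Ω → ℝ) (hmeas : ∀ i, Measurable (Y i))
    (hindep : iIndepFun Y P)
    {R m : ℝ} (hR : 0 < R) (hIcc : ∀ i, ∀ᵐ ω ∂P, Y i ω ∈ Set.Icc 0 R)
    (hYint : ∀ i, Integrable (Y i) P)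
    (hEY : ∀ i, ∫ ω, Y i ω ∂P = m) (hm : m ∈ Set.Icc 0 R)
    (c : ℕ → ℝ) (n : ℕ) {p q : ℝ} (hp : 0 < p) (hq : 0 < q)
    (hcsum : ∑ j ∈ Finset.range n, (c j)^2 ≤ q) :
    ∫⁻ ω, ENNReal.ofReal (|∑ j ∈ Finset.range n, c j * (Y j ω - m)| ^ p) ∂P
      ≤ ENNReal.ofReal ((2 ^ (1/p) * Real.sqrt (p * (R^2*q) / Real.exp 1)) ^ p) := by
  have hXmeas : ∀ j, Measurable (fun ω => c j * (Y j ω - m)) :=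
    fun j => ((hmeas j).sub_const m).const_mul (c j)
  have hXindep : iIndepFun (fun j ω => c j * (Y j ω - m)) P := by
    exact hindep.comp (fun j y => c j * (y - m))
      (fun j => (measurable_id.sub_const m).const_mul (c j))
  have hXb : ∀ j, ∀ᵐ ω ∂P, |c j * (Y j ω - m)| ≤ |c j| * R := by
    intro j
    refine (hIcc j).mono fun ω h => ?_
    rw [abs_mul]
    apply mul_le_mul_of_nonneg_left _ (abs_nonneg _)
    rw [abs_le]
    constructor
    · have := h.1; have := hm.2; linarith
    · have := h.2; have := hm.1; linarith
  have hX0 : ∀ j, ∫ ω, c j * (Y j ω - m) ∂P = 0 := by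
    intro j
    rw [integral_const_mul, integral_sub (hYint j) (integrable_const m), hEY j, integral_const]
    simp
  have hbsum : ∑ j ∈ Finset.range n, (|c j| * R)^2 ≤ R^2 * q := by
    have h1 : ∀ j, (|c j| * R)^2 = (c j)^2 * R^2 := fun j => by
      rw [mul_pow, sq_abs]
    rw [Finset.sum_congr rfl fun j _ => h1 j, ← Finset.sum_mul]
    calc (∑ j ∈ Finset.range n, (c j)^2) * R^2 ≤ q * R^2 :=
          mul_le_mul_of_nonneg_right hcsum (sq_nonneg R)
      _ = R^2 * q := by ring
  exact lintegral_rpow_abs_sum_le (fun j ω => c j * (Y j ω - m)) hXindep hXmeas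
    (fun j => |c j| * R) (fun j => by positivity) hXb hX0 (Finset.range n) hp
    (by positivity) hbsum

end AuxLemmas


/-- **trivial conditional Wasserstein bound.** Under Assumption (R,σ),
for `1 ≤ k < n` and `p ≥ 2`, with `σ_{n,k}² = σ² k(n−k)/n`:
`(E[W_p(ν_{(X_1,…,X_n),k}, N(0,σ_{n,k}²))^p])^{1/p} ≤ √(p−1) σ_{n,k} (1 + √2 R/σ)`,
and also `W_p(W_k, N(0,σ_{n,k}²)) ≤ √(p−1) σ_{n,k} (1 + √2 R/σ)`. -/
theorem conditional_wasserstein_trivial_bound {Ω : Type*} [MeasurableSpace Ω]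
    (P : Measure Ω) [IsProbabilityMeasure P]
    (R σ : ℝ) (hR : 0 < R) (hσ : 0 < σ) (Y : ℕ → Ω → ℝ)
    (hmeas : ∀ i, Measurable (Y i))
    (hindep : iIndepFun Y P)
    (hident : ∀ i, P.map (Y i) = P.map (Y 0))
    (hbound : ∀ᵐ ω ∂P, Y 0 ω ∈ Set.Icc 0 R)
    (hvar : variance (Y 0) P = σ ^ 2)
    (n k : ℕ) (hk : 1 ≤ k) (hkn : k < n) (p : ℝ) (hp : 2 ≤ p) :
    (∫⁻ ω, (Wp p (permLaw n k (fun i : Fin n => Y (i : ℕ) ω - ∫ x, Y 0 x ∂P))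
          (gaussianReal 0 (Real.toNNReal (σ ^ 2 * k * ((n : ℝ) - k) / n)))) ^ p ∂P)
        ^ (1 / p)
      ≤ ENNReal.ofReal (Real.sqrt (p - 1)
          * Real.sqrt (σ ^ 2 * k * ((n : ℝ) - k) / n) * (1 + Real.sqrt 2 * R / σ)) ∧
    Wp p (P.map (fun ω => (∑ i ∈ Finset.range k, (Y i ω - ∫ x, Y 0 x ∂P))
            - (k : ℝ) / (n : ℝ) * ∑ i ∈ Finset.range n, (Y i ω - ∫ x, Y 0 x ∂P)))
        (gaussianReal 0 (Real.toNNReal (σ ^ 2 * k * ((n : ℝ) - k) / n)))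
      ≤ ENNReal.ofReal (Real.sqrt (p - 1)
          * Real.sqrt (σ ^ 2 * k * ((n : ℝ) - k) / n) * (1 + Real.sqrt 2 * R / σ)) := by
  classical
  have hn0 : 0 < n := lt_of_le_of_lt (Nat.zero_le k) hkn
  have hkn' : (k:ℝ) < n := by exact_mod_cast hkn
  have hk1 : (1:ℝ) ≤ k := by exact_mod_cast hk
  have hn0' : (0:ℝ) < n := by exact_mod_cast hn0
  have hp0 : (0:ℝ) < p := by linarith
  have hp1 : (1:ℝ) ≤ p := by linarith
  set m := ∫ x, Y 0 x ∂P with hmdef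
  set Vr : ℝ := σ ^ 2 * k * ((n : ℝ) - k) / n with hVrdef
  set q : ℝ := (k:ℝ) * ((n:ℝ) - k) / n with hqdef
  have hq : 0 < q := by
    rw [hqdef]
    exact div_pos (mul_pos (by linarith : (0:ℝ) < k) (by linarith : (0:ℝ) < (n:ℝ)-k)) hn0'
  have hVr : 0 < Vr := by
    rw [hVrdef]
    exact div_pos (mul_pos (mul_pos (pow_pos hσ 2) (by linarith : (0:ℝ) < k))
      (by linarith : (0:ℝ) < (n:ℝ)-k)) hn0'
  have hVrq : Vr = σ^2 * q := by rw [hVrdef, hqdef]; ring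
  have hVcoe : ((Real.toNNReal Vr) : ℝ) = Vr := Real.coe_toNNReal _ hVr.le
  have hVne : Real.toNNReal Vr ≠ 0 := by
    simp only [ne_eq, Real.toNNReal_eq_zero, not_le]
    exact hVr
  -- properties of the Y i
  have hIcc : ∀ i, ∀ᵐ ω ∂P, Y i ω ∈ Set.Icc 0 R := by
    intro i
    have hs : MeasurableSet (Set.Icc (0:ℝ) R) := measurableSet_Icc
    have h0 : P.map (Y i) (Set.Icc 0 R)ᶜ = 0 := by
      rw [hident i, Measure.map_apply (hmeas 0) hs.compl]
      exact ae_iff.1 hbound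
    rw [ae_iff]
    have h2 : {ω | ¬ Y i ω ∈ Set.Icc 0 R} = Y i ⁻¹' (Set.Icc 0 R)ᶜ := rfl
    rw [h2, ← Measure.map_apply (hmeas i) hs.compl]
    exact h0
  have habs : ∀ i, ∀ᵐ ω ∂P, ‖Y i ω‖ ≤ R := fun i => (hIcc i).mono fun ω h => by
    rw [Real.norm_eq_abs, abs_le]
    exact ⟨by linarith [h.1], h.2⟩
  have hYint : ∀ i, Integrable (Y i) P := fun i =>
    ⟨(hmeas i).aestronglyMeasurable, HasFiniteIntegral.of_bounded (habs i)⟩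
  have hEY : ∀ i, ∫ ω, Y i ω ∂P = m := by
    intro i
    have h : ∫ y, y ∂(P.map (Y i)) = ∫ ω, Y i ω ∂P :=
      integral_map (hmeas i).aemeasurable aestronglyMeasurable_id
    have h0 : ∫ y, y ∂(P.map (Y 0)) = ∫ x, Y 0 x ∂P :=
      integral_map (hmeas 0).aemeasurable aestronglyMeasurable_id
    rw [hmdef, ← h, hident i, h0]
  have hm : m ∈ Set.Icc 0 R := by
    constructor
    · exact integral_nonneg_of_ae (hbound.mono fun ω h => h.1)
    · calc m ≤ ∫ _, R ∂P :=
            integral_mono_ae (hYint 0) (integrable_const R) (hbound.mono fun ω h => h.2)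
        _ = R := by simp
  have h2σ : 2*σ ≤ R := two_sigma_le_R P (hmeas 0) hR hσ hbound hvar
  -- the two constants
  set A1 : ℝ := 2^(1/p) * Real.sqrt (p * (R^2*q) / Real.exp 1) with hA1
  set A2 : ℝ := 2^(1/p) * Real.sqrt (p * (σ^2*q) / Real.exp 1) with hA2
  have hA1' : 0 ≤ A1 := by rw [hA1]; positivity
  have hA2' : 0 ≤ A2 := by rw [hA2]; positivity
  have hT : A1 + A2 ≤ Real.sqrt (p - 1) * Real.sqrt Vr * (1 + Real.sqrt 2 * R / σ) := by
    rw [hA1, hA2, hVrq]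
    exact final_real_arith hp hσ h2σ hq.le
  -- Gaussian moment bound
  have hgauss : ∫⁻ x, ENNReal.ofReal (|x| ^ p) ∂(gaussianReal 0 (Real.toNNReal Vr))
      ≤ ENNReal.ofReal (A2 ^ p) := by
    have hexp : ∀ t : ℝ,
        ∫⁻ x, ENNReal.ofReal (Real.exp (t * x)) ∂(gaussianReal 0 (Real.toNNReal Vr))
          = ENNReal.ofReal (Real.exp (t^2 * Vr / 2)) := by
      intro t
      rw [lintegral_exp_gaussian _ hVne t, hVcoe]
    have ht2 : (Real.sqrt (p / Vr))^2 * Vr / 2 = p / 2 := by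
      rw [Real.sq_sqrt (by positivity : (0:ℝ) ≤ p / Vr)]
      field_simp
    have ht2' : (-Real.sqrt (p / Vr))^2 * Vr / 2 = p / 2 := by rw [neg_sq]; exact ht2
    have h1 := hexp (Real.sqrt (p / Vr))
    have h2 := hexp (-Real.sqrt (p / Vr))
    rw [ht2] at h1
    rw [ht2'] at h2
    have := lintegral_rpow_abs_le (gaussianReal 0 (Real.toNNReal Vr))
      (measurable_id : Measurable (fun x : ℝ => x)) hp0 hVr h1.le h2.le
    refine le_trans this (le_of_eq ?_)
    congr 2
    rw [hA2, hVrq]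
  -- generic combination step
  have hcombine : ∀ X1 X2 : ℝ≥0∞, X1 ≤ ENNReal.ofReal (A1 ^ p) →
      X2 ≤ ENNReal.ofReal (A2 ^ p) →
      X1 ^ (1/p) + X2 ^ (1/p) ≤ ENNReal.ofReal (Real.sqrt (p - 1)
        * Real.sqrt Vr * (1 + Real.sqrt 2 * R / σ)) := by
    intro X1 X2 h1 h2
    calc X1 ^ (1/p) + X2 ^ (1/p) ≤ ENNReal.ofReal A1 + ENNReal.ofReal A2 :=
          add_le_add (rpow_inv_le hp0 hA1' h1) (rpow_inv_le hp0 hA2' h2)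
      _ = ENNReal.ofReal (A1 + A2) := (ENNReal.ofReal_add hA1' hA2').symm
      _ ≤ _ := ENNReal.ofReal_le_ofReal hT
  constructor
  · -- Part 1: conditional bound
    haveI hQP : IsProbabilityMeasure (uniformOn (Set.univ : Set (Equiv.Perm (Fin n)))) :=
      uniformOn_isProbabilityMeasure Set.finite_univ Set.univ_nonempty
    haveI : MeasurableSingletonClass (Equiv.Perm (Fin n)) :=
      ⟨fun _ => MeasurableSpace.measurableSet_top⟩
    haveI hPL : ∀ x : Fin n → ℝ, IsProbabilityMeasure (permLaw n k x) := fun x =>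
      Measure.isProbabilityMeasure_map (measurable_from_top.aemeasurable)
    set cf : Equiv.Perm (Fin n) → ℕ → ℝ := fun π j =>
      (if (∃ h : j < n, ((π.symm ⟨j, h⟩ : Fin n) : ℕ) < k) then (1:ℝ) else 0) - (k:ℝ)/n
      with hcf
    have hps : ∀ (ω : Ω) (π : Equiv.Perm (Fin n)),
        permStat n k (fun i : Fin n => Y (i : ℕ) ω - m) π
          = ∑ j ∈ Finset.range n, cf π j * (Y j ω - m) := by
      intro ω π
      rw [permStat_eq, ← Fin.sum_univ_eq_sum_range (fun j => cf π j * (Y j ω - m)) n]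
      apply Finset.sum_congr rfl
      intro j _
      have hiff : (∃ h : (j:ℕ) < n, ((π.symm ⟨(j:ℕ), h⟩ : Fin n) : ℕ) < k)
          ↔ ((π.symm j : Fin n) : ℕ) < k := by
        constructor
        · rintro ⟨h, hlt⟩
          simpa using hlt
        · intro h
          exact ⟨j.isLt, by simpa using h⟩
      have hco : cf π (j:ℕ) = (if ((π.symm j : Fin n) : ℕ) < k then (1:ℝ) else 0) - (k:ℝ)/n := by
        rw [hcf]
        dsimp only
        rw [if_congr hiff rfl rfl]
      rw [hco]
    have hcsumπ : ∀ π : Equiv.Perm (Fin n), ∑ j ∈ Finset.range n, (cf π j)^2 ≤ q := by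
      intro π
      rw [hcf]
      dsimp only
      rw [sum_sq_coeff hkn.le hn0 _ (card_filter_perm hkn.le π), hqdef]
    set G : Equiv.Perm (Fin n) → Ω → ℝ≥0∞ := fun π ω =>
      ENNReal.ofReal (|permStat n k (fun i : Fin n => Y (i : ℕ) ω - m) π| ^ p) with hG
    have hGeq : ∀ π, G π = fun ω =>
        ENNReal.ofReal (|∑ j ∈ Finset.range n, cf π j * (Y j ω - m)| ^ p) := by
      intro π
      funext ω
      rw [hG]
      dsimp only
      rw [hps ω π]
    have hGmeas : ∀ π, Measurable (G π) := by
      intro π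
      rw [hGeq π]
      exact meas_orp.comp (Finset.measurable_sum _ fun j _ => ((hmeas j).sub_const m).const_mul _)
    have hGbound : ∀ π, ∫⁻ ω, G π ω ∂P ≤ ENNReal.ofReal (A1 ^ p) := by
      intro π
      rw [hGeq π, hA1]
      exact core_bound P Y hmeas hindep hR hIcc hYint hEY hm _ n hp0 hq (hcsumπ π)
    set Q := uniformOn (Set.univ : Set (Equiv.Perm (Fin n))) with hQdef
    set F : Ω → ℝ≥0∞ := fun ω => ∑ π : Equiv.Perm (Fin n), G π ω * Q {π} with hF
    have hFmeas : Measurable F := by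
      rw [hF]
      exact Finset.measurable_sum _ fun π _ => (hGmeas π).mul_const _
    have haeq : ∀ ω : Ω, (∫⁻ x, ENNReal.ofReal (|x| ^ p)
        ∂(permLaw n k (fun i : Fin n => Y (i : ℕ) ω - m))) = F ω := by
      intro ω
      rw [permLaw, lintegral_map meas_orp measurable_from_top, lintegral_fintype, hF]
    have hFint : ∫⁻ ω, F ω ∂P ≤ ENNReal.ofReal (A1 ^ p) := by
      calc ∫⁻ ω, F ω ∂P
          = ∑ π : Equiv.Perm (Fin n), ∫⁻ ω, G π ω * Q {π} ∂P := by
            rw [hF]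
            exact lintegral_finset_sum _ (fun π _ => (hGmeas π).mul_const _)
        _ = ∑ π : Equiv.Perm (Fin n), (∫⁻ ω, G π ω ∂P) * Q {π} :=
            Finset.sum_congr rfl fun π _ => lintegral_mul_const _ (hGmeas π)
        _ ≤ ∑ π : Equiv.Perm (Fin n), ENNReal.ofReal (A1 ^ p) * Q {π} :=
            Finset.sum_le_sum fun π _ => mul_le_mul_left (hGbound π) _
        _ = ENNReal.ofReal (A1 ^ p) * ∑ π : Equiv.Perm (Fin n), Q {π} := by
            rw [Finset.mul_sum]
        _ = ENNReal.ofReal (A1 ^ p) := by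
            have hsum1 : ∑ π : Equiv.Perm (Fin n), Q {π} = 1 := by
              have h := lintegral_fintype (μ := Q) (fun _ => (1:ℝ≥0∞))
              rw [lintegral_one, measure_univ] at h
              simp only [one_mul] at h
              exact h.symm
            rw [hsum1, mul_one]
    set B : ℝ≥0∞ := (∫⁻ x, ENNReal.ofReal (|x| ^ p)
        ∂(gaussianReal 0 (Real.toNNReal Vr))) ^ (1/p) with hB
    have hWp : ∀ ω : Ω, Wp p (permLaw n k (fun i : Fin n => Y (i : ℕ) ω - m))
        (gaussianReal 0 (Real.toNNReal Vr)) ≤ (F ω) ^ (1/p) + B := by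
      intro ω
      have h := Wp_le_moments (permLaw n k (fun i : Fin n => Y (i : ℕ) ω - m))
        (gaussianReal 0 (Real.toNNReal Vr)) hp1
      rwa [haeq ω, ← hB] at h
    calc (∫⁻ ω, (Wp p (permLaw n k (fun i : Fin n => Y (i : ℕ) ω - m))
            (gaussianReal 0 (Real.toNNReal Vr))) ^ p ∂P) ^ (1/p)
        ≤ (∫⁻ ω, ((fun ω : Ω => (F ω) ^ (1/p)) + (fun _ : Ω => B)) ω ^ p ∂P) ^ (1/p) := by
          apply ENNReal.rpow_le_rpow _ (by positivity)
          apply lintegral_mono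
          intro ω
          exact ENNReal.rpow_le_rpow (hWp ω) hp0.le
      _ ≤ (∫⁻ ω, ((F ω) ^ (1/p)) ^ p ∂P) ^ (1/p) + (∫⁻ _, B ^ p ∂P) ^ (1/p) :=
          ENNReal.lintegral_Lp_add_le
            ((ENNReal.continuous_rpow_const.measurable).comp hFmeas).aemeasurable
            aemeasurable_const hp1
      _ = (∫⁻ ω, F ω ∂P) ^ (1/p) + (B ^ p) ^ (1/p) := by
          congr 2
          · apply lintegral_congr
            intro ω
            rw [← ENNReal.rpow_mul, one_div, inv_mul_cancel₀ hp0.ne', ENNReal.rpow_one]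
          · rw [lintegral_const, measure_univ, mul_one]
      _ ≤ ENNReal.ofReal (Real.sqrt (p - 1) * Real.sqrt Vr * (1 + Real.sqrt 2 * R / σ)) := by
          have hBp : (B ^ p) ^ (1/p) = B := by
            rw [← ENNReal.rpow_mul, mul_one_div, div_self hp0.ne', ENNReal.rpow_one]
          rw [hBp, hB]
          exact hcombine _ _ hFint hgauss
  · -- Part 2: unconditional bound
    set W : Ω → ℝ := fun ω => (∑ i ∈ Finset.range k, (Y i ω - m))
        - (k:ℝ)/(n:ℝ) * ∑ i ∈ Finset.range n, (Y i ω - m) with hWdef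
    have hWeq : ∀ ω, W ω
        = ∑ j ∈ Finset.range n, ((if j < k then (1:ℝ) else 0) - (k:ℝ)/n) * (Y j ω - m) := by
      intro ω
      have e1 : ∑ j ∈ Finset.range n, ((if j < k then (1:ℝ) else 0) - (k:ℝ)/n) * (Y j ω - m)
          = (∑ j ∈ Finset.range n, if j < k then (Y j ω - m) else 0)
            - (k:ℝ)/n * ∑ j ∈ Finset.range n, (Y j ω - m) := by
        rw [Finset.mul_sum, ← Finset.sum_sub_distrib]
        apply Finset.sum_congr rfl
        intro j _
        split_ifs <;> ring
      have hfil : Finset.filter (fun j => j < k) (Finset.range n) = Finset.range k := by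
        ext j
        simp only [Finset.mem_filter, Finset.mem_range]
        omega
      have e2 : (∑ j ∈ Finset.range n, if j < k then (Y j ω - m) else 0)
          = ∑ j ∈ Finset.range k, (Y j ω - m) := by
        rw [← Finset.sum_filter, hfil]
      rw [hWdef]
      dsimp only
      rw [e1, e2]
    have hWmeas : Measurable W := by
      rw [hWdef]
      exact ((Finset.measurable_sum _ fun i _ => (hmeas i).sub_const m).sub
        ((Finset.measurable_sum _ fun i _ => (hmeas i).sub_const m).const_mul _))
    haveI : IsProbabilityMeasure (P.map W) := Measure.isProbabilityMeasure_map hWmeas.aemeasurable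
    have hcsum2 : ∑ j ∈ Finset.range n, ((if j < k then (1:ℝ) else 0) - (k:ℝ)/n)^2 ≤ q := by
      rw [sum_sq_coeff hkn.le hn0 (fun j => j < k) (card_filter_lt hkn.le), hqdef]
    have hpart2 : ∫⁻ x, ENNReal.ofReal (|x| ^ p) ∂(P.map W) ≤ ENNReal.ofReal (A1 ^ p) := by
      rw [lintegral_map meas_orp hWmeas]
      have heq : ∀ ω, ENNReal.ofReal (|W ω| ^ p) = ENNReal.ofReal
          (|∑ j ∈ Finset.range n, ((if j < k then (1:ℝ) else 0) - (k:ℝ)/n) * (Y j ω - m)| ^ p) :=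
        fun ω => by rw [hWeq ω]
      rw [lintegral_congr heq, hA1]
      exact core_bound P Y hmeas hindep hR hIcc hYint hEY hm _ n hp0 hq hcsum2
    calc Wp p (P.map W) (gaussianReal 0 (Real.toNNReal Vr))
        ≤ (∫⁻ x, ENNReal.ofReal (|x| ^ p) ∂(P.map W)) ^ (1/p)
          + (∫⁻ x, ENNReal.ofReal (|x| ^ p) ∂(gaussianReal 0 (Real.toNNReal Vr))) ^ (1/p) :=
          Wp_le_moments _ _ hp1
      _ ≤ _ := hcombine _ _ hpart2 hgauss
end

section
/- Let Z ~ N(0,1), let k ∈ ℕ, and let p ≥ 2 be a real number. Then ‖ H_k(Z) ‖_{L^p} ≤ √(k!) · (p − 1)^{k/2}, where H_k is the k-th probabilists' Hermite polynomial. -/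
open MeasureTheory ProbabilityTheory

open Polynomial Real Filter
open scoped NNReal ENNReal

lemma derivative_hermite_succ (n : ℕ) :
    derivative (hermite (n + 1)) = ((n : ℤ[X]) + 1) * hermite n := by
  induction n with
  | zero => simp [hermite_succ, hermite_zero]
  | succ n ih =>
      rw [hermite_succ (n + 1), derivative_sub, derivative_mul, derivative_X, one_mul, ih,
        derivative_mul]
      have hd : derivative ((n : ℤ[X]) + 1) = 0 := by simp
      rw [hd, hermite_succ n]
      push_cast
      ring

lemma H_hasDerivAt (n : ℕ) (x : ℝ) :
    HasDerivAt (fun y : ℝ => (aeval y (hermite (n + 1)) : ℝ)) (((n : ℝ) + 1) * aeval x (hermite n)) x := by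
  have h := (hermite (n + 1)).hasDerivAt_aeval (𝕜 := ℝ) x
  rwa [derivative_hermite_succ, map_mul, map_add, map_one, aeval_natCast] at h

lemma pow_le_exp_sq (n : ℕ) {ε : ℝ} (hε : 0 < ε) (x : ℝ) :
    |x| ^ n ≤ (1 + n.factorial / ε ^ n) * Real.exp (ε * x ^ 2) := by
  have h1 : (1 : ℝ) ≤ Real.exp (ε * x ^ 2) := Real.one_le_exp (by positivity)
  have hfac : (0:ℝ) < n.factorial / ε ^ n := by positivity
  rcases le_total (|x|) 1 with h | h
  · have : |x| ^ n ≤ 1 := pow_le_one₀ (abs_nonneg x) h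
    nlinarith
  · have h2 : |x| ^ n ≤ (x ^ 2) ^ n := by
      calc |x| ^ n ≤ (|x| ^ 2) ^ n := by
            rw [← pow_mul]
            exact pow_le_pow_right₀ h (by omega)
        _ = (x ^ 2) ^ n := by rw [sq_abs]
    have h3 : (ε * x ^ 2) ^ n / n.factorial ≤ Real.exp (ε * x ^ 2) :=
      Real.pow_div_factorial_le_exp _ (by positivity) n
    have h4 : (x ^ 2) ^ n ≤ (n.factorial / ε ^ n) * Real.exp (ε * x ^ 2) := by
      rw [mul_pow] at h3
      have hεn : (0:ℝ) < ε ^ n := by positivity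
      have hnf : (0:ℝ) < (n.factorial : ℝ) := by positivity
      rw [div_le_iff₀ hnf] at h3
      rw [div_mul_eq_mul_div, le_div_iff₀ hεn]
      nlinarith
    nlinarith

lemma poly_growth (P : ℤ[X]) {ε : ℝ} (hε : 0 < ε) :
    ∃ C : ℝ, 0 < C ∧ ∀ x : ℝ, |(aeval x P : ℝ)| ≤ C * Real.exp (ε * x ^ 2) := by
  set Q : ℝ[X] := P.map (algebraMap ℤ ℝ) with hQ
  set N := Q.natDegree + 1 with hN
  refine ⟨(∑ i ∈ Finset.range N, |Q.coeff i| * (1 + i.factorial / ε ^ i)) + 1, ?_, fun x => ?_⟩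
  · have : 0 ≤ ∑ i ∈ Finset.range N, |Q.coeff i| * (1 + i.factorial / ε ^ i) :=
      Finset.sum_nonneg fun i _ => by positivity
    linarith
  · have hx : (aeval x P : ℝ) = ∑ i ∈ Finset.range N, Q.coeff i * x ^ i := by
      rw [aeval_def, ← eval_map, ← hQ, Polynomial.eval_eq_sum_range]
    have hexp : (0:ℝ) < Real.exp (ε * x ^ 2) := Real.exp_pos _
    calc |(aeval x P : ℝ)| ≤ ∑ i ∈ Finset.range N, |Q.coeff i * x ^ i| := by
          rw [hx]; exact Finset.abs_sum_le_sum_abs _ _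
      _ ≤ ∑ i ∈ Finset.range N, |Q.coeff i| * ((1 + i.factorial / ε ^ i) * Real.exp (ε * x ^ 2)) := by
          refine Finset.sum_le_sum fun i _ => ?_
          rw [abs_mul, abs_pow]
          exact mul_le_mul_of_nonneg_left (pow_le_exp_sq i hε x) (abs_nonneg _)
      _ = (∑ i ∈ Finset.range N, |Q.coeff i| * (1 + i.factorial / ε ^ i)) * Real.exp (ε * x ^ 2) := by
          rw [Finset.sum_mul]; exact Finset.sum_congr rfl fun i _ => by ring
      _ ≤ _ := by nlinarith

lemma rpow_growth (P : ℤ[X]) {s ε : ℝ} (hs : 0 ≤ s) (hε : 0 < ε) :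
    ∃ C : ℝ, 0 < C ∧ ∀ x : ℝ, |(aeval x P : ℝ)| ^ s ≤ C * Real.exp (ε * x ^ 2) := by
  rcases eq_or_lt_of_le hs with rfl | hs'
  · exact ⟨1, one_pos, fun x => by
      simp [Real.rpow_zero]
      positivity⟩
  · obtain ⟨C, hC, hb⟩ := poly_growth P (div_pos hε hs')
    refine ⟨C ^ s, Real.rpow_pos_of_pos hC s, fun x => ?_⟩
    have h1 : |(aeval x P : ℝ)| ^ s ≤ (C * Real.exp (ε / s * x ^ 2)) ^ s :=
      Real.rpow_le_rpow (abs_nonneg _) (hb x) hs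
    calc |(aeval x P : ℝ)| ^ s ≤ (C * Real.exp (ε / s * x ^ 2)) ^ s := h1
      _ = C ^ s * Real.exp (ε * x ^ 2) := by
          rw [Real.mul_rpow hC.le (Real.exp_nonneg _), ← Real.exp_mul]
          congr 1
          field_simp

lemma integrable_weighted {g : ℝ → ℝ} (hg : Continuous g) {C : ℝ}
    (hb : ∀ x, |g x| ≤ C * Real.exp (x ^ 2 / 4)) :
    Integrable (fun x => g x * Real.exp (-(x ^ 2) / 2)) := by
  have hbb : ∀ x : ℝ, ‖g x * Real.exp (-(x ^ 2) / 2)‖ ≤ C * Real.exp (-(1/4 : ℝ) * x ^ 2) := by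
    intro x
    rw [norm_mul, Real.norm_eq_abs, Real.norm_eq_abs, Real.abs_exp]
    calc |g x| * Real.exp (-(x ^ 2) / 2) ≤ (C * Real.exp (x ^ 2 / 4)) * Real.exp (-(x ^ 2) / 2) :=
          mul_le_mul_of_nonneg_right (hb x) (Real.exp_nonneg _)
      _ = C * Real.exp (-(1/4 : ℝ) * x ^ 2) := by
          rw [mul_assoc, ← Real.exp_add]; ring_nf
  exact Integrable.mono' ((integrable_exp_neg_mul_sq (by norm_num : (0:ℝ) < 1/4)).const_mul C)
    ((hg.mul (by continuity)).aestronglyMeasurable) (ae_of_all _ hbb)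

lemma tendsto_weighted {g : ℝ → ℝ} {C : ℝ}
    (hb : ∀ x, |g x| ≤ C * Real.exp (x ^ 2 / 4)) :
    Tendsto (fun x => g x * Real.exp (-(x ^ 2) / 2)) atTop (nhds 0) ∧
    Tendsto (fun x => g x * Real.exp (-(x ^ 2) / 2)) atBot (nhds 0) := by
  have hbb : ∀ x : ℝ, ‖g x * Real.exp (-(x ^ 2) / 2)‖ ≤ C * Real.exp (-(1/4 : ℝ) * x ^ 2) := by
    intro x
    rw [norm_mul, Real.norm_eq_abs, Real.norm_eq_abs, Real.abs_exp]
    calc |g x| * Real.exp (-(x ^ 2) / 2) ≤ (C * Real.exp (x ^ 2 / 4)) * Real.exp (-(x ^ 2) / 2) :=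
          mul_le_mul_of_nonneg_right (hb x) (Real.exp_nonneg _)
      _ = C * Real.exp (-(1/4 : ℝ) * x ^ 2) := by
          rw [mul_assoc, ← Real.exp_add]; ring_nf
  have hsq_top : Tendsto (fun x : ℝ => x ^ 2) atTop atTop := tendsto_pow_atTop (n := 2) (by norm_num)
  have hsq_bot : Tendsto (fun x : ℝ => x ^ 2) atBot atTop := by
    have habs : Tendsto (fun x : ℝ => |x|) atBot atTop := tendsto_abs_atBot_atTop
    have h : Tendsto (fun x : ℝ => |x| ^ 2) atBot atTop :=
      (tendsto_pow_atTop (n := 2) (by norm_num)).comp habs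
    simpa [sq_abs] using h
  have key : ∀ l : Filter ℝ, Tendsto (fun x : ℝ => x ^ 2) l atTop →
      Tendsto (fun x => g x * Real.exp (-(x ^ 2) / 2)) l (nhds 0) := by
    intro l hl
    apply squeeze_zero_norm hbb
    have h1 : Tendsto (fun x : ℝ => -(1/4 : ℝ) * x ^ 2) l atBot := by
      apply Tendsto.const_mul_atTop_of_neg (by norm_num : (-(1/4 : ℝ)) < 0) hl
    have h2 : Tendsto (fun x : ℝ => Real.exp (-(1/4 : ℝ) * x ^ 2)) l (nhds 0) :=
      Real.tendsto_exp_atBot.comp h1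
    simpa using h2.const_mul C
  exact ⟨key _ hsq_top, key _ hsq_bot⟩

lemma integral_deriv_zero (G G' : ℝ → ℝ) (hd : ∀ x, HasDerivAt G (G' x) x)
    (hi : Integrable G') (htop : Tendsto G atTop (nhds 0)) (hbot : Tendsto G atBot (nhds 0)) :
    ∫ x, G' x = 0 := by
  have h1 : ∫ x in Set.Ioi (0:ℝ), G' x = 0 - G 0 :=
    integral_Ioi_of_hasDerivAt_of_tendsto' (fun x _ => hd x) hi.integrableOn htop
  have h2 : ∫ x in Set.Iic (0:ℝ), G' x = G 0 - 0 :=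
    integral_Iic_of_hasDerivAt_of_tendsto' (fun x _ => hd x) hi.integrableOn hbot
  rw [← intervalIntegral.integral_Iic_add_Ioi (b := (0:ℝ)) hi.integrableOn hi.integrableOn, h1, h2]
  ring

lemma phi_hasDerivAt {q : ℝ} (hq : 0 ≤ q) (t : ℝ) :
    HasDerivAt (fun t : ℝ => t * |t| ^ q) ((q + 1) * |t| ^ q) t := by
  rcases eq_or_lt_of_le hq with rfl | hq'
  · simpa [Real.rpow_zero] using hasDerivAt_id' t
  rcases lt_trichotomy t 0 with ht | rfl | ht
  · -- t < 0 : near t, function is fun y => y * (-y) ^ q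
    have hne : (-t) ≠ 0 := by linarith
    have h1 : HasDerivAt (fun y : ℝ => -y) (-1) t := (hasDerivAt_id t).neg
    have h2 : HasDerivAt (fun z : ℝ => z ^ q) (q * (-t) ^ (q - 1)) (-t) :=
      Real.hasDerivAt_rpow_const (Or.inl hne)
    have h3 : HasDerivAt (fun y : ℝ => (-y) ^ q) (q * (-t) ^ (q - 1) * (-1)) t := h2.comp t h1
    have h4 : HasDerivAt (fun y : ℝ => y * (-y) ^ q)
        (1 * (-t) ^ q + t * (q * (-t) ^ (q - 1) * (-1))) t := by
      exact (hasDerivAt_id' t).mul h3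
    have heq : (fun y : ℝ => y * |y| ^ q) =ᶠ[nhds t] (fun y : ℝ => y * (-y) ^ q) := by
      filter_upwards [IsOpen.mem_nhds isOpen_Iio ht] with y hy
      rw [abs_of_neg hy]
    have hval : 1 * (-t) ^ q + t * (q * (-t) ^ (q - 1) * (-1)) = (q + 1) * |t| ^ q := by
      have hpos : 0 < -t := by linarith
      have : (-t) ^ q = (-t) ^ (q - 1) * (-t) := by
        rw [← Real.rpow_add_one hne]; ring_nf
      rw [abs_of_neg ht, this]
      ring
    exact (h4.congr_of_eventuallyEq heq).congr_deriv hval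
  · -- t = 0
    have hval : |(0:ℝ)| ^ q = 0 := by
      rw [abs_zero, Real.zero_rpow hq'.ne']
    rw [hasDerivAt_iff_tendsto_slope]
    have hcont : ContinuousAt (fun h : ℝ => |h| ^ q) 0 :=
      (continuous_abs.continuousAt).rpow_const (Or.inr hq)
    have h0 : Tendsto (fun h : ℝ => |h| ^ q) (nhdsWithin 0 {(0:ℝ)}ᶜ) (nhds ((q + 1) * |(0:ℝ)| ^ q)) := by
      rw [hval, mul_zero]
      have := hcont.tendsto
      rw [hval] at this
      exact this.mono_left nhdsWithin_le_nhds
    refine h0.congr' ?_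
    filter_upwards [self_mem_nhdsWithin] with h (hh : h ≠ 0)
    simp only [slope_def_field]
    field_simp
    simp
  · -- t > 0
    have hne : t ≠ 0 := ne_of_gt ht
    have h2 : HasDerivAt (fun z : ℝ => z ^ (q + 1)) ((q + 1) * t ^ (q + 1 - 1)) t :=
      Real.hasDerivAt_rpow_const (Or.inl hne)
    have heq : (fun y : ℝ => y * |y| ^ q) =ᶠ[nhds t] (fun y : ℝ => y ^ (q + 1)) := by
      filter_upwards [IsOpen.mem_nhds isOpen_Ioi ht] with y (hy : 0 < y)
      rw [abs_of_pos hy, Real.rpow_add_one (ne_of_gt hy)]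
      ring
    have hval : (q + 1) * t ^ (q + 1 - 1) = (q + 1) * |t| ^ q := by
      rw [abs_of_pos ht]; ring_nf
    exact (h2.congr_of_eventuallyEq heq).congr_deriv hval

lemma abs_mul_abs_rpow {q : ℝ} (hq : 0 ≤ q) (t : ℝ) : |t * |t| ^ q| = |t| ^ (q + 1) := by
  rcases eq_or_ne t 0 with rfl | ht
  · simp [Real.zero_rpow (by linarith : q + 1 ≠ 0)]
  · rw [abs_mul, abs_of_nonneg (Real.rpow_nonneg (abs_nonneg t) q),
      Real.rpow_add_one (abs_ne_zero.mpr ht)]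
    ring

lemma mul_self_rpow {q : ℝ} (hq : 0 ≤ q) (t : ℝ) : t * (t * |t| ^ q) = |t| ^ (q + 2) := by
  rcases eq_or_ne t 0 with rfl | ht
  · simp [Real.zero_rpow (by linarith : q + 2 ≠ 0)]
  · have h : |t| ^ (q + 2) = |t| ^ q * |t| ^ (2:ℝ) := by
      rw [← Real.rpow_add (abs_pos.mpr ht)]
    rw [h]
    have : |t| ^ (2:ℝ) = t ^ 2 := by
      rw [show (2:ℝ) = ((2:ℕ):ℝ) by norm_num, Real.rpow_natCast, sq_abs]
    rw [this]; ring

lemma sq_eq_rpow (t : ℝ) : t ^ 2 = |t| ^ (2:ℝ) := by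
  rw [show (2:ℝ) = ((2:ℕ):ℝ) by norm_num, Real.rpow_natCast, sq_abs]
lemma sq_rpow_half {p : ℝ} (t : ℝ) : (t ^ 2 : ℝ) ^ (p/2) = |t| ^ p := by
  rw [sq_eq_rpow, ← Real.rpow_mul (abs_nonneg _), show (2:ℝ) * (p/2) = p by ring]
lemma abs_rpow_factor {p : ℝ} (hp : p ≠ 2) (t : ℝ) : (|t| ^ (p-2)) ^ (p/(p-2)) = |t| ^ p := by
  rw [← Real.rpow_mul (abs_nonneg _)]
  congr 1
  field_simp
lemma abs_abs_rpow (t : ℝ) (s : ℝ) : |(|t| ^ s)| = |t| ^ s :=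
  abs_of_nonneg (Real.rpow_nonneg (abs_nonneg _) _)

lemma gaussian_pdf_eq (x : ℝ) :
    gaussianPDFReal 0 1 x = (Real.sqrt (2 * Real.pi))⁻¹ * Real.exp (-(x ^ 2) / 2) := by
  simp [gaussianPDFReal]

lemma gaussianReal_eq_withDensity :
    gaussianReal 0 1 = MeasureTheory.volume.withDensity
      (fun x => ((Real.toNNReal (gaussianPDFReal 0 1 x) : ℝ≥0) : ℝ≥0∞)) := by
  rw [gaussianReal_of_var_ne_zero _ one_ne_zero]
  rfl

lemma integral_gaussian_eq (f : ℝ → ℝ) :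
    ∫ x, f x ∂(gaussianReal 0 1)
      = (Real.sqrt (2 * Real.pi))⁻¹ * ∫ x, f x * Real.exp (-(x ^ 2) / 2) := by
  rw [gaussianReal_eq_withDensity,
    integral_withDensity_eq_integral_smul ((measurable_gaussianPDFReal 0 1).real_toNNReal) f]
  rw [← integral_const_mul]
  congr 1
  ext x
  rw [NNReal.smul_def, Real.coe_toNNReal _ (gaussianPDFReal_nonneg 0 1 x), gaussian_pdf_eq]
  simp only [smul_eq_mul]
  ring

lemma integrable_gaussian_of_growth {f : ℝ → ℝ} (hf : Continuous f) {C : ℝ}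
    (hb : ∀ x, |f x| ≤ C * Real.exp (x ^ 2 / 4)) :
    Integrable f (gaussianReal 0 1) := by
  have hw : Integrable (fun x => f x * Real.exp (-(x ^ 2) / 2)) := by
    have hbb : ∀ x : ℝ, ‖f x * Real.exp (-(x ^ 2) / 2)‖ ≤ C * Real.exp (-(1/4 : ℝ) * x ^ 2) := by
      intro x
      rw [norm_mul, Real.norm_eq_abs, Real.norm_eq_abs, Real.abs_exp]
      calc |f x| * Real.exp (-(x ^ 2) / 2) ≤ (C * Real.exp (x ^ 2 / 4)) * Real.exp (-(x ^ 2) / 2) :=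
            mul_le_mul_of_nonneg_right (hb x) (Real.exp_nonneg _)
        _ = C * Real.exp (-(1/4 : ℝ) * x ^ 2) := by
            rw [mul_assoc, ← Real.exp_add]; ring_nf
    exact Integrable.mono' ((integrable_exp_neg_mul_sq (by norm_num : (0:ℝ) < 1/4)).const_mul C)
      ((hf.mul (by continuity)).aestronglyMeasurable) (ae_of_all _ hbb)
  rw [gaussianReal_eq_withDensity, integrable_withDensity_iff
    ((measurable_gaussianPDFReal 0 1).real_toNNReal.coe_nnreal_ennreal)
    (ae_of_all _ fun x => ENNReal.coe_lt_top)]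
  have : (fun x => f x * (((Real.toNNReal (gaussianPDFReal 0 1 x) : ℝ≥0) : ℝ≥0∞)).toReal)
      = fun x => (Real.sqrt (2 * Real.pi))⁻¹ * (f x * Real.exp (-(x ^ 2) / 2)) := by
    ext x
    rw [ENNReal.coe_toReal, Real.coe_toNNReal _ (gaussianPDFReal_nonneg 0 1 x), gaussian_pdf_eq]
    ring
  rw [this]
  exact hw.const_mul _

lemma key_identity {p : ℝ} (hp : 2 ≤ p) (n : ℕ) :
    ∫ x, |(aeval x (hermite (n + 1)) : ℝ)| ^ p ∂(gaussianReal 0 1)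
      = ((n : ℝ) + 1) * (p - 1) *
        ∫ x, (aeval x (hermite n) : ℝ) ^ 2 * |(aeval x (hermite (n + 1)) : ℝ)| ^ (p - 2)
          ∂(gaussianReal 0 1) := by
  have hp0 : (0:ℝ) < p := by linarith
  set q : ℝ := p - 2 with hqdef
  have hq : 0 ≤ q := by simp [hqdef]; linarith
  set F : ℝ → ℝ := fun x => (aeval x (hermite n) : ℝ) with hF
  set G : ℝ → ℝ := fun x => (aeval x (hermite (n + 1)) : ℝ) with hG
  set w : ℝ → ℝ := fun x => Real.exp (-(x ^ 2) / 2) with hwdef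
  set K : ℝ := ((n : ℝ) + 1) * (p - 1) with hK
  set A : ℝ → ℝ := fun x => |G x| ^ p with hA
  set B : ℝ → ℝ := fun x => (F x) ^ 2 * |G x| ^ q with hB
  -- continuity
  have hFc : Continuous F := by
    simpa [hF] using Polynomial.continuous_aeval (R := ℤ) (A := ℝ) (hermite n)
  have hGc : Continuous G := by
    simpa [hG] using Polynomial.continuous_aeval (R := ℤ) (A := ℝ) (hermite (n + 1))
  have hAc : Continuous A := (hGc.abs).rpow_const (fun x => Or.inr hp0.le)
  have hBc : Continuous B := ((hFc.pow 2).mul ((hGc.abs).rpow_const (fun x => Or.inr hq)))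
  -- growth bounds
  obtain ⟨C1, hC1, hb1⟩ := rpow_growth (hermite (n + 1)) (s := p) (ε := 1/4) hp0.le (by norm_num)
  have hbA : ∀ x : ℝ, |A x| ≤ C1 * Real.exp (x ^ 2 / 4) := by
    intro x
    have h := hb1 x
    rw [show (1/4:ℝ) * x ^ 2 = x ^ 2 / 4 by ring] at h
    calc |A x| = |G x| ^ p := by
          rw [hA, abs_of_nonneg (Real.rpow_nonneg (abs_nonneg _) _)]
      _ ≤ _ := h
  obtain ⟨C2, hC2, hb2⟩ := rpow_growth (hermite n) (s := 2) (ε := 1/8) (by norm_num) (by norm_num)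
  obtain ⟨C3, hC3, hb3⟩ := rpow_growth (hermite (n + 1)) (s := q) (ε := 1/8) hq (by norm_num)
  have hbB : ∀ x : ℝ, |B x| ≤ C2 * C3 * Real.exp (x ^ 2 / 4) := by
    intro x
    have h1 : |F x| ^ (2:ℝ) ≤ C2 * Real.exp (1/8 * x ^ 2) := hb2 x
    have h2 : |G x| ^ q ≤ C3 * Real.exp (1/8 * x ^ 2) := hb3 x
    have hBx : |B x| = |F x| ^ (2:ℝ) * |G x| ^ q := by
      rw [hB, abs_mul, abs_of_nonneg (Real.rpow_nonneg (abs_nonneg _) _), abs_pow, sq_abs,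
        sq_eq_rpow (F x)]
    rw [hBx]
    calc |F x| ^ (2:ℝ) * |G x| ^ q
        ≤ (C2 * Real.exp (1/8 * x ^ 2)) * (C3 * Real.exp (1/8 * x ^ 2)) := by
          apply mul_le_mul h1 h2 (Real.rpow_nonneg (abs_nonneg _) _) (by positivity)
      _ = C2 * C3 * Real.exp (x ^ 2 / 4) := by
          have harg : (1/8:ℝ) * x ^ 2 + 1/8 * x ^ 2 = x ^ 2 / 4 := by ring
          rw [mul_mul_mul_comm, ← Real.exp_add, harg]
  obtain ⟨C4, hC4, hb4⟩ := rpow_growth (hermite n) (s := 1) (ε := 1/8) (by norm_num) (by norm_num)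
  obtain ⟨C5, hC5, hb5⟩ := rpow_growth (hermite (n + 1)) (s := q + 1) (ε := 1/8)
    (by linarith) (by norm_num)
  set g0 : ℝ → ℝ := fun x => F x * (G x * |G x| ^ q) with hg0
  have hbg0 : ∀ x : ℝ, |g0 x| ≤ C4 * C5 * Real.exp (x ^ 2 / 4) := by
    intro x
    have h4 : |F x| ≤ C4 * Real.exp (1/8 * x ^ 2) := by
      have := hb4 x; rwa [Real.rpow_one] at this
    have h5 : |G x| ^ (q + 1) ≤ C5 * Real.exp (1/8 * x ^ 2) := hb5 x
    have : |g0 x| = |F x| * |G x| ^ (q + 1) := by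
      rw [hg0, abs_mul, abs_mul_abs_rpow hq]
    rw [this]
    calc |F x| * |G x| ^ (q + 1)
        ≤ (C4 * Real.exp (1/8 * x ^ 2)) * (C5 * Real.exp (1/8 * x ^ 2)) :=
          mul_le_mul h4 h5 (Real.rpow_nonneg (abs_nonneg _) _) (by positivity)
      _ = C4 * C5 * Real.exp (x ^ 2 / 4) := by
          have harg : (1/8:ℝ) * x ^ 2 + 1/8 * x ^ 2 = x ^ 2 / 4 := by ring
          rw [mul_mul_mul_comm, ← Real.exp_add, harg]
  -- derivative of the weight
  have hw : ∀ x : ℝ, HasDerivAt w (-x * w x) x := by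
    intro x
    have h1 : HasDerivAt (fun x : ℝ => -(x ^ 2) / 2) (-x) x := by
      have h0 := ((hasDerivAt_pow 2 x).neg.div_const 2)
      refine h0.congr_deriv ?_
      simp
      ring
    have h2 := h1.exp
    simpa [hwdef, mul_comm] using h2
  -- derivative of the boundary function
  have hderiv : ∀ x : ℝ, HasDerivAt (fun y => g0 y * w y) ((K * B x - A x) * w x) x := by
    intro x
    have hF' : HasDerivAt F (aeval x (derivative (hermite n))) x :=
      (hermite n).hasDerivAt_aeval (𝕜 := ℝ) x
    have hG' : HasDerivAt G (((n : ℝ) + 1) * F x) x := H_hasDerivAt n x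
    have hphi := phi_hasDerivAt hq (G x)
    have hcomp : HasDerivAt (fun y => G y * |G y| ^ q)
        ((q + 1) * |G x| ^ q * (((n : ℝ) + 1) * F x)) x := hphi.comp x hG'
    have hprod := (hF'.mul hcomp).mul (hw x)
    refine hprod.congr_deriv ?_
    symm
    simp only [Pi.mul_apply]
    have e1 : (aeval x (derivative (hermite n)) : ℝ) = x * F x - G x := by
      have hsucc : G x = x * F x - aeval x (derivative (hermite n)) := by
        show (aeval x (hermite (n+1)) : ℝ)
            = x * aeval x (hermite n) - aeval x (derivative (hermite n))
        rw [hermite_succ]; simp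
      linarith
    have e2 : G x * (G x * |G x| ^ q) = |G x| ^ p := by
      rw [mul_self_rpow hq, show q + 2 = p by rw [hqdef]; ring]
    simp only [hA, hB, hK]
    rw [e1, ← e2]
    have hq1 : q + 1 = p - 1 := by rw [hqdef]; ring
    rw [← hq1]
    ring
  -- integrability
  have hA_int : Integrable (fun x => A x * w x) := integrable_weighted hAc hbA
  have hB_int : Integrable (fun x => B x * w x) := integrable_weighted hBc hbB
  have hD_int : Integrable (fun x => (K * B x - A x) * w x) := by
    have heq : (fun x => (K * B x - A x) * w x) = fun x => K * (B x * w x) - A x * w x := by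
      ext x; ring
    rw [heq]
    exact (hB_int.const_mul K).sub hA_int
  have htb := tendsto_weighted hbg0
  have hzero : ∫ x, (K * B x - A x) * w x = 0 :=
    integral_deriv_zero (fun x => g0 x * w x) _ hderiv hD_int htb.1 htb.2
  have hsplit : K * (∫ x, B x * w x) - ∫ x, A x * w x = 0 := by
    rw [← integral_const_mul, ← integral_sub (hB_int.const_mul K) hA_int]
    rw [← hzero]
    congr 1
    ext x
    ring
  -- transfer to the gaussian measure
  have hAg : ∫ x, A x ∂(gaussianReal 0 1)
      = (Real.sqrt (2 * Real.pi))⁻¹ * ∫ x, A x * w x := integral_gaussian_eq A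
  have hBg : ∫ x, B x ∂(gaussianReal 0 1)
      = (Real.sqrt (2 * Real.pi))⁻¹ * ∫ x, B x * w x := integral_gaussian_eq B
  show ∫ x, A x ∂(gaussianReal 0 1) = K * ∫ x, B x ∂(gaussianReal 0 1)
  rw [hAg, hBg]
  have hIA : (∫ x, A x * w x) = K * ∫ x, B x * w x := by linarith
  rw [hIA]
  ring

lemma integrable_abs_rpow_herm (k : ℕ) {s : ℝ} (hs : 0 ≤ s) :
    Integrable (fun x => |(aeval x (hermite k) : ℝ)| ^ s) (gaussianReal 0 1) := by
  obtain ⟨C, hC, hb⟩ := rpow_growth (hermite k) (s := s) (ε := 1/4) hs (by norm_num)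
  have hcont : Continuous fun x => |(aeval x (hermite k) : ℝ)| ^ s :=
    ((Polynomial.continuous_aeval _).abs).rpow_const (fun x => Or.inr hs)
  refine integrable_gaussian_of_growth hcont (C := C) fun x => ?_
  have h := hb x
  rw [show (1/4:ℝ) * x ^ 2 = x ^ 2 / 4 by ring] at h
  rwa [abs_abs_rpow]

lemma lint_eq {f : ℝ → ℝ} {a : ℝ} (ha : 0 ≤ a) {μ : Measure ℝ}
    (hi : Integrable (fun x => |f x| ^ a) μ) :
    ∫⁻ x, (‖f x‖₊ : ℝ≥0∞) ^ a ∂μ = ENNReal.ofReal (∫ x, |f x| ^ a ∂μ) := by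
  rw [MeasureTheory.ofReal_integral_eq_lintegral_ofReal hi
    (ae_of_all _ fun x => Real.rpow_nonneg (abs_nonneg _) _)]
  apply lintegral_congr
  intro x
  rw [show (‖f x‖₊ : ℝ≥0∞) = ‖f x‖ₑ from rfl, ← ofReal_norm, Real.norm_eq_abs,
    ← ENNReal.ofReal_rpow_of_nonneg (abs_nonneg _) ha]

lemma memLp_helper {f : ℝ → ℝ} {a : ℝ} (ha : 0 < a) (hc : Continuous f) {μ : Measure ℝ}
    (hi : Integrable (fun x => |f x| ^ a) μ) : MemLp f (ENNReal.ofReal a) μ := by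
  refine ⟨hc.aestronglyMeasurable, ?_⟩
  have h0 : ENNReal.ofReal a ≠ 0 := by simp [ENNReal.ofReal_eq_zero, not_le, ha]
  rw [eLpNorm_eq_lintegral_rpow_enorm_toReal h0 ENNReal.ofReal_ne_top,
    ENNReal.toReal_ofReal ha.le]
  apply ENNReal.rpow_lt_top_of_nonneg (by positivity)
  erw [lint_eq ha.le hi]
  exact ENNReal.ofReal_ne_top

lemma moment_bound {p : ℝ} (hp : 2 ≤ p) (k : ℕ) :
    ∫ x, |(aeval x (hermite k) : ℝ)| ^ p ∂(gaussianReal 0 1)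
      ≤ (k.factorial : ℝ) ^ (p/2) * (p - 1) ^ ((k : ℝ) * p / 2) := by
  have hp0 : (0:ℝ) < p := by linarith
  have hp1 : (0:ℝ) < p - 1 := by linarith
  induction k with
  | zero =>
      have : (fun x : ℝ => |(aeval x (hermite 0) : ℝ)| ^ p) = fun _ => 1 := by
        ext x
        rw [hermite_zero]
        simp [Real.one_rpow]
      rw [this]
      simp [Real.one_rpow]
  | succ n ih =>
      push_cast
      set μ := gaussianReal 0 1
      set Mn := ∫ x, |(aeval x (hermite n) : ℝ)| ^ p ∂μ with hMn
      set Ms := ∫ x, |(aeval x (hermite (n + 1)) : ℝ)| ^ p ∂μ with hMs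
      have hMn0 : 0 ≤ Mn := integral_nonneg fun x => Real.rpow_nonneg (abs_nonneg _) _
      have hMs0 : 0 ≤ Ms := integral_nonneg fun x => Real.rpow_nonneg (abs_nonneg _) _
      set K : ℝ := ((n : ℝ) + 1) * (p - 1) with hK
      have hK0 : 0 < K := by positivity
      have hint_n : Integrable (fun x => |(aeval x (hermite n) : ℝ)| ^ p) μ :=
        integrable_abs_rpow_herm n hp0.le
      have hint_s : Integrable (fun x => |(aeval x (hermite (n + 1)) : ℝ)| ^ p) μ :=
        integrable_abs_rpow_herm (n + 1) hp0.le
      set J := ∫ x, (aeval x (hermite n) : ℝ) ^ 2 *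
          |(aeval x (hermite (n + 1)) : ℝ)| ^ (p - 2) ∂μ with hJ
      have hiden : Ms = K * J := key_identity hp n
      have hholder : J ≤ Mn ^ (2/p) * Ms ^ ((p - 2)/p) := by
        rcases eq_or_lt_of_le hp with hp2 | hplt
        · -- p = 2
          have h22 : J = Mn := by
            rw [hJ, hMn]
            have hfun : (fun x : ℝ => (aeval x (hermite n) : ℝ) ^ 2 *
                |(aeval x (hermite (n + 1)) : ℝ)| ^ (p - 2))
                = fun x : ℝ => |(aeval x (hermite n) : ℝ)| ^ p := by
              ext x
              rw [← hp2, show (2:ℝ) - 2 = 0 by norm_num, Real.rpow_zero, mul_one, sq_eq_rpow]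
            rw [hfun]
          rw [h22, ← hp2, show (2:ℝ)/2 = 1 by norm_num,
            show ((2:ℝ) - 2)/2 = 0 by norm_num, Real.rpow_one, Real.rpow_zero, mul_one]
        · -- 2 < p
          have hpne : p ≠ 2 := ne_of_gt hplt
          have hconj : (p/2).HolderConjugate (p/(p-2)) := by
            constructor
            · rw [inv_div, inv_div, ← add_div, show 2 + (p - 2) = p by ring,
                div_self hp0.ne', inv_one]
            · linarith
            · exact div_pos hp0 (by linarith)
          have hmem1 : MemLp (fun x => (aeval x (hermite n) : ℝ) ^ 2) (ENNReal.ofReal (p/2)) μ := by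
            apply memLp_helper (by linarith) ((Polynomial.continuous_aeval _).pow 2)
            have heq : (fun x => |(aeval x (hermite n) : ℝ) ^ 2| ^ (p/2))
                = fun x => |(aeval x (hermite n) : ℝ)| ^ p := by
              ext x
              rw [abs_pow, sq_abs, sq_rpow_half]
            simp only [Pi.pow_apply]
            rw [heq]
            exact hint_n
          have hmem2 : MemLp (fun x => |(aeval x (hermite (n + 1)) : ℝ)| ^ (p - 2))
              (ENNReal.ofReal (p/(p-2))) μ := by
            apply memLp_helper (div_pos hp0 (by linarith))
              (((Polynomial.continuous_aeval _).abs).rpow_const (fun x => Or.inr (by linarith)))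
            have heq : (fun x => |(|(aeval x (hermite (n + 1)) : ℝ)| ^ (p - 2))| ^ (p/(p-2)))
                = fun x => |(aeval x (hermite (n + 1)) : ℝ)| ^ p := by
              ext x
              rw [abs_abs_rpow, abs_rpow_factor hpne]
            rw [heq]
            exact hint_s
          have hfg := integral_mul_le_Lp_mul_Lq_of_nonneg (μ := μ) hconj
            (ae_of_all _ fun x => sq_nonneg ((aeval x (hermite n) : ℝ)))
            (ae_of_all _ fun x => Real.rpow_nonneg (abs_nonneg _) _)
            hmem1 hmem2
          have hfg' : (∫ x, (aeval x (hermite n) : ℝ) ^ 2 *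
              |(aeval x (hermite (n + 1)) : ℝ)| ^ (p - 2) ∂μ)
              ≤ (∫ x, ((aeval x (hermite n) : ℝ) ^ 2) ^ (p/2) ∂μ) ^ (1/(p/2)) *
                (∫ x, (|(aeval x (hermite (n + 1)) : ℝ)| ^ (p - 2)) ^ (p/(p-2)) ∂μ)
                  ^ (1/(p/(p-2))) := hfg
          have heq1 : (∫ x, ((aeval x (hermite n) : ℝ) ^ 2) ^ (p/2) ∂μ) = Mn := by
            rw [hMn]
            have hfun : (fun x : ℝ => ((aeval x (hermite n) : ℝ) ^ 2) ^ (p/2))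
                = fun x : ℝ => |(aeval x (hermite n) : ℝ)| ^ p := by
              ext x; rw [sq_rpow_half]
            rw [hfun]
          have heq2 : (∫ x, (|(aeval x (hermite (n + 1)) : ℝ)| ^ (p - 2)) ^ (p/(p-2)) ∂μ)
              = Ms := by
            rw [hMs]
            have hfun : (fun x : ℝ => (|(aeval x (hermite (n + 1)) : ℝ)| ^ (p - 2)) ^ (p/(p-2)))
                = fun x : ℝ => |(aeval x (hermite (n + 1)) : ℝ)| ^ p := by
              ext x; rw [abs_rpow_factor hpne]
            rw [hfun]
          rw [heq1, heq2, one_div_div, one_div_div] at hfg'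
          exact hfg'
      have hstep : Ms ≤ K ^ (p/2) * Mn := by
        rcases eq_or_lt_of_le hMs0 with h0 | hMs0'
        · rw [← h0]; positivity
        · have h1 : Ms ≤ K * (Mn ^ (2/p) * Ms ^ ((p-2)/p)) := by
            calc Ms = K * J := hiden
              _ ≤ K * (Mn ^ (2/p) * Ms ^ ((p-2)/p)) :=
                  mul_le_mul_of_nonneg_left hholder hK0.le
          have hMsplit : Ms = Ms ^ (2/p) * Ms ^ ((p-2)/p) := by
            rw [← Real.rpow_add hMs0', show 2/p + (p-2)/p = 1 by field_simp; ring, Real.rpow_one]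
          have h2 : Ms ^ (2/p) * Ms ^ ((p-2)/p) ≤ (K * Mn ^ (2/p)) * Ms ^ ((p-2)/p) := by
            calc Ms ^ (2/p) * Ms ^ ((p-2)/p) = Ms := hMsplit.symm
              _ ≤ K * (Mn ^ (2/p) * Ms ^ ((p-2)/p)) := h1
              _ = (K * Mn ^ (2/p)) * Ms ^ ((p-2)/p) := by ring
          have hpos : 0 < Ms ^ ((p-2)/p) := Real.rpow_pos_of_pos hMs0' _
          have h3 : Ms ^ (2/p) ≤ K * Mn ^ (2/p) := le_of_mul_le_mul_right h2 hpos
          have h4 : (Ms ^ (2/p)) ^ (p/2) ≤ (K * Mn ^ (2/p)) ^ (p/2) :=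
            Real.rpow_le_rpow (Real.rpow_nonneg hMs0 _) h3 (by positivity)
          calc Ms = (Ms ^ (2/p)) ^ (p/2) := by
                rw [← Real.rpow_mul hMs0, show 2/p * (p/2) = 1 by field_simp, Real.rpow_one]
            _ ≤ (K * Mn ^ (2/p)) ^ (p/2) := h4
            _ = K ^ (p/2) * Mn := by
                rw [Real.mul_rpow hK0.le (Real.rpow_nonneg hMn0 _),
                  ← Real.rpow_mul hMn0, show 2/p * (p/2) = 1 by field_simp, Real.rpow_one]
      calc Ms ≤ K ^ (p/2) * Mn := hstep
        _ ≤ K ^ (p/2) * ((n.factorial : ℝ) ^ (p/2) * (p - 1) ^ ((n : ℝ) * p / 2)) :=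
            mul_le_mul_of_nonneg_left ih (by positivity)
        _ = ((n + 1).factorial : ℝ) ^ (p/2) * (p - 1) ^ (((n : ℝ) + 1) * p / 2) := by
            rw [hK, Real.mul_rpow (by positivity) hp1.le,
              Nat.factorial_succ, Nat.cast_mul,
              Real.mul_rpow (by positivity) (by positivity),
              show ((n:ℝ) + 1) * p / 2 = p/2 + (n : ℝ) * p / 2 by ring,
              Real.rpow_add hp1]
            push_cast
            ring

/-- For `Z ~ N(0,1)` and the `k`-th probabilists' Hermite polynomial `H_k`,
`‖H_k(Z)‖_{L^p} ≤ √(k!) · (p−1)^{k/2}` for every real `p ≥ 2`. -/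
theorem hermite_Lp_norm_bound (k : ℕ) (p : ℝ) (hp : 2 ≤ p) :
    eLpNorm (fun x : ℝ => (Polynomial.aeval x (Polynomial.hermite k) : ℝ))
        (ENNReal.ofReal p) (gaussianReal 0 1)
      ≤ ENNReal.ofReal (Real.sqrt (Nat.factorial k) * (p - 1) ^ ((k : ℝ) / 2)) := by
  have hp0 : (0:ℝ) < p := by linarith
  have hp1 : (0:ℝ) < p - 1 := by linarith
  set μ := gaussianReal 0 1 with hμ
  set R : ℝ := Real.sqrt (Nat.factorial k) * (p - 1) ^ ((k : ℝ) / 2) with hR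
  have hR0 : 0 ≤ R := by positivity
  have hint : Integrable (fun x => |(aeval x (hermite k) : ℝ)| ^ p) μ :=
    integrable_abs_rpow_herm k hp0.le
  have h0 : ENNReal.ofReal p ≠ 0 := by simp [ENNReal.ofReal_eq_zero, not_le, hp0]
  rw [eLpNorm_eq_lintegral_rpow_enorm_toReal h0 ENNReal.ofReal_ne_top, ENNReal.toReal_ofReal hp0.le]
  erw [lint_eq hp0.le hint]
  have hM := moment_bound hp k
  have hRp : (k.factorial : ℝ) ^ (p/2) * (p - 1) ^ ((k : ℝ) * p / 2) = R ^ p := by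
    rw [hR, Real.mul_rpow (Real.sqrt_nonneg _) (Real.rpow_nonneg hp1.le _),
      Real.sqrt_eq_rpow, ← Real.rpow_mul (Nat.cast_nonneg _), ← Real.rpow_mul hp1.le,
      show 1/2 * p = p/2 by ring, show (k:ℝ)/2 * p = (k:ℝ) * p / 2 by ring]
  calc (ENNReal.ofReal (∫ x, |(aeval x (hermite k) : ℝ)| ^ p ∂μ)) ^ (1/p)
      ≤ (ENNReal.ofReal (R ^ p)) ^ (1/p) := by
        apply ENNReal.rpow_le_rpow _ (by positivity)
        apply ENNReal.ofReal_le_ofReal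
        rw [← hRp]
        exact hM
    _ = ENNReal.ofReal R := by
        rw [← ENNReal.ofReal_rpow_of_nonneg hR0 hp0.le,
          ← ENNReal.rpow_mul, show p * (1/p) = 1 by field_simp, ENNReal.rpow_one]
end
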